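/- arXiv:2507.07525 — 6 statements merged into one kernel-verified Lean document; each statement's English description precedes it below -/
import Mathlib

section
/- Fix constants c > 0 and λ > 0 and a point x ∈ ℝ. Define Q(x,t) = e^{-λ t} / (π·√(c²t² − x²)) + (λ·e^{-λ t}/(2c))·L₀((λ/c)·√(c²t² − x²)) for t > |x|/c. Then Q(x,t) = (1/(2c))·√(λ/(2π t)) + O(t^{-1}) as t → ∞; that is, there exist constants C > 0 and T > |x|/c such that for all t ≥ T, |Q(x,t) − (1/(2c))·√(λ/(2π t))| ≤ C·t^{-1}. -/
set_option maxHeartbeats 1000000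

open Real Filter Topology

/-- Modified Bessel function of the first kind of nonnegative integer order `n`,
defined by its everywhere-convergent power series. -/
noncomputable def besselI (n : ℕ) (z : ℝ) : ℝ :=
  ∑' k : ℕ, (1 / (Nat.factorial k * Nat.factorial (k + n) : ℝ)) * (z / 2) ^ (2 * k + n)

/-- Modified Struve function of order zero, defined by its power series. -/
noncomputable def struveL0 (z : ℝ) : ℝ :=
  ∑' k : ℕ, (1 / (Real.Gamma ((k : ℝ) + 3 / 2)) ^ 2) * (z / 2) ^ (2 * k + 1)

open MeasureTheory Set


lemma fact_odd_succ (k : ℕ) : Nat.factorial (2*(k+1)+1) = (2*k+3) * ((2*k+2) * Nat.factorial (2*k+1)) := by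
  have h : 2*(k+1)+1 = (2*k+2)+1 := by ring
  rw [h, Nat.factorial_succ, Nat.factorial_succ]

lemma prod_ratio (k : ℕ) : (∏ i ∈ Finset.range k, (2*(i:ℝ)+2)/(2*i+3))
    = 4^k * (Nat.factorial k)^2 / (Nat.factorial (2*k+1)) := by
  induction k with
  | zero => simp
  | succ k ih =>
      rw [Finset.prod_range_succ, ih, fact_odd_succ, Nat.factorial_succ k]
      have hf1 : (0:ℝ) < Nat.factorial (2*k+1) := by positivity
      have hf2 : (0:ℝ) < Nat.factorial k := by positivity
      push_cast
      field_simp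
      ring

lemma gamma_half (k : ℕ) : Real.Gamma ((k:ℝ) + 3/2)
    = (Nat.factorial (2*k+1)) * Real.sqrt π / (4^k * (Nat.factorial k) * 2) := by
  induction k with
  | zero =>
      have : ((0:ℕ):ℝ) + 3/2 = 1/2 + 1 := by norm_num
      rw [this, Real.Gamma_add_one (by norm_num), Real.Gamma_one_half_eq]
      simp
      ring
  | succ k ih =>
      have h : ((k+1:ℕ):ℝ) + 3/2 = ((k:ℝ) + 3/2) + 1 := by push_cast; ring
      rw [h, Real.Gamma_add_one (by positivity), ih, fact_odd_succ, Nat.factorial_succ k]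
      have hf2 : (0:ℝ) < Nat.factorial k := by positivity
      have hf1 : (0:ℝ) < Nat.factorial (2*k+1) := by positivity
      push_cast
      field_simp
      ring

lemma integral_cos_odd (k : ℕ) : (∫ θ in (0:ℝ)..(π/2), Real.cos θ ^ (2*k+1))
    = ∏ i ∈ Finset.range k, (2*(i:ℝ)+2)/(2*i+3) := by
  induction k with
  | zero => simp
  | succ k ih =>
      have h : 2*(k+1)+1 = (2*k+1)+2 := by ring
      rw [h, integral_cos_pow]
      simp only [Real.cos_pi_div_two, Real.sin_zero, Real.sin_pi_div_two, Real.cos_zero]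
      rw [ih, Finset.prod_range_succ]
      push_cast
      ring

lemma sq_exp_bound {β s : ℝ} (hβ : 0 < β) : s^4 * Real.exp (-(β*s^2)) ≤ 4/β^2 := by
  have hy : 0 ≤ β * s^2 := by positivity
  set y := β * s^2 with hy_def
  have h1 : y/2 + 1 ≤ Real.exp (y/2) := Real.add_one_le_exp _
  have h2 : Real.exp (y/2) * Real.exp (y/2) = Real.exp y := by
    rw [← Real.exp_add]; ring_nf
  have h3 : y^2 ≤ 4 * Real.exp y := by nlinarith [Real.exp_pos (y/2)]
  have h4 : s^4 = y^2 / β^2 := by rw [hy_def]; field_simp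
  rw [h4]
  have h5 : Real.exp (-y) = 1 / Real.exp y := by
    rw [Real.exp_neg]; ring
  rw [h5]
  rw [div_mul_div_comm, div_le_div_iff₀ (by positivity) (by positivity)]
  nlinarith [Real.exp_pos y, sq_nonneg β]

lemma sin_sq_lb {s : ℝ} (h0 : 0 ≤ s) (h1 : s ≤ π/4) : (27/20) * s^2 ≤ 2 * Real.sin s ^ 2 := by
  rcases eq_or_lt_of_le h0 with h | h
  · simp [← h]
  have hπ : π < 3.15 := Real.pi_lt_d2
  have hs1 : s ≤ 1 := by nlinarith
  have hsin := Real.sin_gt_sub_cube h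
  have hs2 : s^2 ≤ 63/100 := by nlinarith
  have hpos : 0 < s - s^3/4 := by nlinarith
  nlinarith [Real.sin_le h0]

lemma sq_sub_sin_sq {s : ℝ} (h0 : 0 ≤ s) (h1 : s ≤ π/4) : s^2 - Real.sin s ^ 2 ≤ s^4/2 := by
  rcases eq_or_lt_of_le h0 with h | h
  · simp [← h]
  have hπ : π < 3.15 := Real.pi_lt_d2
  have hs1 : s ≤ 1 := by nlinarith
  have hsin := Real.sin_gt_sub_cube h
  have hsle := Real.sin_le h0
  have hsnn : 0 ≤ Real.sin s := Real.sin_nonneg_of_nonneg_of_le_pi h0 (by nlinarith)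
  nlinarith

lemma laplace {z : ℝ} (hz : 1 ≤ z) :
    |(∫ s in (0:ℝ)..(π/4), Real.exp (-(2*z*Real.sin s^2))) - Real.sqrt (π/(8*z))| ≤ 3/z := by
  have hz0 : 0 < z := lt_of_lt_of_le one_pos hz
  have h2z : 0 < 2*z := by positivity
  have hπ4 : (0:ℝ) ≤ π/4 := by positivity
  have hπ : π < 3.15 := Real.pi_lt_d2
  have hπ0 : 0 < π := Real.pi_pos
  -- Gaussian integral
  have hgauss : ∫ s in Ioi (0:ℝ), Real.exp (-(2*z*s^2)) = Real.sqrt (π/(8*z)) := by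
    have h := integral_gaussian_Ioi (2*z)
    simp_rw [show ∀ s:ℝ, -(2*z) * s^2 = -(2*z*s^2) by intro s; ring] at h
    rw [h, show π/(2*z) = (π/(8*z)) * 2^2 by field_simp; ring]
    rw [Real.sqrt_mul (by positivity), Real.sqrt_sq (by norm_num)]
    ring
  -- integrability
  have hig : IntegrableOn (fun s => Real.exp (-(2*z*s^2))) (Ioi (0:ℝ)) := by
    have := (integrable_exp_neg_mul_sq h2z).integrableOn (s := Ioi (0:ℝ))
    simpa [show ∀ s:ℝ, -(2*z) * s^2 = -(2*z*s^2) by intro s; ring] using this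
  have hig1 : IntegrableOn (fun s => Real.exp (-(2*z*s^2))) (Ioc (0:ℝ) (π/4)) :=
    hig.mono_set (Ioc_subset_Ioi_self)
  have hig2 : IntegrableOn (fun s => Real.exp (-(2*z*s^2))) (Ioi (π/4)) :=
    hig.mono_set (Ioi_subset_Ioi hπ4)
  have hif : IntegrableOn (fun s => Real.exp (-(2*z*Real.sin s^2))) (Ioc (0:ℝ) (π/4)) := by
    apply Continuous.integrableOn_Ioc; fun_prop
  -- splitting
  have hsplit : (∫ s in Ioi (0:ℝ), Real.exp (-(2*z*s^2)))
      = (∫ s in Ioc (0:ℝ) (π/4), Real.exp (-(2*z*s^2)))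
        + ∫ s in Ioi (π/4), Real.exp (-(2*z*s^2)) := by
    rw [← setIntegral_union (Ioc_disjoint_Ioi le_rfl) measurableSet_Ioi hig1 hig2,
      Ioc_union_Ioi_eq_Ioi hπ4]
  -- tail bound
  have htail0 : 0 ≤ ∫ s in Ioi (π/4), Real.exp (-(2*z*s^2)) :=
    integral_nonneg (fun s => (Real.exp_pos _).le)
  have htail : (∫ s in Ioi (π/4), Real.exp (-(2*z*s^2))) ≤ 1/z := by
    have hexp_int : IntegrableOn (fun s : ℝ => Real.exp (-z * s)) (Ioi (π/4)) :=
      exp_neg_integrableOn_Ioi _ hz0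
    have hmono : (∫ s in Ioi (π/4), Real.exp (-(2*z*s^2)))
        ≤ ∫ s in Ioi (π/4), Real.exp (-z * s) := by
      refine setIntegral_mono_on hig2 hexp_int measurableSet_Ioi (fun s hs => ?_)
      have hs' : π/4 < s := hs
      have h3 : (3:ℝ) < π := Real.pi_gt_three
      have hs0 : (0:ℝ) < s := by nlinarith
      apply Real.exp_le_exp.mpr
      nlinarith [mul_nonneg (mul_nonneg hz0.le hs0.le) (by nlinarith : (0:ℝ) ≤ 2*s-1)]
    have hcomp : (∫ s in Ioi (π/4), Real.exp (-z * s)) = z⁻¹ * Real.exp (-(z*(π/4))) := by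
      have h := integral_comp_mul_left_Ioi (fun u => Real.exp (-u)) (π/4) hz0
      simp only [smul_eq_mul] at h
      simp_rw [neg_mul] at h ⊢
      rw [h, integral_exp_neg_Ioi]
    refine hmono.trans ?_
    rw [hcomp]
    have : Real.exp (-(z*(π/4))) ≤ 1 := Real.exp_le_one_iff.mpr (by nlinarith)
    calc z⁻¹ * Real.exp (-(z*(π/4))) ≤ z⁻¹ * 1 := by gcongr
      _ = 1/z := by ring
  -- main difference bound
  have hdiff : |(∫ s in Ioc (0:ℝ) (π/4), Real.exp (-(2*z*Real.sin s^2)))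
      - ∫ s in Ioc (0:ℝ) (π/4), Real.exp (-(2*z*s^2))| ≤ 2/z := by
    rw [← integral_sub hif hig1]
    have hbd : ∀ s ∈ Ioc (0:ℝ) (π/4),
        ‖Real.exp (-(2*z*Real.sin s^2)) - Real.exp (-(2*z*s^2))‖ ≤ (11/5) * (1/z) := by
      intro s hs
      obtain ⟨hs0, hs4⟩ := hs
      have hsin_le : Real.sin s ^ 2 ≤ s^2 := by
        have h1 : Real.sin s ≤ s := Real.sin_le hs0.le
        have h2 : 0 ≤ Real.sin s := Real.sin_nonneg_of_nonneg_of_le_pi hs0.le (by nlinarith)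
        nlinarith
      have hAB : 2*z*Real.sin s^2 ≤ 2*z*s^2 := by nlinarith
      have hmono : Real.exp (-(2*z*s^2)) ≤ Real.exp (-(2*z*Real.sin s^2)) :=
        Real.exp_le_exp.mpr (by linarith)
      rw [Real.norm_of_nonneg (by linarith)]
      -- exp(-A) - exp(-B) ≤ (B - A) * exp(-A)
      have hA : (0:ℝ) < Real.exp (-(2*z*Real.sin s^2)) := Real.exp_pos _
      have hkey : Real.exp (-(2*z*Real.sin s^2)) - Real.exp (-(2*z*s^2))
          ≤ (2*z*s^2 - 2*z*Real.sin s^2) * Real.exp (-(2*z*Real.sin s^2)) := by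
        have h1 : 1 - (2*z*s^2 - 2*z*Real.sin s^2) ≤ Real.exp (-(2*z*s^2 - 2*z*Real.sin s^2)) := by
          have := Real.add_one_le_exp (-(2*z*s^2 - 2*z*Real.sin s^2))
          linarith
        have h2 : Real.exp (-(2*z*s^2))
            = Real.exp (-(2*z*Real.sin s^2)) * Real.exp (-(2*z*s^2 - 2*z*Real.sin s^2)) := by
          rw [← Real.exp_add]; ring_nf
        nlinarith
      have hBA : 2*z*s^2 - 2*z*Real.sin s^2 ≤ z * s^4 := by
        have := sq_sub_sin_sq hs0.le hs4
        nlinarith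
      have hexpA : Real.exp (-(2*z*Real.sin s^2)) ≤ Real.exp (-((27/20*z)*s^2)) := by
        apply Real.exp_le_exp.mpr
        have := sin_sq_lb hs0.le hs4
        nlinarith
      have hfin : z * s^4 * Real.exp (-((27/20*z)*s^2)) ≤ (11/5) * (1/z) := by
        have hb : (0:ℝ) < 27/20*z := by positivity
        have := sq_exp_bound (s := s) hb
        calc z * s^4 * Real.exp (-((27/20*z)*s^2)) = z * (s^4 * Real.exp (-((27/20*z)*s^2))) := by ring
          _ ≤ z * (4/(27/20*z)^2) := by gcongr
          _ = (1600/729) * (1/z) := by field_simp; ring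
          _ ≤ (11/5) * (1/z) := by
              have : (0:ℝ) ≤ 1/z := by positivity
              nlinarith
      calc Real.exp (-(2*z*Real.sin s^2)) - Real.exp (-(2*z*s^2))
          ≤ (2*z*s^2 - 2*z*Real.sin s^2) * Real.exp (-(2*z*Real.sin s^2)) := hkey
        _ ≤ z * s^4 * Real.exp (-((27/20*z)*s^2)) := by
            apply mul_le_mul hBA hexpA hA.le (by nlinarith)
        _ ≤ (11/5) * (1/z) := hfin
    have := norm_setIntegral_le_of_norm_le_const (show volume (Ioc (0:ℝ) (π/4)) < ⊤ from measure_Ioc_lt_top) hbd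
    rw [Measure.real, Real.volume_Ioc, sub_zero, ENNReal.toReal_ofReal hπ4] at this
    rw [← Real.norm_eq_abs]
    refine this.trans ?_
    have h1z : (0:ℝ) ≤ 1/z := by positivity
    calc 11/5*(1/z)*(π/4) = (11*π/20)*(1/z) := by ring
      _ ≤ 2*(1/z) := by nlinarith
      _ = 2/z := by ring
  -- assemble
  rw [intervalIntegral.integral_of_le hπ4, ← hgauss, hsplit]
  rw [show (∫ s in Ioc (0:ℝ) (π/4), Real.exp (-(2*z*Real.sin s^2)))
      - ((∫ s in Ioc (0:ℝ) (π/4), Real.exp (-(2*z*s^2)))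
        + ∫ s in Ioi (π/4), Real.exp (-(2*z*s^2)))
      = ((∫ s in Ioc (0:ℝ) (π/4), Real.exp (-(2*z*Real.sin s^2)))
        - (∫ s in Ioc (0:ℝ) (π/4), Real.exp (-(2*z*s^2))))
        - ∫ s in Ioi (π/4), Real.exp (-(2*z*s^2)) by ring]
  calc |_ - _| ≤ |(∫ s in Ioc (0:ℝ) (π/4), Real.exp (-(2*z*Real.sin s^2)))
        - (∫ s in Ioc (0:ℝ) (π/4), Real.exp (-(2*z*s^2)))|
        + |∫ s in Ioi (π/4), Real.exp (-(2*z*s^2))| := abs_sub _ _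
    _ ≤ 2/z + 1/z := by
        apply add_le_add hdiff
        rw [abs_of_nonneg htail0]; exact htail
    _ = 3/z := by ring

lemma exp_cos_rep (z : ℝ) :
    (∫ θ in (0:ℝ)..(π/2), Real.exp (z * Real.cos θ))
      = Real.exp z * (2 * ∫ s in (0:ℝ)..(π/4), Real.exp (-(2*z*Real.sin s^2))) := by
  have h : ∀ s : ℝ, Real.exp (-(2*z*Real.sin s^2))
      = Real.exp (z * Real.cos (2*s)) * Real.exp (-z) := by
    intro s
    rw [← Real.exp_add]
    congr 1
    have h2 : Real.cos (2*s) = 1 - 2*Real.sin s^2 := by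
      rw [Real.cos_two_mul, Real.cos_sq']; ring
    rw [h2]; ring
  simp_rw [h]
  rw [intervalIntegral.integral_mul_const]
  have hcomp : (2 * ∫ s in (0:ℝ)..(π/4), Real.exp (z * Real.cos (2*s)))
      = ∫ θ in (2*(0:ℝ))..(2*(π/4)), Real.exp (z * Real.cos θ) :=
    intervalIntegral.mul_integral_comp_mul_left (f := fun θ => Real.exp (z * Real.cos θ)) (c := 2)
  have h24 : (2:ℝ) * (π/4) = π/2 := by ring
  rw [h24, mul_zero] at hcomp
  rw [← hcomp]
  have he : Real.exp z * Real.exp (-z) = 1 := by rw [← Real.exp_add]; simp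
  have hre : Real.exp z * (2 * ((∫ s in (0:ℝ)..(π/4), Real.exp (z * Real.cos (2*s))) * Real.exp (-z)))
      = (Real.exp z * Real.exp (-z)) * (2 * ∫ s in (0:ℝ)..(π/4), Real.exp (z * Real.cos (2*s))) := by
    ring
  rw [hre, he, one_mul]

lemma sinh_split (z : ℝ) :
    (∫ θ in (0:ℝ)..(π/2), Real.sinh (z * Real.cos θ))
      = ((∫ θ in (0:ℝ)..(π/2), Real.exp (z * Real.cos θ))
        - ∫ θ in (0:ℝ)..(π/2), Real.exp (-(z * Real.cos θ))) / 2 := by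
  rw [← intervalIntegral.integral_sub (by apply Continuous.intervalIntegrable; fun_prop)
    (by apply Continuous.intervalIntegrable; fun_prop)]
  rw [← intervalIntegral.integral_div]
  apply intervalIntegral.integral_congr
  intro θ _
  simp [Real.sinh_eq]

lemma R_bounds {z : ℝ} (hz : 0 ≤ z) :
    0 ≤ (∫ θ in (0:ℝ)..(π/2), Real.exp (-(z * Real.cos θ)))
    ∧ (∫ θ in (0:ℝ)..(π/2), Real.exp (-(z * Real.cos θ))) ≤ π/2 := by
  have hπ2 : (0:ℝ) ≤ π/2 := by positivity
  constructor
  · apply intervalIntegral.integral_nonneg hπ2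
    intro θ _; exact (Real.exp_pos _).le
  · have h : ∀ θ ∈ Set.Icc (0:ℝ) (π/2), Real.exp (-(z * Real.cos θ)) ≤ 1 := by
      intro θ hθ
      apply Real.exp_le_one_iff.mpr
      have hc : 0 ≤ Real.cos θ := Real.cos_nonneg_of_mem_Icc ⟨by linarith [hθ.1], hθ.2⟩
      have : 0 ≤ z * Real.cos θ := mul_nonneg hz hc
      linarith
    calc (∫ θ in (0:ℝ)..(π/2), Real.exp (-(z * Real.cos θ)))
        ≤ ∫ _ in (0:ℝ)..(π/2), (1:ℝ) := by
          apply intervalIntegral.integral_mono_on hπ2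
            (by apply Continuous.intervalIntegrable; fun_prop)
            (by apply Continuous.intervalIntegrable; fun_prop) h
      _ = π/2 := by simp

lemma struve_rep {z : ℝ} (hz : 0 ≤ z) :
    struveL0 z = 2/π * ∫ θ in (0:ℝ)..(π/2), Real.sinh (z * Real.cos θ) := by
  have hπ2 : (0:ℝ) ≤ π/2 := by positivity
  have hvol : volume (Set.Ioc (0:ℝ) (π/2)) < ⊤ := measure_Ioc_lt_top
  rw [intervalIntegral.integral_of_le hπ2]
  have hsinh : ∀ θ : ℝ, Real.sinh (z * Real.cos θ)
      = ∑' k : ℕ, (z * Real.cos θ) ^ (2*k+1) / (Nat.factorial (2*k+1)) := by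
    intro θ; exact Real.sinh_eq_tsum _
  simp_rw [hsinh]
  have hswap : ∑' k : ℕ, (∫ θ in Set.Ioc (0:ℝ) (π/2),
        (z * Real.cos θ) ^ (2*k+1) / (Nat.factorial (2*k+1)))
      = ∫ θ in Set.Ioc (0:ℝ) (π/2),
        ∑' k : ℕ, (z * Real.cos θ) ^ (2*k+1) / (Nat.factorial (2*k+1)) := by
    apply MeasureTheory.integral_tsum_of_summable_integral_norm
    · intro k
      apply Continuous.integrableOn_Ioc
      fun_prop
    · have hsum : Summable (fun k : ℕ => (z ^ (2*k+1) / (Nat.factorial (2*k+1))) * (π/2)) :=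
        ((Real.hasSum_sinh z).summable.mul_right _)
      apply Summable.of_nonneg_of_le (fun k => ?_) (fun k => ?_) hsum
      · exact integral_nonneg (fun θ => norm_nonneg _)
      · have hbd : ∀ θ ∈ Set.Ioc (0:ℝ) (π/2),
            ‖‖(z * Real.cos θ) ^ (2*k+1) / (Nat.factorial (2*k+1) : ℝ)‖‖
              ≤ z ^ (2*k+1) / (Nat.factorial (2*k+1)) := by
          intro θ _
          rw [norm_norm, norm_div, norm_pow]
          have h1 : ‖((Nat.factorial (2*k+1) : ℝ))‖ = (Nat.factorial (2*k+1) : ℝ) := by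
            rw [Real.norm_of_nonneg]; positivity
          rw [h1]
          have hnum : ‖z * Real.cos θ‖ ≤ z := by
            rw [norm_mul, Real.norm_of_nonneg hz]
            calc z * ‖Real.cos θ‖ ≤ z * 1 := by
                  gcongr; rw [Real.norm_eq_abs]; exact Real.abs_cos_le_one θ
              _ = z := mul_one z
          gcongr <;> first | exact hnum | exact hz | positivity
        have := norm_setIntegral_le_of_norm_le_const hvol hbd
        have heq : ‖∫ θ in Set.Ioc (0:ℝ) (π/2),
            ‖(z * Real.cos θ) ^ (2*k+1) / (Nat.factorial (2*k+1) : ℝ)‖‖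
            = ∫ θ in Set.Ioc (0:ℝ) (π/2),
            ‖(z * Real.cos θ) ^ (2*k+1) / (Nat.factorial (2*k+1) : ℝ)‖ := by
          rw [Real.norm_of_nonneg]; exact integral_nonneg (fun θ => norm_nonneg _)
        rw [heq] at this
        refine this.trans ?_
        rw [Measure.real, Real.volume_Ioc, sub_zero, ENNReal.toReal_ofReal hπ2]
  rw [← hswap]
  rw [struveL0]
  rw [← tsum_mul_left]
  apply tsum_congr
  intro k
  have hint : (∫ θ in Set.Ioc (0:ℝ) (π/2), (z * Real.cos θ) ^ (2*k+1) / (Nat.factorial (2*k+1)))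
      = (z ^ (2*k+1) / (Nat.factorial (2*k+1))) * ∫ θ in (0:ℝ)..(π/2), Real.cos θ ^ (2*k+1) := by
    rw [← intervalIntegral.integral_of_le hπ2, ← intervalIntegral.integral_const_mul]
    apply intervalIntegral.integral_congr
    intro θ _
    simp only [mul_pow]
    ring
  rw [hint, integral_cos_odd, prod_ratio, gamma_half]
  have hsπ : Real.sqrt π * Real.sqrt π = π := Real.mul_self_sqrt pi_pos.le
  have h4 : (4:ℝ)^k = 2^(2*k) := by rw [show (4:ℝ) = 2^2 by norm_num, ← pow_mul]
  have hfk : (0:ℝ) < Nat.factorial k := by positivity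
  have hf2k : (0:ℝ) < Nat.factorial (2*k+1) := by positivity
  have h2p : (0:ℝ) < 2^(2*k) := by positivity
  have hπ : (0:ℝ) < π := pi_pos
  have hsπ' : (0:ℝ) < Real.sqrt π := Real.sqrt_pos.mpr hπ
  rw [div_pow z 2, pow_succ 2 (2*k), pow_mul 2 2, show ((2:ℝ)^2) = 4 by norm_num]
  field_simp
  ring_nf
  rw [pow_two (Real.sqrt π), hsπ]

lemma sqrt_sub_le {a b : ℝ} (hb : 0 ≤ b) (hba : b ≤ a) :
    Real.sqrt a - Real.sqrt b ≤ Real.sqrt (a - b) := by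
  have hd : 0 ≤ a - b := sub_nonneg.2 hba
  have h1 : Real.sqrt a ≤ Real.sqrt b + Real.sqrt (a - b) := by
    have hsq : a ≤ (Real.sqrt b + Real.sqrt (a-b))^2 := by
      nlinarith [Real.sq_sqrt hb, Real.sq_sqrt hd,
        mul_nonneg (Real.sqrt_nonneg b) (Real.sqrt_nonneg (a-b))]
    calc Real.sqrt a ≤ Real.sqrt ((Real.sqrt b + Real.sqrt (a-b))^2) := Real.sqrt_le_sqrt hsq
      _ = Real.sqrt b + Real.sqrt (a-b) := Real.sqrt_sq (by positivity)
  linarith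


theorem marginal_term_asymptotics (c lam x : ℝ) (hc : 0 < c) (hlam : 0 < lam) :
    ∃ C > 0, ∃ T > |x| / c, ∀ t ≥ T,
      |(Real.exp (-(lam * t)) / (Real.pi * Real.sqrt (c ^ 2 * t ^ 2 - x ^ 2)) +
            lam * Real.exp (-(lam * t)) / (2 * c) *
              struveL0 (lam / c * Real.sqrt (c ^ 2 * t ^ 2 - x ^ 2))) -
          1 / (2 * c) * Real.sqrt (lam / (2 * Real.pi * t))| ≤ C * t⁻¹ := by
  have hπ0 : (0:ℝ) < π := Real.pi_pos
  have hπlt : π < 3.15 := Real.pi_lt_d2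
  set a : ℝ := |x| / c with ha_def
  have ha0 : 0 ≤ a := by positivity
  refine ⟨2/(π*lam*c) + 4*lam^2*a^2/(c*π) + 6/(c*π)
      + (1/(2*c))*Real.sqrt (lam*a^2/π) + 1/(4*c), by positivity,
    max (2*a+1) (max 1 (2/lam)), ?_, ?_⟩
  · calc a < 2*a+1 := by linarith
      _ ≤ _ := le_max_left _ _
  intro t ht
  have ht1 : (1:ℝ) ≤ t := le_trans (le_trans (le_max_left 1 (2/lam)) (le_max_right _ _)) ht
  have ht2a : 2*a+1 ≤ t := le_trans (le_max_left _ _) ht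
  have htlam : 2/lam ≤ t := le_trans (le_trans (le_max_right 1 (2/lam)) (le_max_right _ _)) ht
  have ht0 : 0 < t := lt_of_lt_of_le one_pos ht1
  have hta : a < t := by linarith
  have hlamt2 : 2 ≤ lam*t := by
    have h := mul_le_mul_of_nonneg_left htlam hlam.le
    rwa [mul_div_cancel₀ 2 hlam.ne'] at h
  -- quantities
  set u := Real.sqrt (t^2 - a^2) with hu_def
  have hta2 : a^2 ≤ t^2 := by nlinarith
  have hu2 : u^2 = t^2 - a^2 := Real.sq_sqrt (by nlinarith)
  have hu0 : 0 ≤ u := Real.sqrt_nonneg _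
  have hut : u ≤ t := by
    have h := Real.sqrt_le_sqrt (show t^2 - a^2 ≤ t^2 by nlinarith)
    rwa [Real.sqrt_sq ht0.le] at h
  have hut2 : t/2 ≤ u := by
    have h := Real.sqrt_le_sqrt (show (t/2)^2 ≤ t^2 - a^2 by nlinarith)
    rwa [Real.sqrt_sq (by positivity)] at h
  have hu0' : 0 < u := lt_of_lt_of_le (by positivity) hut2
  have hu_lb : t - a^2/t ≤ u := by
    have hq : a^2/t ≤ a := by
      rw [div_le_iff₀ ht0]; nlinarith
    have hq0 : 0 ≤ a^2/t := by positivity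
    have hat : a^2/t*t = a^2 := div_mul_cancel₀ _ ht0.ne'
    have h := Real.sqrt_le_sqrt (show (t - a^2/t)^2 ≤ t^2 - a^2 by nlinarith)
    rwa [Real.sqrt_sq (by nlinarith)] at h
  set w := Real.sqrt (c^2*t^2 - x^2) with hw_def
  have ha2 : a^2 = x^2/c^2 := by rw [ha_def, div_pow, sq_abs]
  have hcx : c^2*t^2 - x^2 = c^2*(t^2-a^2) := by
    rw [ha2]; field_simp
  have hw : w = c*u := by
    rw [hw_def, hcx, Real.sqrt_mul (sq_nonneg c), Real.sqrt_sq hc.le, hu_def]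
  set z := lam*u with hz_def
  have hz0 : 0 ≤ z := by positivity
  have hzarg : lam/c * w = z := by rw [hw, hz_def]; field_simp
  have hz_lb : lam*t/2 ≤ z := by
    rw [hz_def]; nlinarith
  have hz1 : 1 ≤ z := by nlinarith
  have hz0' : 0 < z := lt_of_lt_of_le one_pos hz1
  have hzlt : z ≤ lam*t := by rw [hz_def]; nlinarith
  set δ := lam*t - z with hδ_def
  have hδ0 : 0 ≤ δ := by rw [hδ_def]; linarith
  have hδ : δ ≤ lam*a^2/t := by
    rw [hδ_def, hz_def]
    have h1 : t - u ≤ a^2/t := by linarith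
    calc lam*t - lam*u = lam*(t-u) := by ring
      _ ≤ lam*(a^2/t) := by gcongr
      _ = lam*a^2/t := by ring
  set E := Real.exp (-(lam*t)) with hE_def
  have hE0 : 0 < E := Real.exp_pos _
  have hE : E ≤ 1/(lam*t) := by
    rw [hE_def, Real.exp_neg]
    rw [one_div]
    apply inv_anti₀ (by positivity)
    linarith [Real.add_one_le_exp (lam*t)]
  set G := ∫ s in (0:ℝ)..(π/4), Real.exp (-(2*z*Real.sin s^2)) with hG_def
  set S := Real.sqrt (π/(8*z)) with hS_def
  have hGS : |G - S| ≤ 3/z := laplace hz1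
  have hS0 : 0 ≤ S := Real.sqrt_nonneg _
  have hS1 : S ≤ 1 := by
    rw [hS_def]
    rw [show (1:ℝ) = Real.sqrt 1 from (Real.sqrt_one).symm]
    apply Real.sqrt_le_sqrt
    rw [div_le_one (by positivity)]
    nlinarith
  have hG4 : |G| ≤ 4 := by
    have h3z : 3/z ≤ 3 := by
      rw [div_le_iff₀ hz0']; nlinarith
    calc |G| = |(G - S) + S| := by ring_nf
      _ ≤ |G - S| + |S| := abs_add_le _ _
      _ ≤ 3 + 1 := by
          refine add_le_add (hGS.trans h3z) ?_
          rw [abs_of_nonneg hS0]; exact hS1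
      _ = 4 := by norm_num
  set R := ∫ θ in (0:ℝ)..(π/2), Real.exp (-(z * Real.cos θ)) with hR_def
  obtain ⟨hR0, hRπ⟩ := R_bounds hz0
  set D := Real.exp (-δ) with hD_def
  have hD1 : |D - 1| ≤ δ := by
    have h1 : D ≤ 1 := Real.exp_le_one_iff.mpr (by linarith)
    have h2 : 1 - δ ≤ D := by
      have := Real.add_one_le_exp (-δ)
      rw [hD_def]; linarith
    rw [abs_le]; constructor <;> linarith
  -- struve rewriting
  have hstruve : struveL0 z = (Real.exp z * (2*G) - R)/π := by
    rw [struve_rep hz0, sinh_split z, exp_cos_rep z, ← hG_def, ← hR_def]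
    field_simp
  have hDE : E * Real.exp z = D := by
    rw [hE_def, hD_def, ← Real.exp_add, hδ_def]; congr 1; ring
  -- the sqrt terms
  set P := lam/(8*π*c^2) with hP_def
  have hP0 : 0 < P := by positivity
  have hM : 1/(2*c)*Real.sqrt (lam/(2*π*t)) = Real.sqrt (P/t) := by
    rw [show P/t = (1/(2*c))^2 * (lam/(2*π*t)) by
      rw [hP_def]; field_simp; norm_num]
    rw [Real.sqrt_mul (sq_nonneg _), Real.sqrt_sq (by positivity)]
  have hT4 : lam/(c*π)*S = Real.sqrt (P/u) := by
    rw [hS_def, show P/u = (lam/(c*π))^2 * (π/(8*z)) by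
      rw [hP_def, hz_def]; field_simp]
    rw [Real.sqrt_mul (sq_nonneg _), Real.sqrt_sq (by positivity)]
  -- key decomposition
  have hkey : (E / (π * w) + lam * E / (2 * c) * struveL0 (lam / c * w))
      - 1/(2*c)*Real.sqrt (lam/(2*π*t))
      = E/(π*w) + (lam/(c*π))*((D-1)*G) + (lam/(c*π))*(G-S)
        + (Real.sqrt (P/u) - Real.sqrt (P/t)) - lam*E*R/(2*c*π) := by
    rw [hzarg, hstruve, hM, ← hT4]
    have h1 : lam * E / (2 * c) * ((Real.exp z * (2*G) - R)/π)
        = (lam/(c*π)) * ((E * Real.exp z) * G) - lam*E*R/(2*c*π) := by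
      field_simp
    rw [h1, hDE]
    ring
  rw [hkey]
  -- individual bounds
  have hw0 : 0 < w := by rw [hw]; positivity
  have hw_lb : c*(t/2) ≤ w := by rw [hw]; gcongr
  have hT1 : E/(π*w) ≤ 2/(π*lam*c)*(1/t) := by
    calc E/(π*w) ≤ (1/(lam*t))/(π*(c*(t/2))) := by
          refine div_le_div₀ (by positivity) hE (by positivity) ?_
          gcongr
      _ = 2/(π*lam*c)*(1/t)*(1/t) := by field_simp
      _ ≤ 2/(π*lam*c)*(1/t)*1 := by
          gcongr <;> first | positivity | (rw [div_le_one ht0]; linarith)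
      _ = 2/(π*lam*c)*(1/t) := by ring
  have hT2 : |(lam/(c*π))*((D-1)*G)| ≤ 4*lam^2*a^2/(c*π)*(1/t) := by
    rw [abs_mul, abs_mul, abs_of_nonneg (show (0:ℝ) ≤ lam/(c*π) by positivity)]
    have hd1 : |D-1| ≤ lam*a^2/t := hD1.trans hδ
    calc lam/(c*π) * (|D-1| * |G|) ≤ lam/(c*π) * ((lam*a^2/t) * 4) := by
          gcongr <;> first | exact hd1 | exact hG4 | positivity | exact abs_nonneg _
      _ = 4*lam^2*a^2/(c*π)*(1/t) := by field_simp
  have hT3 : |(lam/(c*π))*(G-S)| ≤ 6/(c*π)*(1/t) := by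
    rw [abs_mul, abs_of_nonneg (show (0:ℝ) ≤ lam/(c*π) by positivity)]
    have h3z : 3/z ≤ 6/(lam*t) := by
      rw [div_le_div_iff₀ hz0' (by positivity)]
      linarith
    calc lam/(c*π) * |G-S| ≤ lam/(c*π) * (6/(lam*t)) := by
          gcongr; exact hGS.trans h3z
      _ = 6/(c*π)*(1/t) := by field_simp
  have hT4b : |Real.sqrt (P/u) - Real.sqrt (P/t)| ≤ (1/(2*c))*Real.sqrt (lam*a^2/π)*(1/t) := by
    have hle : P/t ≤ P/u := by gcongr
    have hmono : Real.sqrt (P/t) ≤ Real.sqrt (P/u) := Real.sqrt_le_sqrt hle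
    rw [abs_of_nonneg (by linarith)]
    refine (sqrt_sub_le (by positivity) hle).trans ?_
    have hdd : P/u - P/t ≤ (1/(4*c^2))*(lam*a^2/π)*(1/t)^2 := by
      have h1 : P/u - P/t = P*(t-u)/(u*t) := by field_simp
      have h2 : t - u ≤ a^2/t := by linarith
      have h3 : P*(t-u)/(u*t) ≤ P*(a^2/t)/((t/2)*t) := by
        gcongr <;> first | positivity | linarith
      have h4 : P*(a^2/t)/((t/2)*t) = 2*P*a^2*(1/t)^2*(1/t) := by field_simp
      have h5 : 2*P*a^2*(1/t)^2*(1/t) ≤ 2*P*a^2*(1/t)^2*1 := by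
        gcongr <;> first | positivity | (rw [div_le_one ht0]; linarith)
      have h6 : 2*P*a^2*(1/t)^2*1 = (1/(4*c^2))*(lam*a^2/π)*(1/t)^2 := by
        rw [hP_def]; field_simp; ring
      rw [h1]
      calc P*(t-u)/(u*t) ≤ P*(a^2/t)/((t/2)*t) := h3
        _ = 2*P*a^2*(1/t)^2*(1/t) := h4
        _ ≤ 2*P*a^2*(1/t)^2*1 := h5
        _ = (1/(4*c^2))*(lam*a^2/π)*(1/t)^2 := h6
    refine (Real.sqrt_le_sqrt hdd).trans ?_
    rw [show (1/(4*c^2))*(lam*a^2/π)*(1/t)^2 = ((1/(2*c))*(1/t))^2 * (lam*a^2/π) by ring]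
    rw [Real.sqrt_mul (sq_nonneg _), Real.sqrt_sq (by positivity)]
    exact le_of_eq (by ring)
  have hT5 : lam*E*R/(2*c*π) ≤ 1/(4*c)*(1/t) := by
    calc lam*E*R/(2*c*π) ≤ lam*(1/(lam*t))*(π/2)/(2*c*π) := by
          gcongr <;> first | positivity | exact hE | exact hRπ | exact hR0
      _ = 1/(4*c)*(1/t) := by field_simp; ring
  -- final chain
  have habs : |E/(π*w) + (lam/(c*π))*((D-1)*G) + (lam/(c*π))*(G-S)
      + (Real.sqrt (P/u) - Real.sqrt (P/t)) - lam*E*R/(2*c*π)|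
      ≤ E/(π*w) + |(lam/(c*π))*((D-1)*G)| + |(lam/(c*π))*(G-S)|
        + |Real.sqrt (P/u) - Real.sqrt (P/t)| + lam*E*R/(2*c*π) := by
    have e1 : |E/(π*w)| = E/(π*w) := abs_of_nonneg (by positivity)
    have e5 : |lam*E*R/(2*c*π)| = lam*E*R/(2*c*π) := abs_of_nonneg (by positivity)
    calc |E/(π*w) + (lam/(c*π))*((D-1)*G) + (lam/(c*π))*(G-S)
      + (Real.sqrt (P/u) - Real.sqrt (P/t)) - lam*E*R/(2*c*π)|
        ≤ |E/(π*w) + (lam/(c*π))*((D-1)*G) + (lam/(c*π))*(G-S)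
          + (Real.sqrt (P/u) - Real.sqrt (P/t))| + |lam*E*R/(2*c*π)| := abs_sub _ _
      _ ≤ (|E/(π*w) + (lam/(c*π))*((D-1)*G) + (lam/(c*π))*(G-S)|
          + |Real.sqrt (P/u) - Real.sqrt (P/t)|) + |lam*E*R/(2*c*π)| := by
            gcongr <;> exact abs_add_le _ _
      _ ≤ ((|E/(π*w) + (lam/(c*π))*((D-1)*G)| + |(lam/(c*π))*(G-S)|)
          + |Real.sqrt (P/u) - Real.sqrt (P/t)|) + |lam*E*R/(2*c*π)| := by
            gcongr <;> exact abs_add_le _ _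
      _ ≤ (((|E/(π*w)| + |(lam/(c*π))*((D-1)*G)|) + |(lam/(c*π))*(G-S)|)
          + |Real.sqrt (P/u) - Real.sqrt (P/t)|) + |lam*E*R/(2*c*π)| := by
            gcongr <;> exact abs_add_le _ _
      _ = E/(π*w) + |(lam/(c*π))*((D-1)*G)| + |(lam/(c*π))*(G-S)|
          + |Real.sqrt (P/u) - Real.sqrt (P/t)| + lam*E*R/(2*c*π) := by
            rw [e1, e5]
  refine habs.trans ?_
  rw [show t⁻¹ = 1/t from (one_div t).symm]
  have := add_le_add (add_le_add (add_le_add (add_le_add hT1 hT2) hT3) hT4b) hT5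
  refine this.trans ?_
  ring_nf
  rfl
end

section
/- Fix constants c > 0 and λ > 0 and a point x ∈ ℝ. For t > |x|/c, let f(x,t) = (λ·e^{-λ t}/(2c))·[ I₀((λ/c)·√(c²t² − x²)) + (ct/√(c²t² − x²))·I₁((λ/c)·√(c²t² − x²)) ] (the absolutely continuous part of the transition density of the Goldstein-Kac telegraph process with parameters c, λ), and let g(x,t) = e^{-λ t}/(π·√(c²t² − x²)) + (λ·e^{-λ t}/(2c))·[ I₀((λ/c)·√(c²t² − x²)) + L₀((λ/c)·√(c²t² − x²)) ] (the density of the marginals of the planar symmetric Markov random flight with the same parameters). Then |f(x,t) − g(x,t)| = O(t^{-1}) as t → ∞; that is, there exist constants C > 0 and T > |x|/c such that for all t ≥ T, |f(x,t) − g(x,t)| ≤ C·t^{-1}. -/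
open Real Filter Topology

open MeasureTheory intervalIntegral
lemma wallis_even (k : ℕ) :
    ∫ x in (0:ℝ)..(π/2), Real.cos x ^ (2*k)
      = π/2 * ((2*k).factorial : ℝ) / (4^k * ((k.factorial : ℝ))^2) := by
  induction k with
  | zero => simp
  | succ k ih =>
      have h : 2*(k+1) = 2*k + 2 := by ring
      rw [h, integral_cos_pow, ih]
      have h1 : ((2*k).factorial : ℝ) ≠ 0 := Nat.cast_ne_zero.mpr (2*k).factorial_ne_zero
      have h2 : ((k.factorial : ℝ)) ≠ 0 := Nat.cast_ne_zero.mpr k.factorial_ne_zero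
      have e1 : (2*k+2).factorial = (2*k+2) * ((2*k+1) * (2*k).factorial) := by
        rw [Nat.factorial_succ, Nat.factorial_succ]
      have e2 : (k+1).factorial = (k+1) * k.factorial := Nat.factorial_succ k
      rw [e1, e2]
      push_cast
      rw [Real.cos_pi_div_two, Real.sin_zero, Real.cos_zero]
      rw [zero_pow (by omega), mul_zero, zero_mul]
      field_simp
      ring

lemma wallis_odd (k : ℕ) :
    ∫ x in (0:ℝ)..(π/2), Real.cos x ^ (2*k+1)
      = 4^k * ((k.factorial : ℝ))^2 / ((2*k+1).factorial : ℝ) := by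
  induction k with
  | zero => simp
  | succ k ih =>
      have h : 2*(k+1)+1 = (2*k+1) + 2 := by ring
      rw [h, integral_cos_pow, ih]
      have h1 : ((2*k+1).factorial : ℝ) ≠ 0 := Nat.cast_ne_zero.mpr (2*k+1).factorial_ne_zero
      have h2 : ((k.factorial : ℝ)) ≠ 0 := Nat.cast_ne_zero.mpr k.factorial_ne_zero
      have e1 : (2*k+1+2).factorial = (2*k+3) * ((2*k+2) * (2*k+1).factorial) := by
        show (2*k+2+1).factorial = _
        rw [Nat.factorial_succ, Nat.factorial_succ]
      have e2 : (k+1).factorial = (k+1) * k.factorial := Nat.factorial_succ k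
      rw [e1, e2]
      push_cast
      rw [Real.cos_pi_div_two, Real.sin_zero, Real.cos_zero]
      rw [zero_pow (by omega), mul_zero, zero_mul]
      field_simp
      ring

lemma integral_tsum_swap {F : ℕ → ℝ → ℝ} {a b : ℝ} (hab : a ≤ b)
    (hcont : ∀ k, Continuous (F k)) (g : ℕ → ℝ) (hg : Summable g)
    (hbound : ∀ k, ∀ θ ∈ Set.Ioc a b, ‖F k θ‖ ≤ g k) :
    ∫ θ in Set.Ioc a b, (∑' k, F k θ) = ∑' k, ∫ θ in Set.Ioc a b, F k θ := by
  refine (MeasureTheory.integral_tsum_of_summable_integral_norm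
    (fun k => (hcont k).integrableOn_Ioc) ?_).symm
  apply Summable.of_nonneg_of_le (fun k => integral_nonneg (fun θ => norm_nonneg _))
    (fun k => ?_) (hg.mul_right (b - a))
  calc ∫ θ in Set.Ioc a b, ‖F k θ‖
      ≤ ‖∫ θ in Set.Ioc a b, ‖F k θ‖‖ := le_abs_self _
    _ ≤ g k * (volume (Set.Ioc a b)).toReal := by
        apply norm_setIntegral_le_of_norm_le_const (by simp)
        intro θ hθ
        simpa using hbound k θ hθ
    _ = g k * (b - a) := by rw [Real.volume_Ioc, ENNReal.toReal_ofReal (by linarith)]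

lemma half_pow (w : ℝ) (k : ℕ) : (w/2)^(2*k) = w^(2*k)/4^k := by
  rw [div_pow]
  congr 1
  rw [pow_mul]; norm_num

lemma abs_wcos_le {w : ℝ} (hw : 0 ≤ w) (θ : ℝ) : |w * Real.cos θ| ≤ w := by
  rw [abs_mul, abs_of_nonneg hw]
  calc w * |Real.cos θ| ≤ w * 1 := by
        exact mul_le_mul_of_nonneg_left (Real.abs_cos_le_one θ) hw
    _ = w := mul_one w


lemma rep_I0 (w : ℝ) (hw : 0 ≤ w) :
    ∫ θ in (0:ℝ)..(π/2), Real.cosh (w * Real.cos θ) = π/2 * besselI 0 w := by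
  have hab : (0:ℝ) ≤ π/2 := by positivity
  rw [intervalIntegral.integral_of_le hab]
  have h1 : ∀ θ : ℝ, Real.cosh (w * Real.cos θ)
      = ∑' k, (w * Real.cos θ)^(2*k) / ((2*k).factorial : ℝ) :=
    fun θ => Real.cosh_eq_tsum _
  simp_rw [h1]
  rw [integral_tsum_swap hab
    (fun k => by continuity)
    (fun k => w^(2*k) / ((2*k).factorial : ℝ)) (Real.hasSum_cosh w).summable
    (fun k θ _ => by
      simp only [norm_div, norm_pow, Real.norm_natCast]
      gcongr
      rw [Real.norm_eq_abs]; exact abs_wcos_le hw θ)]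
  rw [besselI, ← tsum_mul_left]
  refine tsum_congr fun k => ?_
  rw [← intervalIntegral.integral_of_le hab]
  have h2 : ∀ θ : ℝ, (w*Real.cos θ)^(2*k)/((2*k).factorial:ℝ)
      = (w^(2*k)/((2*k).factorial:ℝ)) * Real.cos θ^(2*k) := by
    intro θ; rw [mul_pow]; ring
  simp_rw [h2]
  rw [intervalIntegral.integral_const_mul, wallis_even]
  simp only [add_zero]
  rw [half_pow]
  have h3 : ((2*k).factorial : ℝ) ≠ 0 := Nat.cast_ne_zero.mpr (2*k).factorial_ne_zero
  have h4 : ((k.factorial : ℝ)) ≠ 0 := Nat.cast_ne_zero.mpr k.factorial_ne_zero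
  have h5 : (4:ℝ)^k ≠ 0 := by positivity
  field_simp

lemma half_pow_odd (w : ℝ) (k : ℕ) : (w/2)^(2*k+1) = w^(2*k+1)/(2*4^k) := by
  rw [pow_succ, half_pow, pow_succ]
  ring

lemma Gamma_offset (k : ℕ) : Real.Gamma ((k:ℝ) + 3/2)
    = ((2*k+2).factorial : ℝ) * Real.sqrt π / (4^(k+1) * ((k+1).factorial : ℝ)) := by
  induction k with
  | zero =>
      have h : ((0:ℕ):ℝ) + 3/2 = 1/2 + 1 := by norm_num
      rw [h, Real.Gamma_add_one (by norm_num), Real.Gamma_one_half_eq]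
      norm_num [Nat.factorial]
      ring
  | succ k ih =>
      have h : ((k+1:ℕ):ℝ) + 3/2 = ((k:ℝ) + 3/2) + 1 := by push_cast; ring
      rw [h, Real.Gamma_add_one (by positivity), ih]
      have e1 : (2*(k+1)+2).factorial = (2*k+4) * ((2*k+3) * (2*k+2).factorial) := by
        have h4 : 2*(k+1)+2 = (2*k+3)+1 := by ring
        rw [h4, Nat.factorial_succ]
        have h3 : 2*k+3 = (2*k+2)+1 := by ring
        rw [h3, Nat.factorial_succ]
      have e2 : (k+1+1).factorial = (k+2) * (k+1).factorial := Nat.factorial_succ (k+1)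
      rw [e1, e2]
      push_cast
      have h1 : ((k+1).factorial : ℝ) ≠ 0 := Nat.cast_ne_zero.mpr (k+1).factorial_ne_zero
      have h5 : (4:ℝ)^(k+1) ≠ 0 := by positivity
      field_simp
      ring

lemma rep_I1 (w : ℝ) (hw : 0 ≤ w) :
    ∫ θ in (0:ℝ)..(π/2), Real.sinh (w * Real.cos θ) * Real.cos θ = π/2 * besselI 1 w := by
  have hab : (0:ℝ) ≤ π/2 := by positivity
  rw [intervalIntegral.integral_of_le hab]
  have h1 : ∀ θ : ℝ, Real.sinh (w * Real.cos θ) * Real.cos θ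
      = ∑' k, (w * Real.cos θ)^(2*k+1) / ((2*k+1).factorial : ℝ) * Real.cos θ := by
    intro θ
    rw [Real.sinh_eq_tsum, tsum_mul_right]
  simp_rw [h1]
  rw [integral_tsum_swap hab
    (fun k => by continuity)
    (fun k => w^(2*k+1) / ((2*k+1).factorial : ℝ)) (Real.hasSum_sinh w).summable
    (fun k θ _ => by
      rw [norm_mul, norm_div, norm_pow, Real.norm_natCast]
      calc ‖w * Real.cos θ‖^(2*k+1) / ((2*k+1).factorial : ℝ) * ‖Real.cos θ‖
          ≤ w^(2*k+1) / ((2*k+1).factorial : ℝ) * 1 := by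
            gcongr
            · rw [Real.norm_eq_abs]; exact abs_wcos_le hw θ
            · rw [Real.norm_eq_abs]; exact Real.abs_cos_le_one θ
        _ = w^(2*k+1) / ((2*k+1).factorial : ℝ) := mul_one _)]
  rw [besselI, ← tsum_mul_left]
  refine tsum_congr fun k => ?_
  rw [← intervalIntegral.integral_of_le hab]
  have h2 : ∀ θ : ℝ, (w*Real.cos θ)^(2*k+1)/((2*k+1).factorial:ℝ) * Real.cos θ
      = (w^(2*k+1)/((2*k+1).factorial:ℝ)) * Real.cos θ^(2*(k+1)) := by
    intro θ; rw [mul_pow]; ring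
  simp_rw [h2]
  rw [intervalIntegral.integral_const_mul, wallis_even (k+1), half_pow_odd]
  have e1 : (2*(k+1)).factorial = (2*k+2) * (2*k+1).factorial := by
    have h4 : 2*(k+1) = (2*k+1)+1 := by ring
    rw [h4, Nat.factorial_succ]
  have e2 : (k+1).factorial = (k+1) * k.factorial := Nat.factorial_succ k
  rw [e1, e2]
  push_cast
  have h3 : ((2*k+1).factorial : ℝ) ≠ 0 := Nat.cast_ne_zero.mpr (2*k+1).factorial_ne_zero
  have h4 : ((k.factorial : ℝ)) ≠ 0 := Nat.cast_ne_zero.mpr k.factorial_ne_zero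
  have h5 : (4:ℝ)^k ≠ 0 := by positivity
  field_simp
  ring

lemma rep_L0 (w : ℝ) (hw : 0 ≤ w) :
    ∫ θ in (0:ℝ)..(π/2), Real.sinh (w * Real.cos θ) = π/2 * struveL0 w := by
  have hab : (0:ℝ) ≤ π/2 := by positivity
  rw [intervalIntegral.integral_of_le hab]
  have h1 : ∀ θ : ℝ, Real.sinh (w * Real.cos θ)
      = ∑' k, (w * Real.cos θ)^(2*k+1) / ((2*k+1).factorial : ℝ) :=
    fun θ => Real.sinh_eq_tsum _
  simp_rw [h1]
  rw [integral_tsum_swap hab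
    (fun k => by continuity)
    (fun k => w^(2*k+1) / ((2*k+1).factorial : ℝ)) (Real.hasSum_sinh w).summable
    (fun k θ _ => by
      simp only [norm_div, norm_pow, Real.norm_natCast]
      gcongr
      rw [Real.norm_eq_abs]; exact abs_wcos_le hw θ)]
  rw [struveL0, ← tsum_mul_left]
  refine tsum_congr fun k => ?_
  rw [← intervalIntegral.integral_of_le hab]
  have h2 : ∀ θ : ℝ, (w*Real.cos θ)^(2*k+1)/((2*k+1).factorial:ℝ)
      = (w^(2*k+1)/((2*k+1).factorial:ℝ)) * Real.cos θ^(2*k+1) := by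
    intro θ; rw [mul_pow]; ring
  simp_rw [h2]
  rw [intervalIntegral.integral_const_mul, wallis_odd, half_pow_odd]
  have hG : (1 / (Real.Gamma ((k:ℝ)+3/2))^2)
      = (4^(k+1) * ((k+1).factorial:ℝ))^2 / ((((2*k+2).factorial:ℝ))^2 * π) := by
    rw [Gamma_offset, div_pow, mul_pow, Real.sq_sqrt Real.pi_pos.le]
    have h1' : ((2*k+2).factorial : ℝ) ≠ 0 := Nat.cast_ne_zero.mpr (2*k+2).factorial_ne_zero
    have h2' : ((k+1).factorial : ℝ) ≠ 0 := Nat.cast_ne_zero.mpr (k+1).factorial_ne_zero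
    have h5 : (4:ℝ)^(k+1) ≠ 0 := by positivity
    field_simp
  rw [hG]
  have e1 : (2*k+2).factorial = (2*k+2) * (2*k+1).factorial := by
    have h4 : 2*k+2 = (2*k+1)+1 := by ring
    rw [h4, Nat.factorial_succ]
  have e2 : (k+1).factorial = (k+1) * k.factorial := Nat.factorial_succ k
  rw [e1, e2]
  push_cast
  have h3 : ((2*k+1).factorial : ℝ) ≠ 0 := Nat.cast_ne_zero.mpr (2*k+1).factorial_ne_zero
  have h4 : ((k.factorial : ℝ)) ≠ 0 := Nat.cast_ne_zero.mpr k.factorial_ne_zero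
  have h5 : (4:ℝ)^k ≠ 0 := by positivity
  have h6 : Real.pi ≠ 0 := Real.pi_ne_zero
  field_simp
  ring

lemma sinh_le_exp (x : ℝ) : Real.sinh x ≤ Real.exp x := by
  rw [Real.sinh_eq]
  have h1 := Real.exp_pos (-x)
  have h2 := Real.exp_pos x
  linarith

lemma s_exp_le {s w : ℝ} (hs : 0 ≤ s) (hw : 0 < w) : s * Real.exp (-(w*s)) ≤ 1/w := by
  have h1 : w*s ≤ Real.exp (w*s) := by
    have := Real.add_one_le_exp (w*s); linarith
  rw [le_div_iff₀ hw]
  calc s * Real.exp (-(w*s)) * w = (w*s) * Real.exp (-(w*s)) := by ring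
    _ ≤ Real.exp (w*s) * Real.exp (-(w*s)) :=
        mul_le_mul_of_nonneg_right h1 (Real.exp_pos _).le
    _ = 1 := by rw [← Real.exp_add]; simp

lemma I1_nonneg {w : ℝ} (hw : 0 ≤ w) : 0 ≤ besselI 1 w := by
  apply tsum_nonneg
  intro k
  positivity

lemma I1_le_exp {w : ℝ} (hw : 0 ≤ w) : besselI 1 w ≤ Real.exp w := by
  have hab : (0:ℝ) ≤ π/2 := by positivity
  have key : ∫ θ in (0:ℝ)..(π/2), Real.sinh (w * Real.cos θ) * Real.cos θ
      ≤ ∫ θ in (0:ℝ)..(π/2), Real.exp w := by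
    apply intervalIntegral.integral_mono_on hab
    · exact (Continuous.intervalIntegrable (by continuity) _ _)
    · exact intervalIntegrable_const
    · intro θ hθ
      have hc0 : 0 ≤ Real.cos θ := Real.cos_nonneg_of_mem_Icc
        ⟨by linarith [hθ.1, Real.pi_pos], hθ.2⟩
      have hc1 : Real.cos θ ≤ 1 := Real.cos_le_one θ
      have h2 : Real.sinh (w * Real.cos θ) ≤ Real.sinh w := by
        rw [Real.sinh_le_sinh]
        nlinarith
      have h3 : 0 ≤ Real.sinh (w * Real.cos θ) := by
        rw [← Real.sinh_zero, Real.sinh_le_sinh]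
        positivity
      calc Real.sinh (w * Real.cos θ) * Real.cos θ ≤ Real.sinh w * 1 := by
            apply mul_le_mul h2 hc1 hc0 (by
              rw [← Real.sinh_zero, Real.sinh_le_sinh]; positivity)
        _ = Real.sinh w := mul_one _
        _ ≤ Real.exp w := sinh_le_exp w
  rw [rep_I1 w hw, intervalIntegral.integral_const, smul_eq_mul] at key
  have hpi : (0:ℝ) < π/2 := by positivity
  rw [sub_zero] at key
  exact le_of_mul_le_mul_left key hpi

lemma ptwise {w u : ℝ} (hw : 0 < w) (hu0 : 0 ≤ u) (hu1 : u ≤ 1) :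
    0 ≤ Real.cosh (w*u) - Real.sinh (w*u) * u ∧
      Real.cosh (w*u) - Real.sinh (w*u) * u ≤ Real.exp w / w := by
  have hid : Real.cosh (w*u) - Real.sinh (w*u) * u
      = ((1-u) * Real.exp (w*u) + (1+u) * Real.exp (-(w*u))) / 2 := by
    rw [Real.cosh_eq, Real.sinh_eq]; ring
  have hp1 := Real.exp_pos (w*u)
  have hp2 := Real.exp_pos (-(w*u))
  constructor
  · rw [hid]; nlinarith
  · rw [hid]
    have e1 : (1-u) * Real.exp (w*u) = ((1-u) * Real.exp (-(w*(1-u)))) * Real.exp w := by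
      rw [mul_assoc, ← Real.exp_add]
      congr 2
      ring
    have e2 : (1+u) * Real.exp (-(w*u)) = ((1+u) * Real.exp (-(w*(1+u)))) * Real.exp w := by
      rw [mul_assoc, ← Real.exp_add]
      congr 2
      ring
    have b1 := s_exp_le (by linarith : (0:ℝ) ≤ 1-u) hw
    have b2 := s_exp_le (by linarith : (0:ℝ) ≤ 1+u) hw
    have hew := Real.exp_pos w
    have m1 : ((1-u) * Real.exp (-(w*(1-u)))) * Real.exp w ≤ (1/w) * Real.exp w :=
      mul_le_mul_of_nonneg_right b1 hew.le
    have m2 : ((1+u) * Real.exp (-(w*(1+u)))) * Real.exp w ≤ (1/w) * Real.exp w :=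
      mul_le_mul_of_nonneg_right b2 hew.le
    have hwne : w ≠ 0 := ne_of_gt hw
    rw [e1, e2]
    calc ((1-u) * Real.exp (-(w*(1-u))) * Real.exp w
          + (1+u) * Real.exp (-(w*(1+u))) * Real.exp w) / 2
        ≤ (1/w * Real.exp w + 1/w * Real.exp w) / 2 := by linarith
      _ = Real.exp w / w := by field_simp; ring

lemma I0_sub_I1 {w : ℝ} (hw : 0 < w) :
    0 ≤ besselI 0 w - besselI 1 w ∧ besselI 0 w - besselI 1 w ≤ Real.exp w / w := by
  have hab : (0:ℝ) ≤ π/2 := by positivity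
  have hpi : (0:ℝ) < π/2 := by positivity
  have hint1 : IntervalIntegrable (fun θ => Real.cosh (w * Real.cos θ)) volume 0 (π/2) :=
    Continuous.intervalIntegrable (by continuity) _ _
  have hint2 : IntervalIntegrable (fun θ => Real.sinh (w * Real.cos θ) * Real.cos θ)
      volume 0 (π/2) := Continuous.intervalIntegrable (by continuity) _ _
  have hdiff : π/2 * (besselI 0 w - besselI 1 w)
      = ∫ θ in (0:ℝ)..(π/2),
          (Real.cosh (w * Real.cos θ) - Real.sinh (w * Real.cos θ) * Real.cos θ) := by
    rw [intervalIntegral.integral_sub hint1 hint2, rep_I0 w hw.le, rep_I1 w hw.le]; ring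
  have hcos : ∀ θ ∈ Set.Icc (0:ℝ) (π/2), 0 ≤ Real.cos θ ∧ Real.cos θ ≤ 1 := by
    intro θ hθ
    exact ⟨Real.cos_nonneg_of_mem_Icc ⟨by linarith [hθ.1, Real.pi_pos], hθ.2⟩,
      Real.cos_le_one θ⟩
  constructor
  · have h0 : 0 ≤ π/2 * (besselI 0 w - besselI 1 w) := by
      rw [hdiff]
      apply intervalIntegral.integral_nonneg hab
      intro θ hθ
      exact (ptwise hw (hcos θ hθ).1 (hcos θ hθ).2).1
    nlinarith
  · have h1 : π/2 * (besselI 0 w - besselI 1 w) ≤ π/2 * (Real.exp w / w) := by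
      rw [hdiff]
      calc ∫ θ in (0:ℝ)..(π/2),
            (Real.cosh (w * Real.cos θ) - Real.sinh (w * Real.cos θ) * Real.cos θ)
          ≤ ∫ _θ in (0:ℝ)..(π/2), (Real.exp w / w) := by
            apply intervalIntegral.integral_mono_on hab (hint1.sub hint2)
              intervalIntegrable_const
            intro θ hθ
            exact (ptwise hw (hcos θ hθ).1 (hcos θ hθ).2).2
        _ = π/2 * (Real.exp w / w) := by
            rw [intervalIntegral.integral_const, smul_eq_mul]
            ring
    exact le_of_mul_le_mul_left h1 hpi

lemma cos_lb {θ : ℝ} (h0 : 0 ≤ θ) (h1 : θ ≤ π/2) : 1 - 2*θ/π ≤ Real.cos θ := by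
  have hpi := Real.pi_pos
  have hc := (strictConcaveOn_cos_Icc).concaveOn
  have h2 : (0:ℝ) ∈ Set.Icc (-(π/2)) (π/2) := by
    constructor <;> linarith
  have h3 : (π/2) ∈ Set.Icc (-(π/2)) (π/2) := by
    constructor <;> linarith
  have ha : 0 ≤ 1 - 2*θ/π := by
    have : 2*θ/π ≤ 1 := by
      rw [div_le_one hpi]; linarith
    linarith
  have hb : 0 ≤ 2*θ/π := by positivity
  have hab : (1 - 2*θ/π) + 2*θ/π = 1 := by ring
  have key := hc.2 h2 h3 ha hb hab
  simp only [smul_eq_mul, mul_zero, zero_add, Real.cos_zero, mul_one,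
    Real.cos_pi_div_two] at key
  have harg : 2*θ/π*(π/2) = θ := by field_simp
  rw [harg] at key
  linarith

lemma I0_sub_L0 {w : ℝ} (hw : 0 < w) :
    0 ≤ besselI 0 w - struveL0 w ∧ besselI 0 w - struveL0 w ≤ 1/w := by
  have hab : (0:ℝ) ≤ π/2 := by positivity
  have hpi : (0:ℝ) < π/2 := by positivity
  have hpi0 := Real.pi_pos
  have hint1 : IntervalIntegrable (fun θ => Real.cosh (w * Real.cos θ)) volume 0 (π/2) :=
    Continuous.intervalIntegrable (by continuity) _ _
  have hint2 : IntervalIntegrable (fun θ => Real.sinh (w * Real.cos θ)) volume 0 (π/2) :=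
    Continuous.intervalIntegrable (by continuity) _ _
  have hdiff : π/2 * (besselI 0 w - struveL0 w)
      = ∫ θ in (0:ℝ)..(π/2), Real.exp (-(w * Real.cos θ)) := by
    have : ∀ θ : ℝ, Real.exp (-(w * Real.cos θ))
        = Real.cosh (w * Real.cos θ) - Real.sinh (w * Real.cos θ) := by
      intro θ; rw [Real.cosh_sub_sinh]
    simp_rw [this]
    rw [intervalIntegral.integral_sub hint1 hint2, rep_I0 w hw.le, rep_L0 w hw.le]; ring
  constructor
  · have h0 : 0 ≤ π/2 * (besselI 0 w - struveL0 w) := by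
      rw [hdiff]
      apply intervalIntegral.integral_nonneg hab
      intro θ _
      exact (Real.exp_pos _).le
    nlinarith
  · have h1 : π/2 * (besselI 0 w - struveL0 w) ≤ π/2 * (1/w) := by
      rw [hdiff]
      have hc : (2*w/π) ≠ 0 := by positivity
      calc ∫ θ in (0:ℝ)..(π/2), Real.exp (-(w * Real.cos θ))
          ≤ ∫ θ in (0:ℝ)..(π/2), Real.exp (2*w/π*θ + -w) := by
            apply intervalIntegral.integral_mono_on hab
              (Continuous.intervalIntegrable (by continuity) _ _)
              (Continuous.intervalIntegrable (by continuity) _ _)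
            intro θ hθ
            apply Real.exp_le_exp.mpr
            have hlb := cos_lb hθ.1 hθ.2
            have hmul := mul_le_mul_of_nonneg_left hlb hw.le
            have hring : w * (1 - 2*θ/π) = w - 2*w/π*θ := by ring
            rw [hring] at hmul
            linarith
        _ = (2*w/π)⁻¹ * (1 - Real.exp (-w)) := by
            rw [intervalIntegral.integral_comp_mul_add Real.exp hc (-w)]
            have e0 : 2*w/π*0 + -w = -w := by ring
            have e1 : 2*w/π*(π/2) + -w = 0 := by field_simp; ring
            rw [e0, e1, integral_exp, Real.exp_zero, smul_eq_mul]
        _ ≤ π/2 * (1/w) := by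
            have hexp : 0 < Real.exp (-w) := Real.exp_pos _
            have h2 : 1 - Real.exp (-w) ≤ 1 := by linarith
            calc (2*w/π)⁻¹ * (1 - Real.exp (-w)) ≤ (2*w/π)⁻¹ * 1 :=
                  mul_le_mul_of_nonneg_left h2 (by positivity)
              _ = π/2 * (1/w) := by rw [mul_one, inv_div]; ring
    exact le_of_mul_le_mul_left h1 hpi

private lemma abs_sub' (a b : ℝ) : |a - b| ≤ |a| + |b| := by
  rw [sub_eq_add_neg]
  exact (abs_add_le a (-b)).trans_eq (by rw [abs_neg])

set_option maxHeartbeats 1000000 in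
theorem telegraph_marginal_density_difference (c lam x : ℝ) (hc : 0 < c) (hlam : 0 < lam) :
    ∃ C > 0, ∃ T > |x| / c, ∀ t ≥ T,
      |lam * Real.exp (-(lam * t)) / (2 * c) *
            (besselI 0 (lam / c * Real.sqrt (c ^ 2 * t ^ 2 - x ^ 2)) +
              c * t / Real.sqrt (c ^ 2 * t ^ 2 - x ^ 2) *
                besselI 1 (lam / c * Real.sqrt (c ^ 2 * t ^ 2 - x ^ 2))) -
          (Real.exp (-(lam * t)) / (Real.pi * Real.sqrt (c ^ 2 * t ^ 2 - x ^ 2)) +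
            lam * Real.exp (-(lam * t)) / (2 * c) *
              (besselI 0 (lam / c * Real.sqrt (c ^ 2 * t ^ 2 - x ^ 2)) +
                struveL0 (lam / c * Real.sqrt (c ^ 2 * t ^ 2 - x ^ 2))))| ≤ C * t⁻¹ := by
  refine ⟨lam*x^2/c^3 + 3/c + 1, by positivity, max 1 (2*|x|/c + 1), ?_, ?_⟩
  · have hx : 0 ≤ |x|/c := by positivity
    have h1 : |x|/c < 2*|x|/c + 1 := by
      have : 2*|x|/c = 2*(|x|/c) := by ring
      rw [this]; linarith
    exact lt_of_lt_of_le h1 (le_max_right _ _)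
  intro t ht
  have ht1 : (1:ℝ) ≤ t := le_trans (le_max_left _ _) ht
  have ht2 : 2*|x|/c + 1 ≤ t := le_trans (le_max_right _ _) ht
  have ht0 : 0 < t := by linarith
  have hct : 2*|x| + c ≤ c*t := by
    have h := mul_le_mul_of_nonneg_left ht2 hc.le
    have h2 : c*(2*|x|/c + 1) = 2*|x| + c := by field_simp
    linarith [h2 ▸ h]
  have hxct : |x| ≤ c*t/2 := by linarith [abs_nonneg x, hc]
  have hx2 : x^2 ≤ c^2*t^2/4 := by
    have h := pow_le_pow_left₀ (abs_nonneg x) hxct 2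
    rw [sq_abs] at h
    nlinarith [h]
  have hct0 : 0 < c*t := by positivity
  have hpos : 0 < c^2*t^2 - x^2 := by nlinarith [hx2, sq_nonneg (c*t)]
  set s := Real.sqrt (c^2*t^2 - x^2) with hs_def
  have hs_pos : 0 < s := Real.sqrt_pos.mpr hpos
  have hs_sq : s^2 = c^2*t^2 - x^2 := Real.sq_sqrt hpos.le
  clear_value s
  have hs_le : s ≤ c*t := by
    nlinarith [hs_sq, sq_nonneg x, hs_pos]
  have hs_ge : c*t/2 ≤ s := by
    nlinarith [hs_sq, hx2, hs_pos]
  set w := lam/c * s with hw_def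
  have hw_pos : 0 < w := by rw [hw_def]; positivity
  have hw_le : w ≤ lam*t := by
    rw [hw_def]
    calc lam/c * s ≤ lam/c * (c*t) := by
          exact mul_le_mul_of_nonneg_left hs_le (by positivity)
      _ = lam*t := by field_simp
  have hw_ge : lam*t/2 ≤ w := by
    rw [hw_def]
    calc lam*t/2 = lam/c * (c*t/2) := by field_simp
      _ ≤ lam/c * s := mul_le_mul_of_nonneg_left hs_ge (by positivity)
  clear_value w
  -- abbreviations
  set E := Real.exp (-(lam*t)) with hE_def
  have hE_pos : 0 < E := hE_def ▸ Real.exp_pos _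
  have hE_le_one : E ≤ 1 := by
    rw [hE_def, Real.exp_le_one_iff]
    nlinarith
  have hEw : E * Real.exp w ≤ 1 := by
    rw [hE_def, ← Real.exp_add, Real.exp_le_one_iff]
    linarith
  have hwinv : 1/w ≤ 2/(lam*t) := by
    rw [div_le_div_iff₀ hw_pos (by positivity)]
    linarith
  -- the four terms
  set A := E * (lam/(2*c)) * ((c*t/s - 1) * besselI 1 w) with hA_def
  set B := E * (lam/(2*c)) * (besselI 0 w - besselI 1 w) with hB_def
  set Cc := E * (lam/(2*c)) * (besselI 0 w - struveL0 w) with hC_def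
  set D := E / (π*s) with hD_def
  clear_value A B Cc D
  have hkey : lam * E / (2 * c) * (besselI 0 w + c * t / s * besselI 1 w) -
      (D + lam * E / (2 * c) * (besselI 0 w + struveL0 w))
      = A - B + Cc - D := by
    rw [hA_def, hB_def, hC_def, hD_def]; ring
  rw [hkey]
  have htri : |A - B + Cc - D| ≤ |A| + |B| + |Cc| + |D| := by
    calc |A - B + Cc - D| ≤ |A - B + Cc| + |D| := abs_sub' _ _
      _ ≤ |A - B| + |Cc| + |D| := by linarith [abs_add_le (A - B) Cc]
      _ ≤ |A| + |B| + |Cc| + |D| := by linarith [abs_sub' A B]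
  -- bound A
  have hcts : 1 ≤ c*t/s := by
    rw [le_div_iff₀ hs_pos]; linarith
  have hA1 : c*t/s - 1 ≤ 2*x^2/(c^2*t^2) := by
    rw [div_sub_one hs_pos.ne', div_le_div_iff₀ hs_pos (by positivity)]
    have hfac : x^2 = (c*t - s)*(c*t + s) := by linear_combination hs_sq
    have h2 : 0 ≤ c*t - s := by linarith
    have h3 : c^2*t^2 ≤ 2*s*(c*t+s) := by
      have p1 : (0:ℝ) ≤ (2*s - c*t) * (c*t + s) :=
        mul_nonneg (by linarith) (by linarith)
      have p2 : (0:ℝ) ≤ (c*t) * s := mul_nonneg hct0.le hs_pos.le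
      nlinarith [p1, p2]
    calc (c*t - s)*(c^2*t^2) ≤ (c*t - s)*(2*s*(c*t+s)) :=
          mul_le_mul_of_nonneg_left h3 h2
      _ = 2*x^2*s := by rw [hfac]; ring
  have hI1b : besselI 1 w ≤ Real.exp w := I1_le_exp hw_pos.le
  have hAbound : |A| ≤ lam*x^2/c^3 * t⁻¹ := by
    have hA_nonneg : 0 ≤ A := by
      rw [hA_def]
      have h4 : 0 ≤ c*t/s - 1 := by linarith
      exact mul_nonneg (mul_nonneg hE_pos.le (by positivity))
        (mul_nonneg h4 (I1_nonneg hw_pos.le))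
    rw [abs_of_nonneg hA_nonneg, hA_def]
    have step1 : E * (lam/(2*c)) * ((c*t/s - 1) * besselI 1 w)
        ≤ (lam/(2*c)) * (2*x^2/(c^2*t^2)) * (E * Real.exp w) := by
      have hm : (c*t/s - 1) * besselI 1 w ≤ (2*x^2/(c^2*t^2)) * Real.exp w :=
        mul_le_mul hA1 hI1b (I1_nonneg hw_pos.le) (by positivity)
      calc E * (lam/(2*c)) * ((c*t/s - 1) * besselI 1 w)
          ≤ E * (lam/(2*c)) * ((2*x^2/(c^2*t^2)) * Real.exp w) :=
            mul_le_mul_of_nonneg_left hm (by positivity)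
        _ = (lam/(2*c)) * (2*x^2/(c^2*t^2)) * (E * Real.exp w) := by ring
    have step2 : (lam/(2*c)) * (2*x^2/(c^2*t^2)) * (E * Real.exp w)
        ≤ (lam/(2*c)) * (2*x^2/(c^2*t^2)) * 1 :=
      mul_le_mul_of_nonneg_left hEw (by positivity)
    have step3 : (lam/(2*c)) * (2*x^2/(c^2*t^2)) * 1 ≤ lam*x^2/c^3 * t⁻¹ := by
      rw [mul_one]
      have h5 : (lam/(2*c)) * (2*x^2/(c^2*t^2)) = lam*x^2/(c^3*t^2) := by
        field_simp
      have h6 : lam*x^2/c^3 * t⁻¹ = lam*x^2/(c^3*t) := by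
        field_simp
      rw [h5, h6, div_le_div_iff₀ (by positivity) (by positivity)]
      nlinarith [mul_nonneg (mul_nonneg (mul_nonneg hlam.le (sq_nonneg x)) (pow_pos hc 3).le) (mul_nonneg ht0.le (by linarith : (0:ℝ) ≤ t - 1))]
    linarith
  -- bound B
  have hBbound : |B| ≤ (1/c) * t⁻¹ := by
    have hb := I0_sub_I1 hw_pos
    have hB_nonneg : 0 ≤ B := by
      rw [hB_def]
      have := hb.1
      positivity
    rw [abs_of_nonneg hB_nonneg, hB_def]
    calc E * (lam/(2*c)) * (besselI 0 w - besselI 1 w)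
        ≤ E * (lam/(2*c)) * (Real.exp w / w) :=
          mul_le_mul_of_nonneg_left hb.2 (by positivity)
      _ = (lam/(2*c)) * (1/w) * (E * Real.exp w) := by ring
      _ ≤ (lam/(2*c)) * (2/(lam*t)) * 1 := by
          apply mul_le_mul (mul_le_mul_of_nonneg_left hwinv (by positivity)) hEw
            (by positivity) (by positivity)
      _ = 1/(c*t) := by field_simp
      _ = (1/c) * t⁻¹ := by ring
  -- bound Cc
  have hCbound : |Cc| ≤ (1/c) * t⁻¹ := by
    have hb := I0_sub_L0 hw_pos
    have hC_nonneg : 0 ≤ Cc := by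
      rw [hC_def]
      have := hb.1
      positivity
    rw [abs_of_nonneg hC_nonneg, hC_def]
    calc E * (lam/(2*c)) * (besselI 0 w - struveL0 w)
        ≤ E * (lam/(2*c)) * (1/w) :=
          mul_le_mul_of_nonneg_left hb.2 (by positivity)
      _ = (lam/(2*c)) * (1/w) * E := by ring
      _ ≤ (lam/(2*c)) * (2/(lam*t)) * 1 := by
          apply mul_le_mul (mul_le_mul_of_nonneg_left hwinv (by positivity)) hE_le_one
            hE_pos.le (by positivity)
      _ = 1/(c*t) := by field_simp
      _ = (1/c) * t⁻¹ := by ring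
  -- bound D
  have hDbound : |D| ≤ (1/c) * t⁻¹ := by
    have hD_nonneg : 0 ≤ D := by rw [hD_def]; positivity
    rw [abs_of_nonneg hD_nonneg, hD_def]
    have hpis : c*t ≤ π*s := by
      nlinarith [Real.pi_gt_three, hs_ge, hs_pos]
    have hps : 0 < π*s := mul_pos Real.pi_pos hs_pos
    calc E / (π*s) ≤ 1 / (π*s) := (div_le_div_iff_of_pos_right hps).mpr hE_le_one
      _ ≤ 1 / (c*t) := by
          apply one_div_le_one_div_of_le hct0 hpis
      _ = (1/c) * t⁻¹ := by ring
  have ht_inv : 0 ≤ t⁻¹ := by positivity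
  calc |A - B + Cc - D| ≤ |A| + |B| + |Cc| + |D| := htri
    _ ≤ lam*x^2/c^3 * t⁻¹ + (1/c) * t⁻¹ + (1/c) * t⁻¹ + (1/c) * t⁻¹ := by
        linarith
    _ ≤ (lam*x^2/c^3 + 3/c + 1) * t⁻¹ := by
        have expand : (lam*x^2/c^3 + 3/c + 1) * t⁻¹
            = lam*x^2/c^3 * t⁻¹ + (1/c)*t⁻¹ + (1/c)*t⁻¹ + (1/c)*t⁻¹ + t⁻¹ := by ring
        rw [expand]
        linarith
end

section
/- For every real z, the series Σ_{k=0}^∞ ((−1)^k/(2k+1))·I_{2k+1}(z) converges and L₀(z) = (4/π)·Σ_{k=0}^∞ ((−1)^k/(2k+1))·I_{2k+1}(z), where L₀ is the modified Struve function of order zero and I_{2k+1} are the modified Bessel functions of the first kind of odd integer orders. -/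
open Real Filter Topology

open Finset in
lemma gammaVal (n : ℕ) :
    Real.Gamma ((n : ℝ) + 3 / 2) =
      ((2 * n + 1).factorial : ℝ) * Real.sqrt π / (4 ^ n * (n.factorial : ℝ) * 2) := by
  induction n with
  | zero =>
      have h : ((0 : ℕ) : ℝ) + 3 / 2 = 1 / 2 + 1 := by norm_num
      rw [h, Real.Gamma_add_one (by norm_num), Real.Gamma_one_half_eq]
      simp [Nat.factorial]
      ring
  | succ n ih =>
      have h : ((n + 1 : ℕ) : ℝ) + 3 / 2 = ((n : ℝ) + 3 / 2) + 1 := by push_cast; ring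
      rw [h, Real.Gamma_add_one (by positivity), ih]
      have e1 : (((2 * (n + 1) + 1).factorial : ℕ) : ℝ)
          = ((2*n+3 : ℝ)) * ((2*n+2 : ℝ)) * (((2*n+1).factorial : ℕ) : ℝ) := by
        rw [show 2*(n+1)+1 = (2*n+1)+1+1 by ring]
        push_cast [Nat.factorial_succ]
        ring
      have e2 : (((n+1).factorial : ℕ) : ℝ) = ((n:ℝ)+1) * ((n.factorial : ℕ) : ℝ) := by
        push_cast [Nat.factorial_succ]
        ring
      rw [e1, e2]
      have hf : ((n.factorial : ℕ) : ℝ) ≠ 0 := Nat.cast_ne_zero.mpr n.factorial_ne_zero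
      field_simp
      ring

lemma coeffVal (n : ℕ) :
    (16:ℝ)^n * ((n.factorial : ℝ))^2 / (((2*n+1).factorial : ℝ))^2
      = π / 4 * (1 / (Real.Gamma ((n:ℝ) + 3/2)) ^ 2) := by
  rw [gammaVal]
  have hf : ((n.factorial : ℝ)) ≠ 0 := Nat.cast_ne_zero.mpr n.factorial_ne_zero
  have hf2 : (((2*n+1).factorial : ℝ)) ≠ 0 := Nat.cast_ne_zero.mpr (2*n+1).factorial_ne_zero
  have hpi : Real.sqrt π ≠ 0 := by positivity
  rw [div_pow, mul_pow, Real.sq_sqrt pi_pos.le]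
  have h16 : (16:ℝ)^n = (4^n)^2 := by rw [show (16:ℝ) = 4*4 by norm_num, mul_pow, sq]
  rw [h16]
  field_simp
  ring

open Finset in
lemma keyIdentity (n : ℕ) :
    ∑ k ∈ Finset.range (n+1),
        ((-1:ℝ)^k / (2*(k:ℝ)+1) * (1 / (((n-k).factorial : ℝ) * ((n+k+1).factorial : ℝ))))
      = 16^n * ((n.factorial : ℝ))^2 / (((2*n+1).factorial : ℝ))^2 := by
  induction n with
  | zero => simp [Nat.factorial]
  | succ n ih =>
    set T : ℕ → ℕ → ℝ := fun m k =>
      (-1:ℝ)^k / (2*(k:ℝ)+1) * (1 / (((m-k).factorial : ℝ) * ((m+k+1).factorial : ℝ))) with hT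
    set G : ℕ → ℝ := fun k => if k ≤ n+1 then
      (-1:ℝ)^(k+1) * (k:ℝ) / ((2*(n:ℝ)+3)^2 * ((n:ℝ)+1)
        * ((n+1-k).factorial : ℝ) * ((n+k+1).factorial : ℝ)) else 0 with hG
    set D : ℕ → ℝ := fun k => if k ≤ n then (4 / (2*(n:ℝ)+3)^2) * T n k else 0 with hD
    have point : ∀ k ∈ Finset.range (n+2), T (n+1) k - D k = G (k+1) - G k := by
      intro k hk
      rcases Nat.lt_or_ge k (n+1) with hkn | hkn
      · -- k ≤ n
        have hkn' : k ≤ n := Nat.lt_succ_iff.mp hkn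
        obtain ⟨m, rfl⟩ : ∃ m, n = k + m := ⟨n - k, (Nat.add_sub_cancel' hkn').symm⟩
        simp only [hT, hG, hD, if_pos (by omega : k ≤ k + m), if_pos (by omega : k ≤ k + m + 1),
          if_pos (by omega : k + 1 ≤ k + m + 1)]
        rw [show k + m + 1 - k = m + 1 from by omega, show k + m - k = m from by omega,
          show k + m + 1 - (k + 1) = m from by omega,
          show k + m + 1 + k + 1 = (k + m + k + 1) + 1 from by omega,
          show k + m + (k + 1) + 1 = (k + m + k + 1) + 1 from by omega,
          Nat.factorial_succ, Nat.factorial_succ]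
        have hx : (((m.factorial : ℕ)) : ℝ) ≠ 0 := Nat.cast_ne_zero.mpr m.factorial_ne_zero
        have hy : ((((k + m + k + 1).factorial : ℕ)) : ℝ) ≠ 0 :=
          Nat.cast_ne_zero.mpr (k + m + k + 1).factorial_ne_zero
        have h1 : (2*(k:ℝ)+1) ≠ 0 := by positivity
        have h2 : ((2*((k:ℝ)+(m:ℝ))+3)^2) ≠ 0 := by positivity
        have h3 : ((k:ℝ)+(m:ℝ)+1) ≠ 0 := by positivity
        push_cast
        field_simp
        ring
      · -- k = n+1
        have hk' : k = n + 1 := by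
          simp only [Finset.mem_range] at hk; omega
        subst hk'
        simp only [hT, hG, hD, if_neg (by omega : ¬ (n+1 ≤ n)),
          if_pos (le_refl (n+1)), if_neg (by omega : ¬ (n+1+1 ≤ n+1))]
        rw [show n + 1 - (n + 1) = 0 from by omega,
          show n + 1 + (n + 1) + 1 = (n + (n+1) + 1) + 1 from by omega,
          Nat.factorial_succ, Nat.factorial_zero]
        have hy : ((((n + (n+1) + 1).factorial : ℕ)) : ℝ) ≠ 0 :=
          Nat.cast_ne_zero.mpr (n + (n+1) + 1).factorial_ne_zero
        have h1 : (2*((n:ℝ)+1)+1) ≠ 0 := by positivity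
        have h2 : ((2*(n:ℝ)+3)^2) ≠ 0 := by positivity
        have h3 : ((n:ℝ)+1) ≠ 0 := by positivity
        push_cast
        field_simp
        ring
    have tele : ∑ k ∈ Finset.range (n+2), (G (k+1) - G k) = 0 := by
      rw [Finset.sum_range_sub]
      simp [hG]
    have hsum : ∑ k ∈ Finset.range (n+2), T (n+1) k = ∑ k ∈ Finset.range (n+2), D k := by
      have := Finset.sum_congr rfl point
      rw [Finset.sum_sub_distrib] at this
      rw [tele] at this
      linarith [this]
    have hD2 : ∑ k ∈ Finset.range (n+2), D k
        = (4 / (2*(n:ℝ)+3)^2) * ∑ k ∈ Finset.range (n+1), T n k := by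
      rw [Finset.sum_range_succ, hD]
      simp only [if_neg (by omega : ¬ (n+1 ≤ n)), add_zero]
      rw [Finset.mul_sum]
      refine Finset.sum_congr rfl fun k hk => ?_
      rw [if_pos (Nat.lt_succ_iff.mp (Finset.mem_range.mp hk))]
    rw [hsum, hD2, ih]
    have e1 : (((2 * (n + 1) + 1).factorial : ℕ) : ℝ)
        = ((2*(n:ℝ)+3)) * ((2*(n:ℝ)+2)) * (((2*n+1).factorial : ℕ) : ℝ) := by
      rw [show 2*(n+1)+1 = (2*n+1)+1+1 by ring]
      push_cast [Nat.factorial_succ]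
      ring
    have e2 : (((n+1).factorial : ℕ) : ℝ) = ((n:ℝ)+1) * ((n.factorial : ℕ) : ℝ) := by
      push_cast [Nat.factorial_succ]; ring
    rw [e1, e2]
    have hf : ((n.factorial : ℕ) : ℝ) ≠ 0 := Nat.cast_ne_zero.mpr n.factorial_ne_zero
    have hf2 : (((2*n+1).factorial : ℕ) : ℝ) ≠ 0 := Nat.cast_ne_zero.mpr (2*n+1).factorial_ne_zero
    have h2 : ((2*(n:ℝ)+3)) ≠ 0 := by positivity
    field_simp
    ring

open Finset in
theorem struveL0_eq_bessel_series (z : ℝ) :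
    HasSum (fun k : ℕ => (-1 : ℝ) ^ k / (2 * (k : ℝ) + 1) * besselI (2 * k + 1) z)
      (Real.pi / 4 * struveL0 z) := by
  set f : ℕ × ℕ → ℝ := fun p =>
    (-1 : ℝ) ^ p.1 / (2 * (p.1 : ℝ) + 1) *
      ((1 / (Nat.factorial p.2 * Nat.factorial (p.2 + (2 * p.1 + 1)) : ℝ))
        * (z / 2) ^ (2 * p.2 + (2 * p.1 + 1))) with hf_def
  -- summability
  have hf : Summable f := by
    apply Summable.of_abs
    have hmaj : Summable (fun p : ℕ × ℕ =>
        ((|z/2|^2)^p.1 / (p.1.factorial : ℝ)) * (|z/2| * ((|z/2|^2)^p.2 / (p.2.factorial : ℝ)))) := by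
      apply Summable.mul_of_nonneg (Real.summable_pow_div_factorial _)
        ((Real.summable_pow_div_factorial _).mul_left |z/2|)
      · intro k; positivity
      · intro j; positivity
    apply hmaj.of_nonneg_of_le (fun p => abs_nonneg _)
    intro p
    obtain ⟨k, j⟩ := p
    have ec : |(-1:ℝ)^k / (2*(k:ℝ)+1)| = 1 / (2*(k:ℝ)+1) := by
      rw [abs_div, abs_pow, abs_neg, abs_one, one_pow,
        abs_of_pos (by positivity : (0:ℝ) < 2*(k:ℝ)+1)]
    have e1 : |f (k, j)| = (1 / (2*(k:ℝ)+1)) *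
        ((1 / ((j.factorial : ℝ) * ((j + (2*k+1)).factorial : ℝ))) * |z/2| ^ (2*j + (2*k+1))) := by
      simp only [hf_def]
      rw [abs_mul, abs_mul, abs_pow, ec, abs_of_pos (by positivity : (0:ℝ) < 1 /
          ((j.factorial : ℝ) * ((j + (2*k+1)).factorial : ℝ))), abs_div]
    have e2 : ((|z/2|^2)^k / (k.factorial : ℝ)) * (|z/2| * ((|z/2|^2)^j / (j.factorial : ℝ)))
        = 1 * ((1 / ((j.factorial : ℝ) * ((k).factorial : ℝ))) * |z/2| ^ (2*j + (2*k+1))) := by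
      have hz : |z/2| ^ (2*j + (2*k+1)) = ((|z/2|^2)^j) * ((|z/2|^2)^k) * |z/2| := by
        rw [pow_add, pow_succ, pow_mul, pow_mul]; ring
      rw [hz]
      have h1 : ((j.factorial : ℝ)) ≠ 0 := Nat.cast_ne_zero.mpr j.factorial_ne_zero
      have h2 : ((k.factorial : ℝ)) ≠ 0 := Nat.cast_ne_zero.mpr k.factorial_ne_zero
      field_simp
    show |f (k, j)| ≤ (|z/2|^2)^k / ((k.factorial : ℝ)) * (|z/2| * ((|z/2|^2)^j / ((j.factorial : ℝ))))
    rw [e1, e2]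
    have hP : (0:ℝ) ≤ |z/2| ^ (2*j + (2*k+1)) := by positivity
    have hA : (1:ℝ) / ((j.factorial : ℝ) * ((j + (2*k+1)).factorial : ℝ))
        ≤ 1 / ((j.factorial : ℝ) * ((k).factorial : ℝ)) := by
      apply one_div_le_one_div_of_le (by positivity)
      have hle : (k.factorial : ℝ) ≤ ((j + (2*k+1)).factorial : ℝ) :=
        Nat.cast_le.mpr (Nat.factorial_le (by omega : k ≤ j + (2*k+1)))
      have hj : (0:ℝ) ≤ (j.factorial : ℝ) := by positivity
      nlinarith
    have h1k : (1:ℝ) / (2*(k:ℝ)+1) ≤ 1 := by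
      rw [div_le_one (by positivity)]
      have : (0:ℝ) ≤ (k:ℝ) := Nat.cast_nonneg k
      linarith
    exact mul_le_mul h1k (mul_le_mul_of_nonneg_right hA hP) (by positivity) (by norm_num)
  -- fiberwise: outer series
  have hfiber : ∀ k : ℕ, HasSum (fun j => f (k, j))
      ((-1 : ℝ) ^ k / (2 * (k : ℝ) + 1) * besselI (2 * k + 1) z) := by
    intro k
    set c : ℝ := (-1 : ℝ) ^ k / (2 * (k : ℝ) + 1) with hc_def
    have hc : c ≠ 0 := by
      apply div_ne_zero
      · exact pow_ne_zero _ (by norm_num)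
      · positivity
    set u : ℕ → ℝ := fun j =>
      (1 / (Nat.factorial j * Nat.factorial (j + (2 * k + 1)) : ℝ)) * (z / 2) ^ (2 * j + (2 * k + 1))
      with hu_def
    have hu : Summable u := by
      have h := (hf.prod_factor k).div_const c
      have : (fun j => f (k, j) / c) = u := by
        funext j
        simp only [hf_def, hu_def, hc_def]
        rw [mul_comm, mul_div_assoc, div_self hc, mul_one]
      rwa [this] at h
    exact hu.hasSum.mul_left c
  have houter : HasSum (fun k : ℕ => (-1 : ℝ) ^ k / (2 * (k : ℝ) + 1) * besselI (2 * k + 1) z)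
      (∑' p, f p) := hf.hasSum.prod_fiberwise hfiber
  -- now identify the sum
  suffices hS : ∑' p, f p = Real.pi / 4 * struveL0 z by rwa [hS] at houter
  -- reindex along diagonals
  set i : ℕ × ℕ → ℕ × ℕ := fun p => (p.2 + p.1, p.1) with hi_def
  have hi : Function.Injective i := by
    intro p q h
    simp only [hi_def, Prod.mk.injEq] at h
    obtain ⟨h1, h2⟩ := h
    exact Prod.ext (by omega) (by omega)
  set g2 : ℕ × ℕ → ℝ := fun q => if q.2 ≤ q.1 then f (q.2, q.1 - q.2) else 0 with hg2_def
  have h0 : ∀ x ∉ Set.range i, g2 x = 0 := by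
    intro x hx
    simp only [hg2_def]
    rw [if_neg]
    intro hle
    exact hx ⟨(x.2, x.1 - x.2), by simp only [hi_def]; exact Prod.ext (by omega) rfl⟩
  have hcomp : g2 ∘ i = f := by
    funext p
    simp only [hg2_def, hi_def, Function.comp_apply]
    rw [if_pos (by omega : p.1 ≤ p.2 + p.1), show p.2 + p.1 - p.1 = p.2 from by omega]
  have hg2sum : HasSum g2 (∑' p, f p) := by
    rw [← Function.Injective.hasSum_iff hi h0, hcomp]
    exact hf.hasSum
  -- fiberwise over diagonals
  have hdiag : ∀ n : ℕ, HasSum (fun k => g2 (n, k))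
      (π / 4 * ((1 / (Real.Gamma ((n : ℝ) + 3 / 2)) ^ 2) * (z / 2) ^ (2 * n + 1))) := by
    intro n
    have hfin : HasSum (fun k => g2 (n, k)) (∑ k ∈ Finset.range (n+1), g2 (n, k)) := by
      apply hasSum_sum_of_ne_finset_zero
      intro k hk
      simp only [hg2_def]
      rw [if_neg (by simp only [Finset.mem_range] at hk; omega)]
    have hval : ∑ k ∈ Finset.range (n+1), g2 (n, k)
        = π / 4 * ((1 / (Real.Gamma ((n : ℝ) + 3 / 2)) ^ 2) * (z / 2) ^ (2 * n + 1)) := by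
      have e3 : ∀ k ∈ Finset.range (n+1), g2 (n, k)
          = ((-1:ℝ)^k / (2*(k:ℝ)+1) * (1 / (((n-k).factorial : ℝ) * ((n+k+1).factorial : ℝ))))
            * (z / 2) ^ (2 * n + 1) := by
        intro k hk
        have hkn : k ≤ n := Nat.lt_succ_iff.mp (Finset.mem_range.mp hk)
        simp only [hg2_def, hf_def]
        rw [if_pos hkn, show n - k + (2*k+1) = n + k + 1 from by omega,
          show 2 * (n-k) + (2*k+1) = 2*n+1 from by omega]
        ring
      rw [Finset.sum_congr rfl e3, ← Finset.sum_mul, keyIdentity, coeffVal]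
      ring
    rwa [hval] at hfin
  have hfinal : HasSum
      (fun n : ℕ => π / 4 * ((1 / (Real.Gamma ((n : ℝ) + 3 / 2)) ^ 2) * (z / 2) ^ (2 * n + 1)))
      (∑' p, f p) := hg2sum.prod_fiberwise hdiag
  rw [← hfinal.tsum_eq, tsum_mul_left, struveL0]
end

section
/- Fix constants c > 0 and λ > 0 and a point x ∈ ℝ. For t > |x|/c, let f(x,t) = (λ·e^{-λ t}/(2c))·[ I₀((λ/c)·√(c²t² − x²)) + (ct/√(c²t² − x²))·I₁((λ/c)·√(c²t² − x²)) ] be the absolutely continuous part of the transition density of the Goldstein-Kac telegraph process. Then f(x,t) → 0 as t → ∞. -/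
open Real Filter Topology

open Nat

set_option maxHeartbeats 1000000

lemma centralBinom_sq_mul_le (k : ℕ) : (Nat.centralBinom k)^2 * (2*k+1) ≤ 16^k := by
  induction k with
  | zero => simp [Nat.centralBinom]
  | succ k ih =>
    have h := Nat.succ_mul_centralBinom_succ k
    have key : (k+1)^2 * ((Nat.centralBinom (k+1))^2 * (2*(k+1)+1)) ≤ (k+1)^2 * 16^(k+1) := by
      calc (k+1)^2 * ((Nat.centralBinom (k+1))^2 * (2*(k+1)+1))
          = ((k+1) * Nat.centralBinom (k+1))^2 * (2*k+3) := by ring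
        _ = (2 * (2*k+1) * Nat.centralBinom k)^2 * (2*k+3) := by rw [h]
        _ = 4 * ((2*k+1) * (2*k+3)) * ((Nat.centralBinom k)^2 * (2*k+1)) := by ring
        _ ≤ 4 * ((2*k+2) * (2*k+2)) * 16^k := by
            apply Nat.mul_le_mul
            · apply Nat.mul_le_mul_left
              nlinarith
            · exact ih
        _ = (k+1)^2 * 16^(k+1) := by ring
    exact Nat.le_of_mul_le_mul_left key (by positivity)

lemma centralBinom_mul_sqrt_le (k : ℕ) :
    (Nat.centralBinom k : ℝ) * Real.sqrt (2*k+1) ≤ 4^k := by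
  have h0 : (0:ℝ) ≤ (Nat.centralBinom k : ℝ) * Real.sqrt (2*k+1) := by positivity
  have hsq : ((Nat.centralBinom k : ℝ) * Real.sqrt (2*k+1))^2 ≤ ((4:ℝ)^k)^2 := by
    have : ((Nat.centralBinom k : ℝ) * Real.sqrt (2*k+1))^2
        = (Nat.centralBinom k : ℝ)^2 * (2*k+1) := by
      rw [mul_pow, Real.sq_sqrt (by positivity)]
    rw [this]
    have := centralBinom_sq_mul_le k
    have hc : ((Nat.centralBinom k)^2 * (2*k+1) : ℝ) ≤ (16:ℝ)^k := by exact_mod_cast this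
    calc (Nat.centralBinom k : ℝ)^2 * (2*k+1) ≤ (16:ℝ)^k := by push_cast at hc ⊢; linarith
      _ = ((4:ℝ)^k)^2 := by rw [← pow_mul, mul_comm k 2, pow_mul]; norm_num
  nlinarith [hsq, h0, pow_pos (by norm_num : (0:ℝ) < 4) k]

lemma two_mul_choose (k : ℕ) : 2 * (2*k+1).choose k = Nat.centralBinom (k+1) := by
  have h1 : (2*k+1).choose (k+1) = (2*k+1).choose k := by
    rw [← Nat.choose_symm (by omega)]
    congr 1
    omega
  have h2 : Nat.centralBinom (k+1) = (2*k+2).choose (k+1) := by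
    unfold Nat.centralBinom
    rw [show 2*(k+1) = 2*k+2 by ring]
  rw [h2, show 2*k+2 = (2*k+1)+1 from rfl, Nat.choose_succ_succ']
  omega

lemma factorial_even (k : ℕ) : (2*k)! = Nat.centralBinom k * (k ! * k !) := by
  have := Nat.choose_mul_factorial_mul_factorial (show k ≤ 2*k by omega)
  unfold Nat.centralBinom
  rw [show 2*k - k = k by omega] at this
  rw [← this]; ring

lemma factorial_odd (k : ℕ) : (2*k+1)! = (2*k+1).choose k * (k ! * (k+1)!) := by
  have := Nat.choose_mul_factorial_mul_factorial (show k ≤ 2*k+1 by omega)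
  rw [show 2*k+1 - k = k+1 by omega] at this
  rw [← this]; ring

lemma key_coeff (n k : ℕ) (hn : n ≤ 1) :
    Real.sqrt (2*k+1) * (2*k+n)! ≤ 2^(2*k+n) * ((k ! : ℝ) * (k+n)!) := by
  interval_cases n
  · -- n = 0
    have hf : ((2*k)! : ℝ) = (Nat.centralBinom k : ℝ) * ((k ! : ℝ) * (k ! : ℝ)) := by
      exact_mod_cast congrArg (Nat.cast : ℕ → ℝ) (factorial_even k)
    have hcb := centralBinom_mul_sqrt_le k
    have hfac : (0:ℝ) ≤ (k ! : ℝ) * (k ! : ℝ) := by positivity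
    calc Real.sqrt (2*k+1) * ((2*k+0)! : ℝ)
        = ((Nat.centralBinom k : ℝ) * Real.sqrt (2*k+1)) * ((k ! : ℝ) * (k ! : ℝ)) := by
          rw [show 2*k+0 = 2*k from rfl, hf]; ring
      _ ≤ 4^k * ((k ! : ℝ) * (k ! : ℝ)) := by
          apply mul_le_mul_of_nonneg_right hcb hfac
      _ = 2^(2*k+0) * ((k ! : ℝ) * (k+0)! ) := by
          rw [show (4:ℝ) = 2^2 by norm_num, ← pow_mul]
          norm_num
  · -- n = 1
    have hf : ((2*k+1)! : ℝ) = ((2*k+1).choose k : ℝ) * ((k ! : ℝ) * ((k+1)! : ℝ)) := by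
      exact_mod_cast congrArg (Nat.cast : ℕ → ℝ) (factorial_odd k)
    have hcb := centralBinom_mul_sqrt_le (k+1)
    push_cast at hcb
    have h2c : (2:ℝ) * ((2*k+1).choose k : ℝ) = (Nat.centralBinom (k+1) : ℝ) := by
      exact_mod_cast congrArg (Nat.cast : ℕ → ℝ) (two_mul_choose k)
    have hmono : Real.sqrt (2*k+1) ≤ Real.sqrt (2*(k+1)+1) := by
      apply Real.sqrt_le_sqrt; push_cast; linarith
    have hfac : (0:ℝ) ≤ (k ! : ℝ) * ((k+1)! : ℝ) := by positivity
    have hchoose : (0:ℝ) ≤ ((2*k+1).choose k : ℝ) := by positivity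
    have step : ((2*k+1).choose k : ℝ) * Real.sqrt (2*k+1) ≤ 2^(2*k+1) := by
      have : (2:ℝ) * (((2*k+1).choose k : ℝ) * Real.sqrt (2*k+1)) ≤ 2 * 2^(2*k+1) := by
        calc (2:ℝ) * (((2*k+1).choose k : ℝ) * Real.sqrt (2*k+1))
            = (Nat.centralBinom (k+1) : ℝ) * Real.sqrt (2*k+1) := by rw [← h2c]; ring
          _ ≤ (Nat.centralBinom (k+1) : ℝ) * Real.sqrt (2*(k+1)+1) := by
              apply mul_le_mul_of_nonneg_left hmono (by positivity)
          _ ≤ 4^(k+1) := hcb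
          _ = 2 * 2^(2*k+1) := by
              rw [show (4:ℝ) = 2^2 by norm_num, ← pow_mul]
              rw [show 2*(k+1) = (2*k+1)+1 by ring, pow_succ]
              ring
      linarith
    calc Real.sqrt (2*k+1) * ((2*k+1)! : ℝ)
        = (((2*k+1).choose k : ℝ) * Real.sqrt (2*k+1)) * ((k ! : ℝ) * ((k+1)! : ℝ)) := by
          rw [hf]; ring
      _ ≤ 2^(2*k+1) * ((k ! : ℝ) * ((k+1)! : ℝ)) := mul_le_mul_of_nonneg_right step hfac

lemma term_le (n k : ℕ) (hn : n ≤ 1) (z : ℝ) (hz : 0 ≤ z) :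
    (1 / (k ! * (k+n)! : ℝ)) * (z/2)^(2*k+n)
      ≤ (1 / Real.sqrt (2*k+1)) * (z^(2*k+n) / (2*k+n)!) := by
  have hzp : (0:ℝ) ≤ z^(2*k+n) := by positivity
  have hk := key_coeff n k hn
  have lhs_eq : (1 / (k ! * (k+n)! : ℝ)) * (z/2)^(2*k+n)
      = z^(2*k+n) * (1/(((k !:ℝ) * (k+n)!) * 2^(2*k+n))) := by
    rw [div_pow]; push_cast; ring
  have rhs_eq : (1 / Real.sqrt (2*k+1)) * (z^(2*k+n) / (2*k+n)!)
      = z^(2*k+n) * (1/(Real.sqrt (2*k+1) * (2*k+n)!)) := by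
    rw [one_div, one_div, mul_inv]; ring
  rw [lhs_eq, rhs_eq]
  apply mul_le_mul_of_nonneg_left _ hzp
  apply one_div_le_one_div_of_le (by positivity)
  linarith [hk]

lemma exp_tsum (z : ℝ) : Real.exp z = ∑' m : ℕ, z^m / m ! := by
  rw [Real.exp_eq_exp_ℝ, NormedSpace.exp_eq_tsum_div]

lemma summable_bessel (n : ℕ) (z : ℝ) (hz : 0 ≤ z) :
    Summable (fun k : ℕ => (1 / (k ! * (k+n)! : ℝ)) * (z/2)^(2*k+n)) := by
  have hg : Summable (fun k : ℕ => (z/2)^n * (((z/2)^2)^k / k !)) :=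
    (Real.summable_pow_div_factorial ((z/2)^2)).mul_left _
  have hle : ∀ k : ℕ, (1 / (k ! * (k+n)! : ℝ)) * (z/2)^(2*k+n)
      ≤ (z/2)^n * (((z/2)^2)^k / k !) := by
    intro k
    have hkn : (1:ℝ) ≤ ((k+n)! : ℝ) := by
      exact_mod_cast Nat.one_le_iff_ne_zero.2 (Nat.factorial_ne_zero (k+n))
    have hkp : (0:ℝ) < (k ! : ℝ) := by positivity
    have h1 : (1 / (k ! * (k+n)! : ℝ)) ≤ 1 / (k ! : ℝ) := by
      apply one_div_le_one_div_of_le hkp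
      nlinarith
    calc (1 / (k ! * (k+n)! : ℝ)) * (z/2)^(2*k+n)
        ≤ (1 / (k ! : ℝ)) * (z/2)^(2*k+n) :=
          mul_le_mul_of_nonneg_right h1 (by positivity)
      _ = (z/2)^n * (((z/2)^2)^k / k !) := by
          rw [← pow_mul, pow_add, pow_mul]; ring
  exact Summable.of_nonneg_of_le (fun k => by positivity) hle hg

lemma summable_h (n : ℕ) (z : ℝ) (hz : 0 ≤ z) :
    Summable (fun k : ℕ => z^(2*k+n) / ((2*k+n)! : ℝ)) := by
  have hg : Summable (fun k : ℕ => z^n * ((z^2)^k / k !)) :=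
    (Real.summable_pow_div_factorial (z^2)).mul_left _
  have hle : ∀ k : ℕ, z^(2*k+n) / ((2*k+n)! : ℝ) ≤ z^n * ((z^2)^k / k !) := by
    intro k
    have h1 : (k ! : ℝ) ≤ ((2*k+n)! : ℝ) := by
      exact_mod_cast Nat.factorial_le (by omega)
    calc z^(2*k+n) / ((2*k+n)! : ℝ) ≤ z^(2*k+n) / (k ! : ℝ) := by
          apply div_le_div_of_nonneg_left (by positivity) (by positivity) h1
      _ = z^n * ((z^2)^k / k !) := by rw [← pow_mul, pow_add, pow_mul]; ring
  exact Summable.of_nonneg_of_le (fun k => by positivity) hle hg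

lemma tsum_h_le_exp (n : ℕ) (z : ℝ) (hz : 0 ≤ z) :
    ∑' k : ℕ, z^(2*k+n) / ((2*k+n)! : ℝ) ≤ Real.exp z := by
  rw [exp_tsum]
  apply Summable.tsum_le_tsum_of_inj (fun k => 2*k+n)
  · intro a b hab
    simp only at hab
    omega
  · intro m _; positivity
  · intro k; exact le_refl _
  · exact summable_h n z hz
  · exact Real.summable_pow_div_factorial z

lemma besselI_nonneg (n : ℕ) (z : ℝ) (hz : 0 ≤ z) : 0 ≤ besselI n z := by
  apply tsum_nonneg
  intro k
  positivity

lemma besselI_le (n : ℕ) (hn : n ≤ 1) (z : ℝ) (hz : 0 ≤ z) (K : ℕ) :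
    besselI n z ≤ (∑ k ∈ Finset.range K, (1 / (k ! * (k+n)! : ℝ)) * (z/2)^(2*k+n))
      + Real.exp z / Real.sqrt (2*K+1) := by
  have hs := summable_bessel n z hz
  rw [besselI, ← Summable.sum_add_tsum_nat_add K hs]
  apply add_le_add_right
  have hsh : Summable (fun k : ℕ => z^(2*(k+K)+n) / ((2*(k+K)+n)! : ℝ)) := by
    have := (summable_nat_add_iff (f := fun k : ℕ => z^(2*k+n) / ((2*k+n)! : ℝ)) K).2
      (summable_h n z hz)
    exact this
  have hs2 : Summable (fun k : ℕ => (1 / ((k+K)! * ((k+K)+n)! : ℝ)) * (z/2)^(2*(k+K)+n)) := by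
    have := (summable_nat_add_iff
      (f := fun k : ℕ => (1 / (k ! * (k+n)! : ℝ)) * (z/2)^(2*k+n)) K).2 hs
    exact this
  have hle : ∀ k : ℕ, (1 / ((k+K)! * ((k+K)+n)! : ℝ)) * (z/2)^(2*(k+K)+n)
      ≤ (1 / Real.sqrt (2*K+1)) * (z^(2*(k+K)+n) / ((2*(k+K)+n)! : ℝ)) := by
    intro k
    calc (1 / ((k+K)! * ((k+K)+n)! : ℝ)) * (z/2)^(2*(k+K)+n)
        ≤ (1 / Real.sqrt (2*((k+K):ℕ)+1)) * (z^(2*(k+K)+n) / ((2*(k+K)+n)! : ℝ)) :=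
          term_le n (k+K) hn z hz
      _ ≤ (1 / Real.sqrt (2*K+1)) * (z^(2*(k+K)+n) / ((2*(k+K)+n)! : ℝ)) := by
          apply mul_le_mul_of_nonneg_right _ (by positivity)
          apply one_div_le_one_div_of_le (by positivity)
          apply Real.sqrt_le_sqrt
          push_cast; linarith [Nat.cast_nonneg (α := ℝ) k]
  have step1 : ∑' k : ℕ, (1 / ((k+K)! * ((k+K)+n)! : ℝ)) * (z/2)^(2*(k+K)+n)
      ≤ ∑' k : ℕ, (1 / Real.sqrt (2*K+1)) * (z^(2*(k+K)+n) / ((2*(k+K)+n)! : ℝ)) :=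
    Summable.tsum_le_tsum hle hs2 (hsh.mul_left _)
  have step2 : ∑' k : ℕ, (1 / Real.sqrt (2*K+1)) * (z^(2*(k+K)+n) / ((2*(k+K)+n)! : ℝ))
      ≤ Real.exp z / Real.sqrt (2*K+1) := by
    rw [tsum_mul_left]
    have hrw : Real.exp z / Real.sqrt (2*K+1) = (1/Real.sqrt (2*K+1)) * Real.exp z := by
      ring
    rw [hrw]
    apply mul_le_mul_of_nonneg_left _ (by positivity)
    have tail_le : ∑' k : ℕ, z^(2*(k+K)+n) / ((2*(k+K)+n)! : ℝ)
        ≤ ∑' k : ℕ, z^(2*k+n) / ((2*k+n)! : ℝ) := by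
      rw [← Summable.sum_add_tsum_nat_add K (summable_h n z hz)]
      have : (0:ℝ) ≤ ∑ k ∈ Finset.range K, z^(2*k+n) / ((2*k+n)! : ℝ) := by
        apply Finset.sum_nonneg; intro k _; positivity
      linarith
    exact le_trans tail_le (tsum_h_le_exp n z hz)
  calc ∑' k : ℕ, (1 / ((k+K)! * ((k+K)+n)! : ℝ)) * (z/2)^(2*(k+K)+n)
      ≤ _ := step1
    _ ≤ _ := step2

lemma tendsto_exp_neg_mul_besselI (n : ℕ) (hn : n ≤ 1) :
    Tendsto (fun z : ℝ => Real.exp (-z) * besselI n z) atTop (nhds 0) := by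
  rw [NormedAddCommGroup.tendsto_nhds_zero]
  intro ε hε
  obtain ⟨K, hK⟩ := exists_nat_gt ((2/ε)^2)
  have hsqrt : 1 / Real.sqrt (2*K+1) < ε/2 := by
    have h1 : (2/ε) < Real.sqrt (2*K+1) := by
      rw [show (2*(K:ℝ)+1) = ((2*K+1 : ℕ) : ℝ) by push_cast; ring]
      rw [← Real.sqrt_sq (le_of_lt (div_pos two_pos hε))]
      apply Real.sqrt_lt_sqrt (by positivity)
      push_cast; nlinarith
    have h2 : (0:ℝ) < Real.sqrt (2*K+1) := lt_trans (by positivity) h1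
    rw [div_lt_iff₀ h2]
    rw [div_lt_iff₀ hε] at h1
    nlinarith

  -- head tends to zero
  have hhead : Tendsto (fun z : ℝ => Real.exp (-z) *
      ∑ k ∈ Finset.range K, (1 / (k ! * (k+n)! : ℝ)) * (z/2)^(2*k+n)) atTop (nhds 0) := by
    have : ∀ z : ℝ, Real.exp (-z) * ∑ k ∈ Finset.range K, (1 / (k ! * (k+n)! : ℝ)) * (z/2)^(2*k+n)
        = ∑ k ∈ Finset.range K, (1 / ((k ! * (k+n)! : ℝ) * 2^(2*k+n))) * (z^(2*k+n) * Real.exp (-z)) := by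
      intro z
      rw [Finset.mul_sum]
      apply Finset.sum_congr rfl
      intro k _
      rw [div_pow]
      field_simp
    simp only [this]
    rw [show (0:ℝ) = ∑ k ∈ Finset.range K, (1 / ((k ! * (k+n)! : ℝ) * 2^(2*k+n))) * 0 by simp]
    apply tendsto_finset_sum
    intro k _
    exact (tendsto_pow_mul_exp_neg_atTop_nhds_zero (2*k+n)).const_mul _
  have hev1 := hhead.eventually (gt_mem_nhds (by linarith : (0:ℝ) < ε/2))
  filter_upwards [hev1, eventually_ge_atTop (0:ℝ)] with z hz1 hz0
  have hb0 := besselI_nonneg n z hz0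
  have hble := besselI_le n hn z hz0 K
  have hexp : (0:ℝ) < Real.exp (-z) := Real.exp_pos _
  rw [Real.norm_eq_abs, abs_of_nonneg (by positivity)]
  calc Real.exp (-z) * besselI n z
      ≤ Real.exp (-z) * ((∑ k ∈ Finset.range K, (1 / (k ! * (k+n)! : ℝ)) * (z/2)^(2*k+n))
          + Real.exp z / Real.sqrt (2*K+1)) :=
        mul_le_mul_of_nonneg_left hble (le_of_lt hexp)
    _ = (Real.exp (-z) * ∑ k ∈ Finset.range K, (1 / (k ! * (k+n)! : ℝ)) * (z/2)^(2*k+n))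
          + 1 / Real.sqrt (2*K+1) := by
        rw [mul_add]
        congr 1
        rw [Real.exp_neg]
        field_simp
    _ < ε/2 + ε/2 := by exact add_lt_add hz1 hsqrt
    _ = ε := by ring

theorem telegraph_density_tendsto_zero (c lam x : ℝ) (hc : 0 < c) (hlam : 0 < lam) :
    Filter.Tendsto
      (fun t : ℝ =>
        lam * Real.exp (-(lam * t)) / (2 * c) *
          (besselI 0 (lam / c * Real.sqrt (c ^ 2 * t ^ 2 - x ^ 2)) +
            c * t / Real.sqrt (c ^ 2 * t ^ 2 - x ^ 2) *
              besselI 1 (lam / c * Real.sqrt (c ^ 2 * t ^ 2 - x ^ 2))))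
      Filter.atTop (nhds 0) := by
  set a : ℝ → ℝ := fun t => lam / c * Real.sqrt (c ^ 2 * t ^ 2 - x ^ 2) with ha_def
  set u : ℝ → ℝ := fun t => lam / (2*c) *
    (Real.exp (-(a t)) * besselI 0 (a t) + 2 * (Real.exp (-(a t)) * besselI 1 (a t))) with hu_def
  -- basic eventual facts
  have hev : ∀ᶠ t in atTop, c*t/2 ≤ Real.sqrt (c ^ 2 * t ^ 2 - x ^ 2)
      ∧ Real.sqrt (c ^ 2 * t ^ 2 - x ^ 2) ≤ c*t ∧ (1:ℝ) ≤ t := by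
    filter_upwards [eventually_ge_atTop (max 1 (2*|x|/c))] with t ht
    have ht1 : (1:ℝ) ≤ t := le_trans (le_max_left _ _) ht
    have htx : 2*|x|/c ≤ t := le_trans (le_max_right _ _) ht
    have htc : 2*|x| ≤ c*t := by rw [div_le_iff₀ hc] at htx; linarith
    have hx2 : x^2 ≤ (c*t)^2/4 := by nlinarith [abs_nonneg x, sq_abs x]
    refine ⟨?_, ?_, ht1⟩
    · apply Real.le_sqrt' (by positivity) |>.2
      nlinarith
    · calc Real.sqrt (c ^ 2 * t ^ 2 - x ^ 2) ≤ Real.sqrt ((c*t)^2) := by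
            apply Real.sqrt_le_sqrt; nlinarith [sq_nonneg x]
        _ = c*t := Real.sqrt_sq (by positivity)
  -- a tends to atTop
  have ha_top : Tendsto a atTop atTop := by
    apply tendsto_atTop_mono' atTop
      (f₁ := fun t => lam * t / 2)
    · filter_upwards [hev] with t ⟨hlb, hub, ht1⟩
      have : lam / c * (c*t/2) ≤ a t := by
        apply mul_le_mul_of_nonneg_left hlb (by positivity)
      calc lam * t / 2 = lam / c * (c*t/2) := by field_simp
        _ ≤ a t := this
    · apply Tendsto.atTop_div_const two_pos
      exact (tendsto_id (α := ℝ)).const_mul_atTop hlam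
  -- u tends to 0
  have hu : Tendsto u atTop (nhds 0) := by
    have h0 := (tendsto_exp_neg_mul_besselI 0 (by norm_num)).comp ha_top
    have h1 := (tendsto_exp_neg_mul_besselI 1 (by norm_num)).comp ha_top
    have hsum := (h0.add ((h1.const_mul (2:ℝ)))).const_mul (lam/(2*c))
    simp only [Function.comp] at hsum
    norm_num at hsum
    exact hsum
  -- squeeze
  apply tendsto_of_tendsto_of_tendsto_of_le_of_le' tendsto_const_nhds hu
  · -- 0 ≤ f
    filter_upwards [hev] with t ⟨hlb, hub, ht1⟩
    have hspos : 0 < Real.sqrt (c ^ 2 * t ^ 2 - x ^ 2) :=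
      lt_of_lt_of_le (by nlinarith : (0:ℝ) < c*t/2) hlb
    have hann : 0 ≤ a t := by positivity
    have hI0 := besselI_nonneg 0 _ hann
    have hI1 := besselI_nonneg 1 _ hann
    have hcts0 : 0 ≤ c * t / Real.sqrt (c ^ 2 * t ^ 2 - x ^ 2) := by positivity
    have hpar : 0 ≤ besselI 0 (a t) + c * t / Real.sqrt (c ^ 2 * t ^ 2 - x ^ 2) * besselI 1 (a t) :=
      add_nonneg hI0 (mul_nonneg hcts0 hI1)
    exact mul_nonneg (by positivity) hpar
  · -- f ≤ u
    filter_upwards [hev] with t ⟨hlb, hub, ht1⟩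
    have hspos : 0 < Real.sqrt (c ^ 2 * t ^ 2 - x ^ 2) :=
      lt_of_lt_of_le (by nlinarith : (0:ℝ) < c*t/2) hlb
    have hann : 0 ≤ a t := by positivity
    have hI0 := besselI_nonneg 0 _ hann
    have hI1 := besselI_nonneg 1 _ hann
    have hcts : c * t / Real.sqrt (c ^ 2 * t ^ 2 - x ^ 2) ≤ 2 := by
      rw [div_le_iff₀ hspos]; linarith
    have hcts0 : 0 ≤ c * t / Real.sqrt (c ^ 2 * t ^ 2 - x ^ 2) := by positivity
    have ha_ub : a t ≤ lam * t := by
      calc a t ≤ lam / c * (c*t) := mul_le_mul_of_nonneg_left hub (by positivity)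
        _ = lam * t := by field_simp
    have hexp_le : Real.exp (-(lam * t)) ≤ Real.exp (-(a t)) :=
      Real.exp_le_exp.2 (by linarith)
    have hB : lam * Real.exp (-(lam * t)) / (2 * c) ≤ lam * Real.exp (-(a t)) / (2 * c) := by
      apply div_le_div_of_nonneg_right ?_ (by positivity)
      exact mul_le_mul_of_nonneg_left hexp_le (le_of_lt hlam)
    have hA : besselI 0 (a t) + c * t / Real.sqrt (c ^ 2 * t ^ 2 - x ^ 2) * besselI 1 (a t)
        ≤ besselI 0 (a t) + 2 * besselI 1 (a t) := by
      apply add_le_add_right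
      exact mul_le_mul_of_nonneg_right hcts hI1
    calc lam * Real.exp (-(lam * t)) / (2 * c) *
          (besselI 0 (a t) + c * t / Real.sqrt (c ^ 2 * t ^ 2 - x ^ 2) * besselI 1 (a t))
        ≤ lam * Real.exp (-(a t)) / (2 * c) * (besselI 0 (a t) + 2 * besselI 1 (a t)) := by
          apply mul_le_mul hB hA (add_nonneg hI0 (mul_nonneg hcts0 hI1)) (by positivity)
      _ = u t := by rw [hu_def]; ring
end

section
/- Fix constants c > 0 and λ > 0 and a point x ∈ ℝ. Then (λ·e^{-λ t}/(2c))·I₀((λ/c)·√(c²t² − x²)) = (1/(2c))·√(λ/(2π t)) + O(t^{-3/2}) as t → ∞; that is, there exist constants C > 0 and T > |x|/c such that for all t ≥ T, |(λ·e^{-λ t}/(2c))·I₀((λ/c)·√(c²t² − x²)) − (1/(2c))·√(λ/(2π t))| ≤ C·t^{-3/2}. -/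
open Real Filter Topology

open intervalIntegral MeasureTheory

lemma wallis_prod (k : ℕ) :
    ∏ i ∈ Finset.range k, (2 * (i:ℝ) + 1) / (2 * i + 2)
      = (Nat.factorial (2*k) : ℝ) / (4 ^ k * (Nat.factorial k)^2) := by
  induction k with
  | zero => simp
  | succ n ih =>
    rw [Finset.prod_range_succ, ih]
    have h1 : (Nat.factorial (2*(n+1)) : ℝ) = (2*n+2) * ((2*n+1) * Nat.factorial (2*n)) := by
      have : 2*(n+1) = (2*n+1) + 1 := by ring
      rw [this, Nat.factorial_succ]
      push_cast [Nat.factorial_succ]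
      ring
    have h2 : (Nat.factorial (n+1) : ℝ) = (n+1) * Nat.factorial n := by
      rw [Nat.factorial_succ]; push_cast; ring
    have hf : (Nat.factorial n : ℝ) ≠ 0 := Nat.cast_ne_zero.mpr (Nat.factorial_ne_zero n)
    rw [h1, h2]
    have hn1 : ((n:ℝ) + 1) ≠ 0 := by positivity
    field_simp
    ring

lemma cos_pow_reflect (n : ℕ) (x : ℝ) : Real.cos (π - x) ^ n = (-1)^n * Real.cos x ^ n := by
  rw [Real.cos_pi_sub, neg_pow]

lemma integral_cos_pow_odd' (k : ℕ) : (∫ x in (0:ℝ)..π, Real.cos x ^ (2*k+1)) = 0 := by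
  have h := intervalIntegral.integral_comp_sub_left (a := (0:ℝ)) (b := π)
    (fun x => Real.cos x ^ (2*k+1)) π
  simp only [sub_zero, sub_self] at h
  have h2 : (∫ x in (0:ℝ)..π, Real.cos (π - x) ^ (2*k+1))
      = ∫ x in (0:ℝ)..π, -(Real.cos x ^ (2*k+1)) := by
    congr 1; ext x
    rw [cos_pow_reflect]
    rw [pow_succ, pow_mul]
    norm_num
  rw [h2, intervalIntegral.integral_neg] at h
  linarith

lemma integral_cos_pow_even' (k : ℕ) :
    (∫ x in (0:ℝ)..π, Real.cos x ^ (2*k))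
      = π * ((Nat.factorial (2*k) : ℝ) / (4 ^ k * (Nat.factorial k)^2)) := by
  have key : (∫ x in (0:ℝ)..π, Real.cos x ^ (2*k)) = ∫ x in (0:ℝ)..π, Real.sin x ^ (2*k) := by
    have hrefl : ∀ (f : ℝ → ℝ) (a b : ℝ), (∫ x in (π - b:ℝ)..(π - a), f x) = ∫ x in a..b, f (π - x) :=
      fun f a b => (intervalIntegral.integral_comp_sub_left f π).symm
    have hc : (∫ x in (0:ℝ)..(π/2), Real.cos x ^ (2*k)) = ∫ x in (0:ℝ)..(π/2), Real.sin x ^ (2*k) := by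
      have h := intervalIntegral.integral_comp_sub_left (a := (0:ℝ)) (b := π/2)
        (fun x => Real.sin x ^ (2*k)) (π/2)
      simp only [sub_zero, sub_self] at h
      rw [← h]; congr 1; ext x; rw [Real.sin_pi_div_two_sub]
    have hc2 : (∫ x in (π/2:ℝ)..π, Real.cos x ^ (2*k)) = ∫ x in (0:ℝ)..(π/2), Real.cos x ^ (2*k) := by
      have h := intervalIntegral.integral_comp_sub_left (a := (0:ℝ)) (b := π/2)
        (fun x => Real.cos x ^ (2*k)) π
      simp only [sub_zero] at h
      rw [show π - π/2 = π/2 by ring] at h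
      rw [← h]; congr 1; ext x
      rw [cos_pow_reflect, pow_mul]; norm_num
    have hs2 : (∫ x in (π/2:ℝ)..π, Real.sin x ^ (2*k)) = ∫ x in (0:ℝ)..(π/2), Real.sin x ^ (2*k) := by
      have h := intervalIntegral.integral_comp_sub_left (a := (0:ℝ)) (b := π/2)
        (fun x => Real.sin x ^ (2*k)) π
      simp only [sub_zero] at h
      rw [show π - π/2 = π/2 by ring] at h
      rw [← h]; congr 1; ext x
      rw [Real.sin_pi_sub]
    have hsplitc : (∫ x in (0:ℝ)..π, Real.cos x ^ (2*k))
        = (∫ x in (0:ℝ)..(π/2), Real.cos x ^ (2*k)) + ∫ x in (π/2:ℝ)..π, Real.cos x ^ (2*k) := by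
      rw [intervalIntegral.integral_add_adjacent_intervals] <;>
        exact (Real.continuous_cos.pow _).intervalIntegrable _ _
    have hsplits : (∫ x in (0:ℝ)..π, Real.sin x ^ (2*k))
        = (∫ x in (0:ℝ)..(π/2), Real.sin x ^ (2*k)) + ∫ x in (π/2:ℝ)..π, Real.sin x ^ (2*k) := by
      rw [intervalIntegral.integral_add_adjacent_intervals] <;>
        exact (Real.continuous_sin.pow _).intervalIntegrable _ _
    rw [hsplitc, hsplits, hc2, hs2, hc]
  rw [key, integral_sin_pow_even, wallis_prod]


set_option maxHeartbeats 1000000 in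
lemma besselI0_integral_rep (z : ℝ) :
    besselI 0 z = (1/π) * ∫ x in (0:ℝ)..π, Real.exp (z * Real.cos x) := by
  have hexp : ∀ y : ℝ, Real.exp y = ∑' n : ℕ, y ^ n / (Nat.factorial n) := by
    intro y
    rw [Real.exp_eq_exp_ℝ, NormedSpace.exp_eq_tsum_div]
  set f : ℕ → ℝ → ℝ := fun n x => (z * Real.cos x) ^ n / (Nat.factorial n) with hf
  have hswap : (∫ x in (0:ℝ)..π, Real.exp (z * Real.cos x))
      = ∑' n : ℕ, ∫ x in Set.Ioc (0:ℝ) π, f n x := by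
    rw [intervalIntegral.integral_of_le Real.pi_pos.le]
    rw [show (fun x => Real.exp (z * Real.cos x)) = fun x => ∑' n : ℕ, f n x by
      ext x; exact hexp _]
    · exact MeasureTheory.integral_tsum
        (fun n => (((continuous_const.mul Real.continuous_cos).pow n).div_const _).aestronglyMeasurable)
        (by
          have hb : ∀ n, (∫⁻ x in Set.Ioc (0:ℝ) π, ‖f n x‖₊)
              ≤ ENNReal.ofReal (|z| ^ n / (Nat.factorial n)) * ENNReal.ofReal π := by
            intro n
            have : (∫⁻ x in Set.Ioc (0:ℝ) π, ‖f n x‖₊)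
                ≤ ∫⁻ _x in Set.Ioc (0:ℝ) π, ENNReal.ofReal (|z| ^ n / (Nat.factorial n)) := by
              refine MeasureTheory.lintegral_mono fun x => ?_
              rw [← enorm_eq_nnnorm, ← ofReal_norm]
              refine ENNReal.ofReal_le_ofReal ?_
              have : ‖f n x‖ = |z * Real.cos x| ^ n / (Nat.factorial n : ℝ) := by
                rw [hf]
                rw [Real.norm_eq_abs, abs_div, abs_pow, Nat.abs_cast]
              rw [this]
              have hzc : |z * Real.cos x| ≤ |z| := by
                rw [abs_mul]
                calc |z| * |Real.cos x| ≤ |z| * 1 := by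
                      exact mul_le_mul_of_nonneg_left (Real.abs_cos_le_one x) (abs_nonneg z)
                  _ = |z| := mul_one _
              gcongr
            simpa [Real.volume_Ioc, Real.pi_pos.le, mul_comm] using this
          refine ne_top_of_le_ne_top ?_ (ENNReal.tsum_le_tsum hb)
          rw [ENNReal.tsum_mul_right]
          refine ENNReal.mul_ne_top ?_ ENNReal.ofReal_ne_top
          rw [← ENNReal.ofReal_tsum_of_nonneg (fun n => by positivity)
            (Real.summable_pow_div_factorial |z|)]
          exact ENNReal.ofReal_ne_top)
  rw [hswap]
  have hval : ∀ n : ℕ, (∫ x in Set.Ioc (0:ℝ) π, f n x)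
      = z ^ n / (Nat.factorial n) * ∫ x in (0:ℝ)..π, Real.cos x ^ n := by
    intro n
    rw [← intervalIntegral.integral_of_le Real.pi_pos.le, ← intervalIntegral.integral_const_mul]
    congr 1; ext x; rw [hf]; simp [mul_pow]; ring
  have heven : ∀ k : ℕ, (∫ x in Set.Ioc (0:ℝ) π, f (2*k) x)
      = π * ((1 / (Nat.factorial k * Nat.factorial (k + 0) : ℝ)) * (z / 2) ^ (2 * k + 0)) := by
    intro k
    rw [hval, integral_cos_pow_even']
    have h4 : ((4:ℝ)) ^ k = 2 ^ (2*k) := by rw [pow_mul]; norm_num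
    have hfk : (Nat.factorial k : ℝ) ≠ 0 := Nat.cast_ne_zero.mpr (Nat.factorial_ne_zero k)
    have hf2k : (Nat.factorial (2*k) : ℝ) ≠ 0 := Nat.cast_ne_zero.mpr (Nat.factorial_ne_zero _)
    rw [div_pow, h4]
    field_simp
    ring
  have hodd : ∀ k : ℕ, (∫ x in Set.Ioc (0:ℝ) π, f (2*k+1) x) = 0 := by
    intro k; rw [hval, integral_cos_pow_odd', mul_zero]
  have hsum_int : Summable fun n => ∫ x in Set.Ioc (0:ℝ) π, f n x := by
    refine Summable.of_norm ?_
    refine Summable.of_nonneg_of_le (fun n => norm_nonneg _)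
      (fun n => ?_) ((Real.summable_pow_div_factorial |z|).mul_right π)
    rw [hval, norm_mul]
    have e1 : ‖z ^ n / (Nat.factorial n : ℝ)‖ = |z| ^ n / (Nat.factorial n : ℝ) := by
      rw [norm_div, norm_pow, Real.norm_eq_abs, Real.norm_eq_abs, Nat.abs_cast]
    have e2 : ‖∫ x in (0:ℝ)..π, Real.cos x ^ n‖ ≤ π := by
      refine (intervalIntegral.norm_integral_le_of_norm_le_const (C := 1) ?_).trans ?_
      · intro x _
        rw [Real.norm_eq_abs, abs_pow]
        exact pow_le_one₀ (abs_nonneg _) (Real.abs_cos_le_one x)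
      · rw [abs_of_nonneg (by linarith [Real.pi_pos] : (0:ℝ) ≤ π - 0)]
        simp
    rw [e1]
    exact mul_le_mul_of_nonneg_left e2 (by positivity)
  have hinj1 : Function.Injective (fun k : ℕ => 2 * k) := fun a b h => by
    simp only at h; omega
  have hinj2 : Function.Injective (fun k : ℕ => 2 * k + 1) := fun a b h => by
    simp only at h; omega
  have he : Summable fun k => ∫ x in Set.Ioc (0:ℝ) π, f (2*k) x :=
    hsum_int.comp_injective hinj1
  have ho : Summable fun k => ∫ x in Set.Ioc (0:ℝ) π, f (2*k+1) x :=
    hsum_int.comp_injective hinj2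
  rw [← tsum_even_add_odd he ho]
  have h1 : (∑' k, ∫ x in Set.Ioc (0:ℝ) π, f (2*k+1) x) = 0 := by
    simp [hodd]
  have h2 : (∑' k, ∫ x in Set.Ioc (0:ℝ) π, f (2*k) x)
      = π * besselI 0 z := by
    rw [show (π : ℝ) * besselI 0 z = ∑' k, π * ((1 / (Nat.factorial k * Nat.factorial (k + 0) : ℝ)) * (z / 2) ^ (2 * k + 0)) from (tsum_mul_left).symm]
    exact tsum_congr heven
  rw [h1, h2, add_zero]
  field_simp


-- e^x ≥ x^2/4 for x ≥ 0
lemma sq_div_four_le_exp {x : ℝ} (hx : 0 ≤ x) : x^2/4 ≤ Real.exp x := by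
  have h1 : 1 + x/2 ≤ Real.exp (x/2) := by
    have := Real.add_one_le_exp (x/2); linarith
  have h2 : Real.exp x = Real.exp (x/2) * Real.exp (x/2) := by
    rw [← Real.exp_add]; ring_nf
  nlinarith [Real.exp_pos (x/2)]

-- u - sin u ≤ u^3/6 for 0 ≤ u
lemma sub_sin_le_cube {u : ℝ} (hu : 0 ≤ u) : u - Real.sin u ≤ u^3/6 := by
  have key : ∀ v : ℝ, 0 ≤ v → 0 ≤ v^3/6 - v + Real.sin v := by
    intro v hv
    set F : ℝ → ℝ := fun y => y^3/6 - y + Real.sin y with hF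
    have hderiv : ∀ y : ℝ, HasDerivAt F (y^2/2 - 1 + Real.cos y) y := by
      intro y
      have h1 : HasDerivAt (fun y : ℝ => y^3/6) (y^2/2) y := by
        have := (hasDerivAt_pow 3 y).div_const 6
        exact this.congr_deriv (by rw [show (3:ℕ) - 1 = 2 from rfl]; push_cast; ring)
      have h2 : HasDerivAt (fun y : ℝ => y) 1 y := hasDerivAt_id y
      exact ((h1.sub h2).add (Real.hasDerivAt_sin y))
    have hmono : MonotoneOn F (Set.Ici 0) := by
      refine monotoneOn_of_deriv_nonneg (convex_Ici 0)
        (Continuous.continuousOn (by continuity)) ?_ ?_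
      · intro y _
        exact (hderiv y).differentiableAt.differentiableWithinAt
      · intro y hy
        rw [(hderiv y).deriv]
        have := Real.one_sub_sq_div_two_le_cos (x := y)
        linarith
    have : F 0 ≤ F v := hmono (Set.self_mem_Ici) hv hv
    simpa [hF] using this
  have := key u hu
  linarith

-- pointwise bound on [0, π/2]
lemma pointwise_bound {z u : ℝ} (hz : 1 ≤ z) (hu : 0 ≤ u) (hu2 : u ≤ π/2) :
    Real.exp (-(2*z) * Real.sin u ^ 2) - Real.exp (-(2*z) * u^2)
      ≤ (32 * z / (3 * (8*z/π^2)^2)) * Real.exp (-((8*z/π^2)/2) * u^2) := by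
  have hπ := Real.pi_pos
  have hz0 : (0:ℝ) < z := by linarith
  set b : ℝ := 8*z/π^2 with hb
  have hb0 : 0 < b := by positivity
  have hsin_nonneg : 0 ≤ Real.sin u := Real.sin_nonneg_of_nonneg_of_le_pi hu (by linarith)
  have hsin_le : Real.sin u ≤ u := by
    rcases eq_or_lt_of_le hu with h | h
    · simp [← h]
    · exact (Real.sin_lt h).le
  have hjordan : 2/π * u ≤ Real.sin u := Real.mul_le_sin hu hu2
  -- s := 2z sin², t := 2z u², s ≤ t
  have hsq : Real.sin u^2 ≤ u^2 := by nlinarith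
  have hst : 2*z*Real.sin u^2 ≤ 2*z*u^2 := by nlinarith
  -- step 1 : e^{-s} - e^{-t} ≤ (t-s) e^{-s}
  have step1 : Real.exp (-(2*z) * Real.sin u ^ 2) - Real.exp (-(2*z) * u^2)
      ≤ (2*z*u^2 - 2*z*Real.sin u^2) * Real.exp (-(2*z) * Real.sin u ^ 2) := by
    have hd : (0:ℝ) ≤ 2*z*u^2 - 2*z*Real.sin u^2 := by linarith
    have h1 : Real.exp (-(2*z) * u^2)
        = Real.exp (-(2*z) * Real.sin u ^ 2) * Real.exp (-(2*z*u^2 - 2*z*Real.sin u^2)) := by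
      rw [← Real.exp_add]; ring_nf
    have h2 : 1 - Real.exp (-(2*z*u^2 - 2*z*Real.sin u^2)) ≤ 2*z*u^2 - 2*z*Real.sin u^2 := by
      have := Real.add_one_le_exp (-(2*z*u^2 - 2*z*Real.sin u^2)); linarith
    have h3 := Real.exp_pos (-(2*z) * Real.sin u ^ 2)
    nlinarith
  -- step 2 : e^{-2z sin²u} ≤ e^{-b u²}
  have step2 : Real.exp (-(2*z) * Real.sin u ^ 2) ≤ Real.exp (-b * u^2) := by
    apply Real.exp_le_exp.mpr
    have hj2 : (2/π*u)^2 ≤ Real.sin u ^2 := by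
      have h0 : (0:ℝ) ≤ 2/π*u := by positivity
      nlinarith
    have hbu : b * u^2 = 2*z*((2/π*u)^2) := by rw [hb]; field_simp; ring
    nlinarith [mul_le_mul_of_nonneg_left hj2 (by positivity : (0:ℝ) ≤ 2*z)]
  -- step 3 : u² - sin²u ≤ u⁴/3
  have step3 : 2*z*u^2 - 2*z*Real.sin u^2 ≤ (2*z/3) * u^4 := by
    have h5 : u - Real.sin u ≤ u^3/6 := sub_sin_le_cube hu
    have h6 : u^2 - Real.sin u^2 = (u - Real.sin u) * (u + Real.sin u) := by ring
    have h7 : u + Real.sin u ≤ 2*u := by linarith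
    have h8 : 0 ≤ u - Real.sin u := by linarith
    have : u^2 - Real.sin u^2 ≤ u^3/6 * (2*u) := by
      rw [h6]
      apply mul_le_mul h5 h7 (by linarith) (by positivity)
    nlinarith
  -- step 4 : u⁴ e^{-(b/2)u²} ≤ 16/b²
  have step4 : u^4 * Real.exp (-(b/2) * u^2) ≤ 16/b^2 := by
    have h9 : (b/2*u^2)^2/4 ≤ Real.exp (b/2*u^2) := sq_div_four_le_exp (by positivity)
    have h10 : Real.exp (-(b/2) * u^2) = (Real.exp (b/2*u^2))⁻¹ := by
      rw [← Real.exp_neg]; ring_nf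
    rw [h10]
    rw [mul_inv_le_iff₀ (Real.exp_pos _)]
    have h11 : (b/2*u^2)^2/4 = b^2*u^4/16 := by ring
    calc u^4 = (16/b^2) * (b^2*u^4/16) := by field_simp
      _ ≤ (16/b^2) * Real.exp (b/2*u^2) := by
          apply mul_le_mul_of_nonneg_left _ (by positivity)
          rw [← h11]; exact h9
  -- combine
  have comb1 : Real.exp (-(2*z) * Real.sin u ^ 2) - Real.exp (-(2*z) * u^2)
      ≤ (2*z/3) * u^4 * Real.exp (-b * u^2) := by
    calc Real.exp (-(2*z) * Real.sin u ^ 2) - Real.exp (-(2*z) * u^2)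
        ≤ (2*z*u^2 - 2*z*Real.sin u^2) * Real.exp (-(2*z) * Real.sin u ^ 2) := step1
      _ ≤ (2*z/3) * u^4 * Real.exp (-b * u^2) := by
          have e1 : (2*z*u^2 - 2*z*Real.sin u^2) * Real.exp (-(2*z) * Real.sin u ^ 2)
              ≤ (2*z*u^2 - 2*z*Real.sin u^2) * Real.exp (-b * u^2) := by
            apply mul_le_mul_of_nonneg_left step2 (by nlinarith)
          have e2 : (2*z*u^2 - 2*z*Real.sin u^2) * Real.exp (-b * u^2)
              ≤ ((2*z/3) * u^4) * Real.exp (-b * u^2) := by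
            apply mul_le_mul_of_nonneg_right _ (Real.exp_pos _).le
            nlinarith
          linarith
  have hsplit : Real.exp (-b * u^2) = Real.exp (-(b/2) * u^2) * Real.exp (-(b/2) * u^2) := by
    rw [← Real.exp_add]; ring_nf
  calc Real.exp (-(2*z) * Real.sin u ^ 2) - Real.exp (-(2*z) * u^2)
      ≤ (2*z/3) * u^4 * Real.exp (-b * u^2) := comb1
    _ = (2*z/3) * (u^4 * Real.exp (-(b/2) * u^2)) * Real.exp (-(b/2) * u^2) := by
        rw [hsplit]; ring
    _ ≤ (2*z/3) * (16/b^2) * Real.exp (-(b/2) * u^2) := by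
        apply mul_le_mul_of_nonneg_right _ (Real.exp_pos _).le
        apply mul_le_mul_of_nonneg_left step4 (by positivity)
    _ = (32 * z / (3 * b^2)) * Real.exp (-(b/2) * u^2) := by ring

lemma exp_besselI_eq (z : ℝ) :
    Real.exp (-z) * besselI 0 z
      = (2/π) * ∫ u in (0:ℝ)..(π/2), Real.exp (-(2*z) * Real.sin u ^ 2) := by
  have hπ := Real.pi_pos
  rw [besselI0_integral_rep]
  have h1 : Real.exp (-z) * ((1/π) * ∫ x in (0:ℝ)..π, Real.exp (z * Real.cos x))
      = (1/π) * ∫ x in (0:ℝ)..π, Real.exp (z * Real.cos x - z) := by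
    have e : (∫ x in (0:ℝ)..π, Real.exp (z * Real.cos x - z))
        = ∫ x in (0:ℝ)..π, Real.exp (-z) * Real.exp (z * Real.cos x) := by
      congr 1; ext x; rw [← Real.exp_add]; ring_nf
    rw [e, intervalIntegral.integral_const_mul]
    ring
  rw [h1]
  have h2 : (∫ u in (0:ℝ)..(π/2), Real.exp (-(2*z) * Real.sin u ^ 2))
      = (2:ℝ)⁻¹ • ∫ x in (0:ℝ)..π, Real.exp (z * Real.cos x - z) := by
    have h3 := intervalIntegral.integral_comp_mul_left
      (a := (0:ℝ)) (b := π/2) (fun x => Real.exp (z * Real.cos x - z)) (c := 2)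
    replace h3 := h3 two_ne_zero
    rw [mul_zero, show (2:ℝ) * (π/2) = π by ring] at h3
    rw [← h3]
    congr 1; ext u
    have hc : Real.cos (2*u) = 1 - 2 * Real.sin u ^ 2 := by
      rw [Real.cos_two_mul, Real.cos_sq']; ring
    rw [hc]; congr 1; ring
  rw [h2]
  simp only [smul_eq_mul]
  ring

set_option maxHeartbeats 2000000 in
lemma besselI0_asymp : ∃ K > 0, ∀ z : ℝ, 1 ≤ z →
    |Real.exp (-z) * besselI 0 z - Real.sqrt (1/(2*π*z))| ≤ K / (z * Real.sqrt z) := by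
  have hπ := Real.pi_pos
  refine ⟨(2/π) * (π^4 * Real.sqrt (π^3) / 24 + 2 * Real.sqrt π), by positivity, ?_⟩
  intro z hz
  have hz0 : (0:ℝ) < z := by linarith
  have hsz : (0:ℝ) < Real.sqrt z := Real.sqrt_pos.mpr hz0
  set b : ℝ := 8*z/π^2 with hb
  have hb0 : 0 < b := by positivity
  set X : ℝ := ∫ u in (0:ℝ)..(π/2), Real.exp (-(2*z) * Real.sin u ^ 2) with hX
  set Y : ℝ := ∫ u in Set.Ioi (0:ℝ), Real.exp (-(2*z) * u^2) with hY
  have hYval : Y = Real.sqrt (π/(2*z))/2 := integral_gaussian_Ioi (2*z)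
  have hsqrt_id : Real.sqrt (1/(2*π*z)) = (2/π) * Y := by
    rw [hYval]
    have e : π/(2*z) = π^2 * (1/(2*π*z)) := by field_simp
    rw [e, Real.sqrt_mul (sq_nonneg π), Real.sqrt_sq hπ.le]
    field_simp
  have hint2z : Integrable fun u : ℝ => Real.exp (-(2*z) * u^2) :=
    integrable_exp_neg_mul_sq (by positivity)
  -- split Y
  have hsplitY : Y = (∫ u in Set.Ioc (0:ℝ) (π/2), Real.exp (-(2*z) * u^2))
      + ∫ u in Set.Ioi (π/2:ℝ), Real.exp (-(2*z) * u^2) := by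
    rw [hY, ← Set.Ioc_union_Ioi_eq_Ioi (by positivity : (0:ℝ) ≤ π/2)]
    exact MeasureTheory.setIntegral_union (Set.Ioc_disjoint_Ioi le_rfl)
      measurableSet_Ioi hint2z.integrableOn hint2z.integrableOn
  set D : ℝ := ∫ u in (0:ℝ)..(π/2), (Real.exp (-(2*z) * Real.sin u ^ 2) - Real.exp (-(2*z) * u^2)) with hD
  set R : ℝ := ∫ u in Set.Ioi (π/2:ℝ), Real.exp (-(2*z) * u^2) with hR
  have hg1cont : Continuous fun u : ℝ => Real.exp (-(2*z) * Real.sin u ^ 2) :=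
    Real.continuous_exp.comp (continuous_const.mul (Real.continuous_sin.pow 2))
  have hg2cont : Continuous fun u : ℝ => Real.exp (-(2*z) * u^2) :=
    Real.continuous_exp.comp (continuous_const.mul (continuous_pow 2))
  have hg3cont : Continuous fun u : ℝ => Real.exp (-(b/2) * u^2) :=
    Real.continuous_exp.comp (continuous_const.mul (continuous_pow 2))
  have hXD : X - Y = D - R := by
    have e1 : (∫ u in Set.Ioc (0:ℝ) (π/2), Real.exp (-(2*z) * u^2))
        = ∫ u in (0:ℝ)..(π/2), Real.exp (-(2*z) * u^2) := by
      rw [intervalIntegral.integral_of_le (by positivity : (0:ℝ) ≤ π/2)]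
    have e2 : D = X - ∫ u in (0:ℝ)..(π/2), Real.exp (-(2*z) * u^2) := by
      rw [hD, intervalIntegral.integral_sub (hg1cont.intervalIntegrable _ _)
        (hg2cont.intervalIntegrable _ _)]
    rw [hsplitY, e1] at *
    rw [e2]; ring
  -- D bounds
  have hsin_sq_le : ∀ u : ℝ, 0 ≤ u → u ≤ π/2 → Real.sin u ^ 2 ≤ u ^ 2 := by
    intro u hu hu2
    have h1 : Real.sin u ≤ u := by
      rcases eq_or_lt_of_le hu with h | h
      · simp [← h]
      · exact (Real.sin_lt h).le
    have h2 : 0 ≤ Real.sin u := Real.sin_nonneg_of_nonneg_of_le_pi hu (by linarith)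
    nlinarith
  have hD0 : 0 ≤ D := by
    rw [hD]
    apply intervalIntegral.integral_nonneg (by positivity : (0:ℝ) ≤ π/2)
    intro u hu
    have := hsin_sq_le u hu.1 hu.2
    have : -(2*z) * u^2 ≤ -(2*z) * Real.sin u ^2 := by nlinarith
    have := Real.exp_le_exp.mpr this
    linarith
  have hR0 : 0 ≤ R := by
    rw [hR]
    apply MeasureTheory.setIntegral_nonneg measurableSet_Ioi
    intro u _; exact (Real.exp_pos _).le
  -- bound on D
  have hDb : D ≤ π^4 * Real.sqrt (π^3) / 24 / (z * Real.sqrt z) := by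
    have step_a : D ≤ ∫ u in (0:ℝ)..(π/2), (32 * z / (3 * b^2)) * Real.exp (-(b/2) * u^2) := by
      rw [hD]
      apply intervalIntegral.integral_mono_on (by positivity : (0:ℝ) ≤ π/2)
      · exact ((hg1cont.sub hg2cont)).intervalIntegrable _ _
      · exact (continuous_const.mul hg3cont).intervalIntegrable _ _
      · intro u hu
        exact pointwise_bound hz hu.1 hu.2
    have step_b : (∫ u in (0:ℝ)..(π/2), (32 * z / (3 * b^2)) * Real.exp (-(b/2) * u^2))
        ≤ (32 * z / (3 * b^2)) * (Real.sqrt (π/(b/2))/2) := by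
      rw [intervalIntegral.integral_const_mul]
      apply mul_le_mul_of_nonneg_left _ (by positivity)
      rw [← integral_gaussian_Ioi (b/2)]
      rw [intervalIntegral.integral_of_le (by positivity : (0:ℝ) ≤ π/2)]
      apply MeasureTheory.setIntegral_mono_set
      · exact (integrable_exp_neg_mul_sq (by positivity : (0:ℝ) < b/2)).integrableOn
      · filter_upwards with u; positivity
      · exact HasSubset.Subset.eventuallyLE Set.Ioc_subset_Ioi_self
    have algebra : (32 * z / (3 * b^2)) * (Real.sqrt (π/(b/2))/2)
        = π^4 * Real.sqrt (π^3) / 24 / (z * Real.sqrt z) := by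
      have e1 : π/(b/2) = π^3/(4*z) := by rw [hb]; field_simp; ring
      have e2 : Real.sqrt (π^3/(4*z)) = Real.sqrt (π^3) / (2 * Real.sqrt z) := by
        rw [Real.sqrt_div (by positivity) , show (4:ℝ)*z = 2^2*z by norm_num,
          Real.sqrt_mul (by positivity), Real.sqrt_sq (by norm_num : (0:ℝ) ≤ 2)]
      have e3 : 32 * z / (3 * b^2) = π^4/(6*z) := by
        rw [hb]; field_simp; ring
      rw [e1, e2, e3]
      field_simp
      ring
    calc D ≤ ∫ u in (0:ℝ)..(π/2), (32 * z / (3 * b^2)) * Real.exp (-(b/2) * u^2) := step_a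
      _ ≤ (32 * z / (3 * b^2)) * (Real.sqrt (π/(b/2))/2) := step_b
      _ = π^4 * Real.sqrt (π^3) / 24 / (z * Real.sqrt z) := algebra
  -- bound on R
  have hRb : R ≤ 2 * Real.sqrt π / (z * Real.sqrt z) := by
    have step_a : R ≤ ∫ u in Set.Ioi (π/2:ℝ), Real.exp (-(z*π^2/4)) * Real.exp (-z * u^2) := by
      rw [hR]
      apply MeasureTheory.setIntegral_mono_on
      · exact hint2z.integrableOn
      · exact ((integrable_exp_neg_mul_sq hz0).const_mul _).integrableOn
      · exact measurableSet_Ioi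
      · intro u hu
        rw [Set.mem_Ioi] at hu
        rw [← Real.exp_add]
        apply Real.exp_le_exp.mpr
        have hle : π/2 ≤ u := hu.le
        have hu2 : π^2/4 ≤ u^2 := by nlinarith
        nlinarith [mul_le_mul_of_nonneg_left hu2 hz0.le]
    have step_b : (∫ u in Set.Ioi (π/2:ℝ), Real.exp (-(z*π^2/4)) * Real.exp (-z * u^2))
        ≤ Real.exp (-(z*π^2/4)) * (Real.sqrt (π/z)/2) := by
      rw [MeasureTheory.integral_const_mul]
      apply mul_le_mul_of_nonneg_left _ (Real.exp_pos _).le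
      rw [← integral_gaussian_Ioi z]
      apply MeasureTheory.setIntegral_mono_set
      · exact (integrable_exp_neg_mul_sq hz0).integrableOn
      · filter_upwards with u; positivity
      · exact HasSubset.Subset.eventuallyLE (Set.Ioi_subset_Ioi (by positivity))
    have step_c : Real.exp (-(z*π^2/4)) * (Real.sqrt (π/z)/2) ≤ 2 * Real.sqrt π / (z * Real.sqrt z) := by
      have h1 : Real.exp (-(z*π^2/4)) ≤ Real.exp (-z) := by
        apply Real.exp_le_exp.mpr
        have hpi2 : 9 ≤ π^2 := by nlinarith [Real.pi_gt_three]
        nlinarith [mul_le_mul_of_nonneg_left hpi2 hz0.le]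
      have h2 : Real.exp (-z) ≤ 4/z^2 := by
        rw [Real.exp_neg]
        rw [inv_le_comm₀ (Real.exp_pos _) (by positivity)]
        have := sq_div_four_le_exp hz0.le
        calc (4/z^2)⁻¹ = z^2/4 := by field_simp
          _ ≤ Real.exp z := this
      have h3 : Real.sqrt (π/z) = Real.sqrt π / Real.sqrt z := Real.sqrt_div hπ.le z
      have h4 : Real.exp (-(z*π^2/4)) * (Real.sqrt (π/z)/2) ≤ (4/z^2) * (Real.sqrt π / Real.sqrt z / 2) := by
        apply mul_le_mul (h1.trans h2) (by rw [h3]) (by positivity) (by positivity)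
      calc Real.exp (-(z*π^2/4)) * (Real.sqrt (π/z)/2) ≤ (4/z^2) * (Real.sqrt π / Real.sqrt z / 2) := h4
        _ = 2 * Real.sqrt π / (z^2 * Real.sqrt z) := by field_simp; ring
        _ ≤ 2 * Real.sqrt π / (z * Real.sqrt z) := by
            apply div_le_div_of_nonneg_left (by positivity) (by positivity)
            have : z ≤ z^2 := by nlinarith
            nlinarith [mul_le_mul_of_nonneg_right this hsz.le]
    calc R ≤ ∫ u in Set.Ioi (π/2:ℝ), Real.exp (-(z*π^2/4)) * Real.exp (-z * u^2) := step_a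
      _ ≤ Real.exp (-(z*π^2/4)) * (Real.sqrt (π/z)/2) := step_b
      _ ≤ 2 * Real.sqrt π / (z * Real.sqrt z) := step_c
  -- conclude
  have habs : |X - Y| ≤ (π^4 * Real.sqrt (π^3) / 24 + 2 * Real.sqrt π) / (z * Real.sqrt z) := by
    rw [hXD]
    rw [abs_le]
    constructor
    · have : (π^4 * Real.sqrt (π^3) / 24 + 2 * Real.sqrt π) / (z * Real.sqrt z)
          = π^4 * Real.sqrt (π^3) / 24 / (z * Real.sqrt z) + 2 * Real.sqrt π / (z * Real.sqrt z) := by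
        ring
      rw [this]
      linarith
    · have : (π^4 * Real.sqrt (π^3) / 24 + 2 * Real.sqrt π) / (z * Real.sqrt z)
          = π^4 * Real.sqrt (π^3) / 24 / (z * Real.sqrt z) + 2 * Real.sqrt π / (z * Real.sqrt z) := by
        ring
      rw [this]
      linarith
  have hfinal : Real.exp (-z) * besselI 0 z - Real.sqrt (1/(2*π*z)) = (2/π) * (X - Y) := by
    rw [exp_besselI_eq, hsqrt_id, ← hX]
    ring
  rw [hfinal, abs_mul, abs_of_nonneg (by positivity : (0:ℝ) ≤ 2/π)]
  calc (2/π) * |X - Y| ≤ (2/π) * ((π^4 * Real.sqrt (π^3) / 24 + 2 * Real.sqrt π) / (z * Real.sqrt z)) := by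
        apply mul_le_mul_of_nonneg_left habs (by positivity)
    _ = (2/π) * (π^4 * Real.sqrt (π^3) / 24 + 2 * Real.sqrt π) / (z * Real.sqrt z) := by ring


lemma sqrt_sub_sqrt_le {a b : ℝ} (hb : 0 ≤ b) (hba : b ≤ a) (ha : 0 < a) :
    Real.sqrt a - Real.sqrt b ≤ (a - b) / Real.sqrt a := by
  have hsa : 0 < Real.sqrt a := Real.sqrt_pos.mpr ha
  rw [le_div_iff₀ hsa]
  nlinarith [Real.sq_sqrt ha.le, Real.sq_sqrt hb, Real.sqrt_nonneg b,
    Real.sqrt_le_sqrt hba, Real.sqrt_nonneg a]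

set_option maxHeartbeats 2000000 in
theorem common_bessel_term_asymptotics (c lam x : ℝ) (hc : 0 < c) (hlam : 0 < lam) :
    ∃ C > 0, ∃ T > |x| / c, ∀ t ≥ T,
      |lam * Real.exp (-(lam * t)) / (2 * c) *
            besselI 0 (lam / c * Real.sqrt (c ^ 2 * t ^ 2 - x ^ 2)) -
          1 / (2 * c) * Real.sqrt (lam / (2 * Real.pi * t))| ≤ C * t ^ (-(3 : ℝ) / 2) := by
  obtain ⟨K, hK, hKb⟩ := besselI0_asymp
  have hπ := Real.pi_pos
  set a : ℝ := |x| / c with ha_def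
  have ha : 0 ≤ a := by positivity
  set S : ℝ := K/((lam/2)*Real.sqrt (lam/2))
      + lam*a^2*Real.sqrt (1/(π*lam)) + a^2*Real.sqrt (2*π*lam)/(π*lam) with hS_def
  have hS0 : 0 ≤ S := by rw [hS_def]; positivity
  refine ⟨(lam/(2*c)) * S + 1, by positivity, 2*a + 2/lam + 1,
    by have h2l : 0 < 2/lam := by positivity
       linarith, ?_⟩
  intro t ht
  have h2l : 0 < 2/lam := by positivity
  have ht1 : 1 ≤ t := by linarith
  have ht0 : 0 < t := by linarith
  have hta : 2*a ≤ t := by linarith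
  have htl : 2/lam ≤ t := by linarith
  have hst : 0 < Real.sqrt t := Real.sqrt_pos.mpr ht0
  have hst2 : Real.sqrt t ^ 2 = t := Real.sq_sqrt ht0.le
  -- the variable s and z
  set s : ℝ := Real.sqrt (t^2 - x^2/c^2) with hs_def
  have hax : a^2 = x^2/c^2 := by
    rw [ha_def, div_pow, sq_abs]
  have hta2 : a^2 ≤ (t/2)^2 := by
    have := pow_le_pow_left₀ ha (by linarith : a ≤ t/2) 2
    simpa using this
  have htq : (t/2)^2 ≤ t^2 := by
    have := pow_le_pow_left₀ (by linarith : (0:ℝ) ≤ t/2) (by linarith : t/2 ≤ t) 2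
    simpa using this
  have ht2a2 : 0 ≤ t^2 - x^2/c^2 := by rw [← hax]; linarith
  have hs2 : s^2 = t^2 - a^2 := by
    rw [hs_def, Real.sq_sqrt ht2a2, hax]
  have hs_nonneg : 0 ≤ s := Real.sqrt_nonneg _
  have hs_le_t : s ≤ t := by
    rw [hs_def]
    calc Real.sqrt (t^2 - x^2/c^2) ≤ Real.sqrt (t^2) := by
          apply Real.sqrt_le_sqrt
          rw [← hax]; nlinarith [sq_nonneg a]
      _ = t := by rw [Real.sqrt_sq ht0.le]
  have hs_ge : t/2 ≤ s := by
    rw [hs_def]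
    calc t/2 = Real.sqrt ((t/2)^2) := by rw [Real.sqrt_sq (by linarith : (0:ℝ) ≤ t/2)]
      _ ≤ Real.sqrt (t^2 - x^2/c^2) := by
          apply Real.sqrt_le_sqrt
          rw [← hax]
          have h4 : (t/2)^2 = t^2/4 := by ring
          linarith [sq_nonneg t]
  have hs_pos : 0 < s := by linarith
  set z : ℝ := lam * s with hz_def
  set w : ℝ := lam * t with hw_def
  have hw_eq : w = lam * t := hw_def
  have hzw : z ≤ w := by
    rw [hz_def, hw_def]; exact mul_le_mul_of_nonneg_left hs_le_t hlam.le
  have hz_ge : lam/2 * t ≤ z := by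
    rw [hz_def]
    have := mul_le_mul_of_nonneg_left hs_ge hlam.le
    linarith
  have hz1 : 1 ≤ z := by
    have h5 : lam/2 * (2/lam) ≤ lam/2 * t :=
      mul_le_mul_of_nonneg_left htl (by positivity)
    have he : lam/2 * (2/lam) = 1 := by field_simp
    linarith
  have hz0 : 0 < z := by linarith
  have hw0 : 0 < w := by rw [hw_def]; positivity
  have hsz : 0 < Real.sqrt z := Real.sqrt_pos.mpr hz0
  -- argument identification
  have harg : lam / c * Real.sqrt (c^2 * t^2 - x^2) = z := by
    have e1 : c^2 * t^2 - x^2 = c^2 * (t^2 - x^2/c^2) := by field_simp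
    rw [e1, Real.sqrt_mul (sq_nonneg c), Real.sqrt_sq hc.le, ← hs_def, hz_def]
    field_simp
  rw [harg]
  -- rewrite the target sqrt
  have hG : Real.sqrt (lam / (2*π*t)) = lam * Real.sqrt (1/(2*π*w)) := by
    have e : lam / (2*π*t) = lam^2 * (1/(2*π*w)) := by
      rw [hw_def]; field_simp
    rw [e, Real.sqrt_mul (sq_nonneg lam), Real.sqrt_sq hlam.le]
  -- rewrite the expression
  set E : ℝ := Real.exp (-z) * besselI 0 z with hE_def
  have hexpr : lam * Real.exp (-(lam*t)) / (2*c) * besselI 0 z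
      = (lam/(2*c)) * (Real.exp (z - w) * E) := by
    have key : Real.exp (z - w) * Real.exp (-z) = Real.exp (-(lam * t)) := by
      rw [← Real.exp_add]; congr 1; rw [hw_eq]; ring
    rw [hE_def, ← mul_assoc (Real.exp (z - w)), key]
    ring
  rw [hexpr, hG, show (1:ℝ)/(2*c) * (lam * Real.sqrt (1/(2*π*w)))
      = (lam/(2*c)) * Real.sqrt (1/(2*π*w)) by ring]
  rw [← mul_sub, abs_mul, abs_of_nonneg (by positivity : (0:ℝ) ≤ lam/(2*c))]
  -- bound w - z
  have hδ : w - z ≤ lam * a^2 / t := by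
    have h1 : (t - s) * (t + s) = a^2 := by linear_combination -hs2
    have h1b : (t - s) * t ≤ (t - s) * (t + s) :=
      mul_le_mul_of_nonneg_left (by linarith : t ≤ t + s) (by linarith : 0 ≤ t - s)
    have h2 : (t - s) * t ≤ a^2 := by linarith
    have h3 : t - s ≤ a^2 / t := by
      rw [le_div_iff₀ ht0]; linarith
    have h4 : w - z = lam * (t - s) := by rw [hw_def, hz_def]; ring
    rw [h4, mul_comm lam (a^2)] at *
    calc lam * (t - s) ≤ lam * (a^2/t) := mul_le_mul_of_nonneg_left h3 hlam.le
      _ = a^2 * lam / t := by ring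
  have hδ0 : 0 ≤ w - z := by linarith
  have hEb : |E - Real.sqrt (1/(2*π*z))| ≤ K / (z * Real.sqrt z) := hKb z hz1
  -- three-term decomposition
  have hdecomp : Real.exp (z - w) * E - Real.sqrt (1/(2*π*w))
      = Real.exp (z - w) * (E - Real.sqrt (1/(2*π*z)))
        - (1 - Real.exp (z - w)) * Real.sqrt (1/(2*π*z))
        + (Real.sqrt (1/(2*π*z)) - Real.sqrt (1/(2*π*w))) := by ring
  have hexp_le_one : Real.exp (z - w) ≤ 1 := by
    rw [show (1:ℝ) = Real.exp 0 by simp]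
    exact Real.exp_le_exp.mpr (by linarith)
  have hexp_pos : 0 < Real.exp (z - w) := Real.exp_pos _
  -- T1
  have hT1 : |Real.exp (z - w) * (E - Real.sqrt (1/(2*π*z)))|
      ≤ K / (z * Real.sqrt z) := by
    rw [abs_mul, abs_of_nonneg hexp_pos.le]
    calc Real.exp (z-w) * |E - Real.sqrt (1/(2*π*z))|
        ≤ 1 * |E - Real.sqrt (1/(2*π*z))| :=
          mul_le_mul_of_nonneg_right hexp_le_one (abs_nonneg _)
      _ = |E - Real.sqrt (1/(2*π*z))| := one_mul _
      _ ≤ K / (z * Real.sqrt z) := hEb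
  -- T2
  have hT2 : |(1 - Real.exp (z - w)) * Real.sqrt (1/(2*π*z))|
      ≤ (lam * a^2 / t) * Real.sqrt (1/(2*π*z)) := by
    rw [abs_mul, abs_of_nonneg (Real.sqrt_nonneg _)]
    apply mul_le_mul_of_nonneg_right _ (Real.sqrt_nonneg _)
    rw [abs_of_nonneg (by linarith : (0:ℝ) ≤ 1 - Real.exp (z - w))]
    have h6 := Real.add_one_le_exp (z - w)
    have h7 : w - z ≤ lam * a^2/t := by linarith [hδ]
    linarith
  -- T3
  have hT3 : |Real.sqrt (1/(2*π*z)) - Real.sqrt (1/(2*π*w))|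
      ≤ (w - z) / (2*π*z*w) * Real.sqrt (2*π*z) := by
    have hle : 1/(2*π*w) ≤ 1/(2*π*z) := by
      apply div_le_div_of_nonneg_left one_pos.le (by positivity)
      have := mul_le_mul_of_nonneg_left hzw (by positivity : (0:ℝ) ≤ 2*π)
      linarith
    rw [abs_of_nonneg (by linarith [Real.sqrt_le_sqrt hle] :
      (0:ℝ) ≤ Real.sqrt (1/(2*π*z)) - Real.sqrt (1/(2*π*w)))]
    have h1 := sqrt_sub_sqrt_le (by positivity : (0:ℝ) ≤ 1/(2*π*w)) hle (by positivity)
    have h2 : 1/(2*π*z) - 1/(2*π*w) = (w - z) / (2*π*z*w) := by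
      field_simp
    have h3 : (1/(2*π*z) - 1/(2*π*w)) / Real.sqrt (1/(2*π*z))
        = (w - z) / (2*π*z*w) * Real.sqrt (2*π*z) := by
      rw [h2, div_eq_mul_inv _ (Real.sqrt (1/(2*π*z))), ← Real.sqrt_inv]
      congr 2
      rw [one_div, inv_inv]
    rw [← h3]
    exact h1
  -- combine inner bound
  have hinner : |Real.exp (z - w) * E - Real.sqrt (1/(2*π*w))|
      ≤ K / (z * Real.sqrt z) + (lam * a^2 / t) * Real.sqrt (1/(2*π*z))
        + (w - z) / (2*π*z*w) * Real.sqrt (2*π*z) := by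
    rw [hdecomp]
    calc |Real.exp (z - w) * (E - Real.sqrt (1/(2*π*z)))
        - (1 - Real.exp (z - w)) * Real.sqrt (1/(2*π*z))
        + (Real.sqrt (1/(2*π*z)) - Real.sqrt (1/(2*π*w)))|
        ≤ |Real.exp (z - w) * (E - Real.sqrt (1/(2*π*z)))
            - (1 - Real.exp (z - w)) * Real.sqrt (1/(2*π*z))|
          + |Real.sqrt (1/(2*π*z)) - Real.sqrt (1/(2*π*w))| := abs_add_le _ _
      _ ≤ |Real.exp (z - w) * (E - Real.sqrt (1/(2*π*z)))|
          + |(1 - Real.exp (z - w)) * Real.sqrt (1/(2*π*z))|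
          + |Real.sqrt (1/(2*π*z)) - Real.sqrt (1/(2*π*w))| := by
            have h8 := abs_sub (Real.exp (z - w) * (E - Real.sqrt (1/(2*π*z))))
              ((1 - Real.exp (z - w)) * Real.sqrt (1/(2*π*z)))
            linarith
      _ ≤ K / (z * Real.sqrt z) + (lam * a^2 / t) * Real.sqrt (1/(2*π*z))
          + (w - z) / (2*π*z*w) * Real.sqrt (2*π*z) := by
            linarith [hT1, hT2, hT3]
  -- now bound each term by things over t * sqrt t
  have htst : 0 < t * Real.sqrt t := by positivity
  have hsqz_ge : Real.sqrt (lam/2) * Real.sqrt t ≤ Real.sqrt z := by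
    rw [← Real.sqrt_mul (by positivity : (0:ℝ) ≤ lam/2)]
    exact Real.sqrt_le_sqrt hz_ge
  have hB1 : K / (z * Real.sqrt z) ≤ K/((lam/2)*Real.sqrt (lam/2)) / (t * Real.sqrt t) := by
    rw [div_div]
    apply div_le_div_of_nonneg_left hK.le (by positivity)
    calc (lam/2)*Real.sqrt (lam/2) * (t * Real.sqrt t)
        = (lam/2 * t) * (Real.sqrt (lam/2) * Real.sqrt t) := by ring
      _ ≤ z * Real.sqrt z :=
          mul_le_mul hz_ge hsqz_ge (by positivity) hz0.le
  have hB2 : (lam * a^2 / t) * Real.sqrt (1/(2*π*z))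
      ≤ lam*a^2*Real.sqrt (1/(π*lam)) / (t * Real.sqrt t) := by
    have h1 : Real.sqrt (1/(2*π*z)) ≤ Real.sqrt (1/(π*lam*t)) := by
      apply Real.sqrt_le_sqrt
      apply div_le_div_of_nonneg_left one_pos.le (by positivity)
      have := mul_le_mul_of_nonneg_left hz_ge (by positivity : (0:ℝ) ≤ 2*π)
      linarith
    have h2 : Real.sqrt (1/(π*lam*t)) = Real.sqrt (1/(π*lam)) / Real.sqrt t := by
      rw [show 1/(π*lam*t) = (1/(π*lam)) / t by ring, Real.sqrt_div (by positivity) t]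
    calc (lam * a^2 / t) * Real.sqrt (1/(2*π*z))
        ≤ (lam * a^2 / t) * (Real.sqrt (1/(π*lam)) / Real.sqrt t) := by
          rw [← h2]
          exact mul_le_mul_of_nonneg_left h1 (by positivity)
      _ = lam*a^2*Real.sqrt (1/(π*lam)) / (t * Real.sqrt t) := by
          field_simp
  have hB3 : (w - z) / (2*π*z*w) * Real.sqrt (2*π*z)
      ≤ a^2*Real.sqrt (2*π*lam)/(π*lam) / (t * Real.sqrt t) := by
    have h1 : Real.sqrt (2*π*z) ≤ Real.sqrt (2*π*lam) * Real.sqrt t := by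
      rw [← Real.sqrt_mul (by positivity : (0:ℝ) ≤ 2*π*lam)]
      apply Real.sqrt_le_sqrt
      have h1a := mul_le_mul_of_nonneg_left hzw (by positivity : (0:ℝ) ≤ 2*π)
      rw [hw_eq] at h1a
      linarith
    have h2 : π*lam^2*t^2 ≤ 2*π*z*w := by
      have hm : (lam/2*t)*(lam*t) ≤ z*(lam*t) :=
        mul_le_mul_of_nonneg_right hz_ge (by positivity)
      have hm2 := mul_le_mul_of_nonneg_left hm (by positivity : (0:ℝ) ≤ 2*π)
      have he : 2*π*((lam/2*t)*(lam*t)) = π*lam^2*t^2 := by ring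
      rw [hw_eq]
      linarith
    have hmain : (w - z) / (2*π*z*w) ≤ (lam * a^2 / t) / (π*lam^2*t^2) :=
      div_le_div₀ (by positivity) hδ (by positivity) h2
    calc (w - z) / (2*π*z*w) * Real.sqrt (2*π*z)
        ≤ (lam * a^2 / t) / (π*lam^2*t^2) * (Real.sqrt (2*π*lam) * Real.sqrt t) :=
          mul_le_mul hmain h1 (Real.sqrt_nonneg _) (by positivity)
      _ = a^2*Real.sqrt (2*π*lam)/(π*lam) * (Real.sqrt t / t^3) := by
          field_simp
      _ ≤ a^2*Real.sqrt (2*π*lam)/(π*lam) / (t * Real.sqrt t) := by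
          rw [div_eq_mul_inv (a^2*Real.sqrt (2*π*lam)/(π*lam))]
          apply mul_le_mul_of_nonneg_left _ (by positivity)
          rw [div_le_iff₀ (by positivity : (0:ℝ) < t^3), inv_eq_one_div,
            div_mul_eq_mul_div, le_div_iff₀ htst]
          have e1 : Real.sqrt t * (t * Real.sqrt t) = t^2 := by
            rw [show Real.sqrt t * (t * Real.sqrt t) = (Real.sqrt t * Real.sqrt t) * t by ring,
              Real.mul_self_sqrt ht0.le]
            ring
          have e2 : t^2 ≤ t^3 := pow_le_pow_right₀ ht1 (by norm_num)
          rw [e1]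
          linarith
  -- final assembly
  have hsum : |Real.exp (z - w) * E - Real.sqrt (1/(2*π*w))| ≤ S / (t * Real.sqrt t) := by
    have e : S / (t * Real.sqrt t) = K/((lam/2)*Real.sqrt (lam/2)) / (t * Real.sqrt t)
        + lam*a^2*Real.sqrt (1/(π*lam)) / (t * Real.sqrt t)
        + a^2*Real.sqrt (2*π*lam)/(π*lam) / (t * Real.sqrt t) := by
      rw [hS_def]; ring
    rw [e]
    linarith [hinner, hB1, hB2, hB3]
  have hrpow : t ^ (-(3:ℝ)/2) = 1/(t * Real.sqrt t) := by
    rw [show (-(3:ℝ)/2) = -(3/2) by norm_num, Real.rpow_neg ht0.le]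
    rw [show (3:ℝ)/2 = 1 + 1/2 by norm_num, Real.rpow_add ht0, Real.rpow_one,
      ← Real.sqrt_eq_rpow]
    rw [one_div]
  have hrpow_pos : (0:ℝ) < t ^ (-(3:ℝ)/2) := by rw [hrpow]; positivity
  calc (lam/(2*c)) * |Real.exp (z - w) * E - Real.sqrt (1/(2*π*w))|
      ≤ (lam/(2*c)) * (S / (t * Real.sqrt t)) :=
        mul_le_mul_of_nonneg_left hsum (by positivity)
    _ = ((lam/(2*c)) * S) * (t ^ (-(3:ℝ)/2)) := by rw [hrpow]; ring
    _ ≤ ((lam/(2*c)) * S + 1) * (t ^ (-(3:ℝ)/2)) := by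
        apply mul_le_mul_of_nonneg_right _ hrpow_pos.le
        linarith
end

section
/- Fix constants c > 0 and λ > 0 and a point x ∈ ℝ. For t > |x|/c, let f(x,t) = (λ·e^{-λ t}/(2c))·[ I₀((λ/c)·√(c²t² − x²)) + (ct/√(c²t² − x²))·I₁((λ/c)·√(c²t² − x²)) ] (the absolutely continuous part of the transition density of the Goldstein-Kac telegraph process) and g(x,t) = e^{-λ t}/(π·√(c²t² − x²)) + (λ·e^{-λ t}/(2c))·[ I₀((λ/c)·√(c²t² − x²)) + L₀((λ/c)·√(c²t² − x²)) ] (the density of the marginals of the planar symmetric Markov random flight). Then the two densities are asymptotically equivalent as t → ∞: lim_{t→∞} g(x,t)/f(x,t) = 1. -/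
set_option maxHeartbeats 1000000

open Real Filter Topology

open Finset intervalIntegral MeasureTheory

lemma prod_even (k : ℕ) : ∏ i ∈ Finset.range k, ((2*(i:ℝ)+1)/(2*i+2)) =
    (Nat.factorial (2*k)) / (4^k * (Nat.factorial k)^2) := by
  induction k with
  | zero => simp
  | succ n ih =>
    rw [Finset.prod_range_succ, ih]
    have h1 : (Nat.factorial (2*(n+1)) : ℝ) = (2*n+2)*(2*n+1)*Nat.factorial (2*n) := by
      have : 2*(n+1) = (2*n+1)+1 := by ring
      rw [this, Nat.factorial_succ, Nat.factorial_succ]; push_cast; ring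
    have h2 : (Nat.factorial (n+1) : ℝ) = (n+1)*Nat.factorial n := by
      rw [Nat.factorial_succ]; push_cast; ring
    rw [h1, h2]
    have hf : (Nat.factorial n : ℝ) ≠ 0 := Nat.cast_ne_zero.2 (Nat.factorial_ne_zero n)
    have h4 : (4:ℝ)^n ≠ 0 := by positivity
    field_simp
    ring

lemma prod_odd (k : ℕ) : ∏ i ∈ Finset.range k, ((2*(i:ℝ)+2)/(2*i+3)) =
    4^k * (Nat.factorial k)^2 / (Nat.factorial (2*k+1)) := by
  induction k with
  | zero => simp
  | succ n ih =>
    rw [Finset.prod_range_succ, ih]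
    have h1 : (Nat.factorial (2*(n+1)+1) : ℝ) = (2*n+3)*(2*n+2)*Nat.factorial (2*n+1) := by
      have : 2*(n+1)+1 = (2*n+2)+1 := by ring
      rw [this, Nat.factorial_succ]
      have : 2*n+2 = (2*n+1)+1 := by ring
      rw [this, Nat.factorial_succ]; push_cast; ring
    have h2 : (Nat.factorial (n+1) : ℝ) = (n+1)*Nat.factorial n := by
      rw [Nat.factorial_succ]; push_cast; ring
    rw [h1, h2]
    have hf : (Nat.factorial (2*n+1) : ℝ) ≠ 0 := Nat.cast_ne_zero.2 (Nat.factorial_ne_zero _)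
    have h4 : (4:ℝ)^n ≠ 0 := by positivity
    field_simp
    ring


lemma cos_pow_halfPi (n : ℕ) : (∫ θ in (0:ℝ)..(π/2), Real.cos θ ^ n) =
    (1/2) * ∫ x in (0:ℝ)..π, Real.sin x ^ n := by
  have h1 : (∫ θ in (0:ℝ)..(π/2), Real.cos θ ^ n) = ∫ θ in (0:ℝ)..(π/2), Real.sin θ ^ n := by
    have := intervalIntegral.integral_comp_sub_left (a := 0) (b := π/2)
      (fun x => Real.sin x ^ n) (π/2)
    simp only [sub_zero, sub_self] at this
    rw [← this]
    congr 1; ext θ; rw [Real.sin_pi_div_two_sub]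
  have h2 : (∫ x in (π/2:ℝ)..π, Real.sin x ^ n) = ∫ θ in (0:ℝ)..(π/2), Real.sin θ ^ n := by
    have := intervalIntegral.integral_comp_sub_left (a := 0) (b := π/2)
      (fun x => Real.sin x ^ n) π
    simp only [sub_zero] at this
    have hπ : π - π/2 = π/2 := by ring
    rw [hπ] at this
    rw [← this]
    congr 1; ext θ; rw [Real.sin_pi_sub]
  have h3 : (∫ x in (0:ℝ)..π, Real.sin x ^ n) =
      (∫ x in (0:ℝ)..(π/2), Real.sin x ^ n) + ∫ x in (π/2:ℝ)..π, Real.sin x ^ n := by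
    rw [intervalIntegral.integral_add_adjacent_intervals] <;>
      exact (Real.continuous_sin.pow n).intervalIntegrable _ _
  rw [h1, h3, h2]; ring

lemma W_even (k : ℕ) : (∫ θ in (0:ℝ)..(π/2), Real.cos θ ^ (2*k)) =
    π/2 * ((Nat.factorial (2*k)) / (4^k * (Nat.factorial k)^2)) := by
  rw [cos_pow_halfPi, integral_sin_pow_even, prod_even]
  ring

lemma W_odd (k : ℕ) : (∫ θ in (0:ℝ)..(π/2), Real.cos θ ^ (2*k+1)) =
    4^k * (Nat.factorial k)^2 / (Nat.factorial (2*k+1)) := by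
  rw [cos_pow_halfPi, integral_sin_pow_odd, prod_odd]
  ring


lemma swap_int (a : ℕ → ℝ) (ha : Summable fun k => |a k|) (e : ℕ → ℕ) :
    (∫ θ in (0:ℝ)..(π/2), (∑' k, a k * Real.cos θ ^ e k)) =
    ∑' k, a k * ∫ θ in (0:ℝ)..(π/2), Real.cos θ ^ e k := by
  have hp : (0:ℝ) ≤ π/2 := by positivity
  have hcont : ∀ k, Continuous (fun θ : ℝ => a k * Real.cos θ ^ e k) :=
    fun k => continuous_const.mul (Real.continuous_cos.pow _)
  have hInt : ∀ k, IntegrableOn (fun θ : ℝ => a k * Real.cos θ ^ e k) (Set.Ioc 0 (π/2)) :=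
    fun k => ((hcont k).integrableOn_Ioc)
  rw [intervalIntegral.integral_of_le hp]
  rw [← MeasureTheory.integral_tsum_of_summable_integral_norm (fun k => hInt k) ?_]
  · refine tsum_congr fun k => ?_
    rw [intervalIntegral.integral_of_le hp, ← MeasureTheory.integral_const_mul]
  · apply Summable.of_nonneg_of_le (fun k => integral_nonneg fun θ => norm_nonneg _)
      (fun k => ?_) (ha.mul_right (π/2))
    have hb : ∀ θ ∈ Set.Ioc (0:ℝ) (π/2), ‖a k * Real.cos θ ^ e k‖ ≤ |a k| := by
      intro θ hθ
      rw [norm_mul, norm_pow]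
      calc ‖a k‖ * ‖Real.cos θ‖ ^ e k ≤ ‖a k‖ * 1 ^ e k := by
            gcongr; exact Real.abs_cos_le_one θ
        _ = |a k| := by simp
    calc (∫ θ in Set.Ioc (0:ℝ) (π/2), ‖a k * Real.cos θ ^ e k‖)
        ≤ ∫ _θ in Set.Ioc (0:ℝ) (π/2), |a k| := by
          apply MeasureTheory.setIntegral_mono_on (hInt k).norm (integrableOn_const ?_)
            measurableSet_Ioc hb
          simp [Real.volume_Ioc]
      _ ≤ |a k| * (π/2) := by
          rw [MeasureTheory.setIntegral_const]
          simp [Real.volume_Ioc, ENNReal.toReal_ofReal hp]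
          simp only [max_eq_left hp, mul_comm, le_refl]


lemma Gamma_threehalf (k : ℕ) : Real.Gamma ((k:ℝ) + 3/2) =
    Real.sqrt π * (Nat.factorial (2*k+1)) / (4^k * (Nat.factorial k) * 2) := by
  induction k with
  | zero =>
    simp only [Nat.cast_zero, zero_add]
    have : (3/2 : ℝ) = 1/2 + 1 := by norm_num
    rw [this, Real.Gamma_add_one (by norm_num), Real.Gamma_one_half_eq]
    norm_num [Nat.factorial]
    ring
  | succ n ih =>
    have hs : ((n:ℝ) + 3/2) ≠ 0 := by positivity
    have h1 : ((n:ℝ)+1) + 3/2 = ((n:ℝ) + 3/2) + 1 := by ring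
    rw [Nat.cast_succ, h1, Real.Gamma_add_one hs, ih]
    have h2 : (Nat.factorial (2*(n+1)+1) : ℝ) = (2*n+3)*(2*n+2)*Nat.factorial (2*n+1) := by
      have : 2*(n+1)+1 = ((2*n+1)+1)+1 := by ring
      rw [this, Nat.factorial_succ, Nat.factorial_succ]; push_cast; ring
    have h3 : (Nat.factorial (n+1) : ℝ) = (n+1)*Nat.factorial n := by
      rw [Nat.factorial_succ]; push_cast; ring
    rw [h2, h3]
    have hf : (Nat.factorial n : ℝ) ≠ 0 := Nat.cast_ne_zero.2 (Nat.factorial_ne_zero n)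
    have h4 : (4:ℝ)^n ≠ 0 := by positivity
    field_simp
    ring


lemma summable_abs_even (z : ℝ) : Summable fun k : ℕ => |z^(2*k)/(Nat.factorial (2*k))| := by
  have := (Real.hasSum_cosh |z|).summable
  refine this.congr fun k => ?_
  simp [abs_div, abs_pow, Nat.abs_cast]

lemma summable_abs_odd (z : ℝ) : Summable fun k : ℕ => |z^(2*k+1)/(Nat.factorial (2*k+1))| := by
  have := (Real.hasSum_sinh |z|).summable
  refine this.congr fun k => ?_
  simp [abs_div, abs_pow, Nat.abs_cast]

lemma besselI0_int (z : ℝ) :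
    (∫ θ in (0:ℝ)..(π/2), Real.cosh (z * Real.cos θ)) = π/2 * besselI 0 z := by
  have hpt : ∀ θ : ℝ, Real.cosh (z * Real.cos θ) =
      ∑' k, (z^(2*k)/(Nat.factorial (2*k))) * Real.cos θ ^ (2*k) := by
    intro θ
    rw [← (Real.hasSum_cosh (z * Real.cos θ)).tsum_eq]
    exact tsum_congr fun k => by rw [mul_pow]; ring
  simp_rw [hpt]
  rw [swap_int _ (summable_abs_even z) _]
  unfold besselI
  rw [← tsum_mul_left]
  refine tsum_congr fun k => ?_
  rw [W_even k]
  have hf1 : (Nat.factorial (2*k) : ℝ) ≠ 0 := Nat.cast_ne_zero.2 (Nat.factorial_ne_zero _)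
  have hf2 : (Nat.factorial k : ℝ) ≠ 0 := Nat.cast_ne_zero.2 (Nat.factorial_ne_zero _)
  have h4 : (4:ℝ)^k ≠ 0 := by positivity
  have hz : (z/2)^(2*k+0) = z^(2*k)/4^k := by
    rw [add_zero, div_pow, show ((2:ℝ))^(2*k) = 4^k from by rw [pow_mul]; norm_num]
  rw [hz]
  field_simp
  ring

lemma besselI1_int (z : ℝ) :
    (∫ θ in (0:ℝ)..(π/2), Real.sinh (z * Real.cos θ) * Real.cos θ) = π/2 * besselI 1 z := by
  have hpt : ∀ θ : ℝ, Real.sinh (z * Real.cos θ) * Real.cos θ =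
      ∑' k, (z^(2*k+1)/(Nat.factorial (2*k+1))) * Real.cos θ ^ (2*k+2) := by
    intro θ
    rw [← ((Real.hasSum_sinh (z * Real.cos θ)).mul_right (Real.cos θ)).tsum_eq]
    exact tsum_congr fun k => by rw [mul_pow]; ring
  simp_rw [hpt]
  rw [swap_int _ (summable_abs_odd z) _]
  unfold besselI
  rw [← tsum_mul_left]
  refine tsum_congr fun k => ?_
  have h2 : 2*k+2 = 2*(k+1) := by ring
  rw [h2, W_even (k+1)]
  have hf1 : (Nat.factorial (2*k+1) : ℝ) ≠ 0 := Nat.cast_ne_zero.2 (Nat.factorial_ne_zero _)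
  have hf2 : (Nat.factorial k : ℝ) ≠ 0 := Nat.cast_ne_zero.2 (Nat.factorial_ne_zero _)
  have h4 : (4:ℝ)^k ≠ 0 := by positivity
  have hfs1 : (Nat.factorial (2*(k+1)) : ℝ) = (2*k+2)*Nat.factorial (2*k+1) := by
    have : 2*(k+1) = (2*k+1)+1 := by ring
    rw [this, Nat.factorial_succ]; push_cast; ring
  have hfs2 : (Nat.factorial (k+1) : ℝ) = (k+1)*Nat.factorial k := by
    rw [Nat.factorial_succ]; push_cast; ring
  have hz : (z/2)^(2*k+1) = z^(2*k+1)/(4^k*2) := by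
    rw [div_pow, show ((2:ℝ))^(2*k+1) = 4^k*2 from by rw [pow_add, pow_mul]; norm_num]
  rw [hfs1, hfs2, hz]
  rw [pow_succ]
  field_simp
  ring

lemma struveL0_int (z : ℝ) :
    (∫ θ in (0:ℝ)..(π/2), Real.sinh (z * Real.cos θ)) = π/2 * struveL0 z := by
  have hpt : ∀ θ : ℝ, Real.sinh (z * Real.cos θ) =
      ∑' k, (z^(2*k+1)/(Nat.factorial (2*k+1))) * Real.cos θ ^ (2*k+1) := by
    intro θ
    rw [← (Real.hasSum_sinh (z * Real.cos θ)).tsum_eq]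
    exact tsum_congr fun k => by rw [mul_pow]; ring
  simp_rw [hpt]
  rw [swap_int _ (summable_abs_odd z) _]
  unfold struveL0
  rw [← tsum_mul_left]
  refine tsum_congr fun k => ?_
  rw [W_odd k, Gamma_threehalf k]
  have hf1 : (Nat.factorial (2*k+1) : ℝ) ≠ 0 := Nat.cast_ne_zero.2 (Nat.factorial_ne_zero _)
  have hf2 : (Nat.factorial k : ℝ) ≠ 0 := Nat.cast_ne_zero.2 (Nat.factorial_ne_zero _)
  have h4 : (4:ℝ)^k ≠ 0 := by positivity
  have hπ : Real.sqrt π ^ 2 = π := Real.sq_sqrt (le_of_lt Real.pi_pos)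
  have hπ0 : Real.sqrt π ≠ 0 := by
    intro h; rw [h] at hπ; simp at hπ; exact Real.pi_ne_zero hπ.symm
  have hz : (z/2)^(2*k+1) = z^(2*k+1)/(4^k*2) := by
    rw [div_pow, show ((2:ℝ))^(2*k+1) = 4^k*2 from by rw [pow_add, pow_mul]; norm_num]
  rw [hz, div_pow, mul_pow, mul_pow, hπ]
  field_simp


section ineq
variable {z : ℝ}

lemma hp2 : (0:ℝ) ≤ π/2 := by positivity

lemma cos_mem (θ : ℝ) (hθ : θ ∈ Set.Icc (0:ℝ) (π/2)) : 0 ≤ Real.cos θ ∧ Real.cos θ ≤ 1 :=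
  ⟨Real.cos_nonneg_of_mem_Icc ⟨le_trans (neg_nonpos.mpr hp2) hθ.1, hθ.2⟩,
   Real.cos_le_one θ⟩

lemma int_cosh : IntervalIntegrable (fun θ => Real.cosh (z * Real.cos θ)) volume 0 (π/2) :=
  (Real.continuous_cosh.comp (continuous_const.mul Real.continuous_cos)).intervalIntegrable _ _

lemma int_sinh : IntervalIntegrable (fun θ => Real.sinh (z * Real.cos θ)) volume 0 (π/2) :=
  (Real.continuous_sinh.comp (continuous_const.mul Real.continuous_cos)).intervalIntegrable _ _

lemma int_sinhcos :
    IntervalIntegrable (fun θ => Real.sinh (z * Real.cos θ) * Real.cos θ) volume 0 (π/2) :=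
  ((Real.continuous_sinh.comp (continuous_const.mul Real.continuous_cos)).mul
    Real.continuous_cos).intervalIntegrable _ _

lemma of_half (h : π/2 * a ≤ π/2 * b) : a ≤ b :=
  le_of_mul_le_mul_left h (by positivity)

lemma besselI0_ge_one (hz : 0 ≤ z) : 1 ≤ besselI 0 z := by
  apply of_half
  rw [← besselI0_int]
  calc π/2 * 1 = ∫ _θ in (0:ℝ)..(π/2), (1:ℝ) := by simp
    _ ≤ _ := by
      apply intervalIntegral.integral_mono_on hp2 (by simp) int_cosh
      intro θ _; exact Real.one_le_cosh _

lemma besselI1_nonneg (hz : 0 ≤ z) : 0 ≤ besselI 1 z := by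
  have h : π/2 * 0 ≤ π/2 * besselI 1 z := by
    rw [← besselI1_int, mul_zero]
    apply intervalIntegral.integral_nonneg hp2
    intro θ hθ
    obtain ⟨h0, _⟩ := cos_mem θ hθ
    exact mul_nonneg (Real.sinh_nonneg_iff.mpr (by positivity)) h0
  exact of_half h

lemma sinh_le_mul_cosh {u : ℝ} (hu : 0 ≤ u) : Real.sinh u ≤ u * Real.cosh u := by
  refine hasSum_le (fun k => ?_) (Real.hasSum_sinh u) ((Real.hasSum_cosh u).mul_left u)
  have h1 : u * (u ^ (2*k) / (Nat.factorial (2*k))) = u^(2*k+1) / (Nat.factorial (2*k)) := by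
    rw [pow_succ]; ring
  rw [h1]
  apply div_le_div_of_nonneg_left (by positivity) (by exact_mod_cast Nat.factorial_pos _)
  exact_mod_cast Nat.factorial_le (Nat.le_succ _)

lemma besselI1_le (hz : 0 ≤ z) : besselI 1 z ≤ z * besselI 0 z := by
  apply of_half
  rw [← besselI1_int, mul_left_comm, ← besselI0_int, ← intervalIntegral.integral_const_mul]
  apply intervalIntegral.integral_mono_on hp2 int_sinhcos (int_cosh.const_mul z)
  intro θ hθ
  obtain ⟨h0, h1⟩ := cos_mem θ hθ
  have hs : 0 ≤ Real.sinh (z * Real.cos θ) := Real.sinh_nonneg_iff.mpr (by positivity)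
  calc Real.sinh (z * Real.cos θ) * Real.cos θ ≤ Real.sinh (z * Real.cos θ) * 1 := by gcongr
    _ = Real.sinh (z * Real.cos θ) := mul_one _
    _ ≤ (z * Real.cos θ) * Real.cosh (z * Real.cos θ) := sinh_le_mul_cosh (by positivity)
    _ ≤ (z * 1) * Real.cosh (z * Real.cos θ) := by
        have := Real.cosh_pos (x := z * Real.cos θ)
        gcongr
    _ = z * Real.cosh (z * Real.cos θ) := by rw [mul_one]

lemma struve_le_besselI0 (hz : 0 ≤ z) : struveL0 z ≤ besselI 0 z := by
  apply of_half
  rw [← besselI0_int, ← struveL0_int]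
  apply intervalIntegral.integral_mono_on hp2 int_sinh int_cosh
  intro θ hθ
  exact (Real.sinh_lt_cosh _).le

lemma besselI0_sub_struve_le_one (hz : 0 ≤ z) : besselI 0 z - struveL0 z ≤ 1 := by
  have h : π/2 * besselI 0 z - π/2 * struveL0 z ≤ π/2 * 1 := by
    rw [← besselI0_int, ← struveL0_int, ← intervalIntegral.integral_sub int_cosh int_sinh]
    calc (∫ θ in (0:ℝ)..(π/2), (Real.cosh (z * Real.cos θ) - Real.sinh (z * Real.cos θ)))
        ≤ ∫ _θ in (0:ℝ)..(π/2), (1:ℝ) := by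
          apply intervalIntegral.integral_mono_on hp2 (int_cosh.sub int_sinh) (by simp)
          intro θ hθ
          obtain ⟨h0, _⟩ := cos_mem θ hθ
          rw [Real.cosh_sub_sinh]
          exact Real.exp_le_one_iff.mpr (neg_nonpos.mpr (by positivity))
      _ = π/2 * 1 := by simp
  apply of_half; rw [mul_sub]; linarith

lemma besselI1_le_besselI0 (hz : 0 ≤ z) : besselI 1 z ≤ besselI 0 z := by
  apply of_half
  rw [← besselI0_int, ← besselI1_int]
  apply intervalIntegral.integral_mono_on hp2 int_sinhcos int_cosh
  intro θ hθ
  obtain ⟨h0, h1⟩ := cos_mem θ hθ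
  have hs : 0 ≤ Real.sinh (z * Real.cos θ) := Real.sinh_nonneg_iff.mpr (by positivity)
  calc Real.sinh (z * Real.cos θ) * Real.cos θ ≤ Real.sinh (z * Real.cos θ) * 1 := by gcongr
    _ = Real.sinh (z * Real.cos θ) := mul_one _
    _ ≤ Real.cosh (z * Real.cos θ) := (Real.sinh_lt_cosh _).le

end ineq


lemma x_exp_neg_le_one {x : ℝ} (hx : 0 ≤ x) : x * Real.exp (-x) ≤ 1 := by
  have h1 : x ≤ Real.exp x := by linarith [Real.add_one_le_exp x]
  calc x * Real.exp (-x) ≤ Real.exp x * Real.exp (-x) := by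
        have := Real.exp_pos (-x); gcongr
    _ = 1 := by rw [← Real.exp_add]; simp

lemma besselI0_sub_besselI1_le {z : ℝ} (hz : 1 ≤ z) :
    besselI 0 z - besselI 1 z ≤ 1 + π^2 * Real.exp z / z := by
  have hz0 : (0:ℝ) < z := by linarith
  apply of_half
  rw [mul_sub, ← besselI0_int, ← besselI1_int,
    ← intervalIntegral.integral_sub int_cosh int_sinhcos]
  calc (∫ θ in (0:ℝ)..(π/2),
        (Real.cosh (z * Real.cos θ) - Real.sinh (z * Real.cos θ) * Real.cos θ))
      ≤ ∫ _θ in (0:ℝ)..(π/2), (1 + π^2 * Real.exp z / z) := by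
        apply intervalIntegral.integral_mono_on hp2 (int_cosh.sub int_sinhcos) (by simp)
        intro θ hθ
        obtain ⟨h0, h1⟩ := cos_mem θ hθ
        set u := z * Real.cos θ with hu
        have hu0 : 0 ≤ u := by positivity
        have hsu : 0 ≤ Real.sinh u := Real.sinh_nonneg_iff.mpr hu0
        have key : Real.sinh u * (1 - Real.cos θ) ≤ π^2 * Real.exp z / z := by
          have s1 : Real.sinh u ≤ Real.exp u / 2 := by
            rw [Real.sinh_eq]; have := Real.exp_pos (-u); linarith
          have s2 : 1 - Real.cos θ ≤ θ^2/2 := by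
            linarith [Real.one_sub_sq_div_two_le_cos (x := θ)]
          have s3 : u ≤ z - (2*z/π^2) * θ^2 := by
            have hc : Real.cos θ ≤ 1 - 2/π^2 * θ^2 := by
              apply Real.cos_le_one_sub_mul_cos_sq
              rw [abs_of_nonneg hθ.1]
              linarith [hθ.2, Real.pi_pos]
            calc u = z * Real.cos θ := hu
              _ ≤ z * (1 - 2/π^2 * θ^2) := by gcongr
              _ = z - (2*z/π^2) * θ^2 := by ring
          have s4 : Real.sinh u * (1 - Real.cos θ) ≤
              (θ^2/4) * Real.exp (z - (2*z/π^2) * θ^2) := by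
            calc Real.sinh u * (1 - Real.cos θ) ≤ (Real.exp u / 2) * (θ^2/2) := by
                  apply mul_le_mul s1 s2 (by linarith [Real.cos_le_one θ]) (by positivity)
              _ = (θ^2/4) * Real.exp u := by ring
              _ ≤ (θ^2/4) * Real.exp (z - (2*z/π^2) * θ^2) :=
                  mul_le_mul_of_nonneg_left (Real.exp_le_exp.mpr s3) (by positivity)
          refine s4.trans ?_
          rw [show z - (2*z/π^2) * θ^2 = z + (-(2*z/π^2 * θ^2)) by ring, Real.exp_add]
          -- θ^2/4 * (e^z * e^{-2x}) ≤ π^2 e^z / z  where x = z θ²/π²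
          set x := z * θ^2 / π^2 with hx
          have hx0 : 0 ≤ x := by positivity
          have hθx : θ^2 = π^2 * x / z := by
            rw [hx]; field_simp
          have he : Real.exp (-(2*z/π^2 * θ^2)) ≤ Real.exp (-x) := by
            apply Real.exp_le_exp.mpr
            rw [hx]
            have h2x : 2*z/π^2*θ^2 = 2*(z*θ^2/π^2) := by ring
            have : 0 ≤ z * θ^2 / π^2 := by positivity
            linarith
          calc θ^2/4 * (Real.exp z * Real.exp (-(2*z/π^2 * θ^2)))
              ≤ θ^2 * (Real.exp z * Real.exp (-x)) := by
                have h4 : θ^2/4 ≤ θ^2 := by nlinarith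
                apply mul_le_mul h4 (mul_le_mul_of_nonneg_left he (Real.exp_pos z).le)
                  (by positivity) (by positivity)
            _ = (π^2 * Real.exp z / z) * (x * Real.exp (-x)) := by
                rw [hθx]; field_simp
            _ ≤ (π^2 * Real.exp z / z) * 1 := by
                have hp : 0 ≤ π^2 * Real.exp z / z := by positivity
                gcongr
                exact x_exp_neg_le_one hx0
            _ = π^2 * Real.exp z / z := mul_one _
        have hcs : Real.cosh u - Real.sinh u = Real.exp (-u) := Real.cosh_sub_sinh u
        have he1 : Real.exp (-u) ≤ 1 := Real.exp_le_one_iff.mpr (by linarith)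
        nlinarith
      _ = π/2 * (1 + π^2 * Real.exp z / z) := by simp; ring


lemma besselI0_lower {z : ℝ} (hz : 1 ≤ z) :
    Real.exp (z - 2⁻¹) / (π * Real.sqrt z) ≤ besselI 0 z := by
  have hz0 : (0:ℝ) < z := by linarith
  have hs1 : 1 ≤ Real.sqrt z := by
    rw [show (1:ℝ) = Real.sqrt 1 by simp]
    exact Real.sqrt_le_sqrt hz
  have hs0 : 0 < Real.sqrt z := by linarith
  set δ : ℝ := (Real.sqrt z)⁻¹ with hδ
  have hδ0 : 0 < δ := by positivity
  have hδ1 : δ ≤ 1 := by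
    rw [hδ]; exact inv_le_one_of_one_le₀ hs1
  have hδπ : δ ≤ π/2 := le_trans hδ1 (by linarith [Real.pi_gt_three])
  have hδsq : δ^2 = z⁻¹ := by
    rw [hδ, inv_pow, Real.sq_sqrt hz0.le]
  have hcont : Continuous (fun θ : ℝ => Real.cosh (z * Real.cos θ)) :=
    Real.continuous_cosh.comp (continuous_const.mul Real.continuous_cos)
  have hsplit : (∫ θ in (0:ℝ)..(π/2), Real.cosh (z * Real.cos θ)) =
      (∫ θ in (0:ℝ)..δ, Real.cosh (z * Real.cos θ)) +
      ∫ θ in δ..(π/2), Real.cosh (z * Real.cos θ) :=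
    (intervalIntegral.integral_add_adjacent_intervals
      (hcont.intervalIntegrable _ _) (hcont.intervalIntegrable _ _)).symm
  have h2 : 0 ≤ ∫ θ in δ..(π/2), Real.cosh (z * Real.cos θ) := by
    apply intervalIntegral.integral_nonneg hδπ
    intro θ _; positivity
  have h1 : δ * (Real.exp (z - 2⁻¹) / 2) ≤ ∫ θ in (0:ℝ)..δ, Real.cosh (z * Real.cos θ) := by
    calc δ * (Real.exp (z - 2⁻¹) / 2)
        = ∫ _θ in (0:ℝ)..δ, (Real.exp (z - 2⁻¹) / 2) := by
          rw [intervalIntegral.integral_const, smul_eq_mul, sub_zero]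
      _ ≤ _ := by
        apply intervalIntegral.integral_mono_on hδ0.le (by simp)
          (hcont.intervalIntegrable _ _)
        intro θ hθ
        have hθδ : θ ≤ δ := hθ.2
        have hθ0 : 0 ≤ θ := hθ.1
        have hcos : Real.cos δ ≤ Real.cos θ := by
          apply Real.cos_le_cos_of_nonneg_of_le_pi hθ0 (by linarith [Real.pi_gt_three]) hθδ
        have hcδ : 1 - 2⁻¹ * z⁻¹ ≤ Real.cos δ := by
          have := Real.one_sub_sq_div_two_le_cos (x := δ)
          rw [hδsq] at this; linarith
        have hu : z - 2⁻¹ ≤ z * Real.cos θ := by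
          have : z * (1 - 2⁻¹ * z⁻¹) ≤ z * Real.cos θ := by
            apply mul_le_mul_of_nonneg_left (le_trans hcδ hcos) hz0.le
          calc z - 2⁻¹ = z * (1 - 2⁻¹ * z⁻¹) := by field_simp
            _ ≤ z * Real.cos θ := this
        calc Real.exp (z - 2⁻¹) / 2 ≤ Real.exp (z * Real.cos θ) / 2 := by
              gcongr
          _ ≤ Real.cosh (z * Real.cos θ) := by
              rw [Real.cosh_eq]
              have := Real.exp_pos (-(z * Real.cos θ)); linarith
  have key : Real.exp (z - 2⁻¹) / (2 * Real.sqrt z) ≤ π/2 * besselI 0 z := by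
    rw [← besselI0_int, hsplit]
    have : δ * (Real.exp (z - 2⁻¹) / 2) = Real.exp (z - 2⁻¹) / (2 * Real.sqrt z) := by
      rw [hδ]; field_simp
    linarith
  have hπ : 0 < π := Real.pi_pos
  rw [div_le_iff₀ (by positivity)]
  rw [div_le_iff₀ (by positivity)] at key
  nlinarith [Real.exp_pos (z - 2⁻¹)]


lemma sqrt_tendsto_atTop : Tendsto Real.sqrt atTop atTop :=
  tendsto_atTop_atTop_of_monotone (fun _ _ h => Real.sqrt_le_sqrt h)
    (fun b => ⟨(max b 0)^2, by
      rw [Real.sqrt_sq (le_max_right b 0)]; exact le_max_left b 0⟩)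

lemma tendsto_B : Tendsto (fun z : ℝ => π * Real.sqrt z * Real.exp (2⁻¹) * Real.exp (-z))
    atTop (𝓝 0) := by
  have h := (tendsto_pow_mul_exp_neg_atTop_nhds_zero 1).const_mul (π * Real.exp (2⁻¹))
  rw [mul_zero] at h
  apply squeeze_zero_norm' _ h
  filter_upwards [eventually_ge_atTop (1:ℝ)] with z hz
  have h1 : Real.sqrt z ≤ z := by
    have h2 : Real.sqrt z ≤ Real.sqrt (z^2) := Real.sqrt_le_sqrt (by nlinarith)
    rwa [Real.sqrt_sq (by linarith)] at h2
  rw [Real.norm_eq_abs, abs_of_nonneg (by positivity)]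
  calc π * Real.sqrt z * Real.exp (2⁻¹) * Real.exp (-z)
      ≤ π * z * Real.exp (2⁻¹) * Real.exp (-z) := by gcongr
    _ = π * Real.exp (2⁻¹) * (z ^ 1 * Real.exp (-z)) := by ring

lemma one_div_besselI0_le {z : ℝ} (hz : 1 ≤ z) :
    1 / besselI 0 z ≤ π * Real.sqrt z * Real.exp (2⁻¹) * Real.exp (-z) := by
  have h0 : (0:ℝ) < Real.exp (z - 2⁻¹) / (π * Real.sqrt z) := by positivity
  have hI : 0 < besselI 0 z := lt_of_lt_of_le h0 (besselI0_lower hz)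
  rw [div_le_iff₀ hI]
  have key : (π * Real.sqrt z * Real.exp (2⁻¹) * Real.exp (-z)) *
      (Real.exp (z - 2⁻¹) / (π * Real.sqrt z)) = 1 := by
    rw [Real.exp_sub, Real.exp_neg]
    have h1 : Real.sqrt z ≠ 0 := by positivity
    have h2 : Real.exp z ≠ 0 := (Real.exp_pos z).ne'
    have h3 : Real.exp (2⁻¹:ℝ) ≠ 0 := (Real.exp_pos _).ne'
    have h4 : π ≠ 0 := Real.pi_ne_zero
    field_simp
  calc (1:ℝ) = (π * Real.sqrt z * Real.exp (2⁻¹) * Real.exp (-z)) *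
      (Real.exp (z - 2⁻¹) / (π * Real.sqrt z)) := key.symm
    _ ≤ _ := by
      have hb := besselI0_lower hz
      have hp : 0 < π * Real.sqrt z * Real.exp (2⁻¹) * Real.exp (-z) := by positivity
      nlinarith

lemma tendsto_C : Tendsto (fun z : ℝ => π^3 * Real.exp (2⁻¹) / Real.sqrt z) atTop (𝓝 0) :=
  Tendsto.div_atTop tendsto_const_nhds sqrt_tendsto_atTop

lemma tendsto_ratio_struve :
    Tendsto (fun z => (besselI 0 z - struveL0 z)/besselI 0 z) atTop (𝓝 0) := by
  apply squeeze_zero' (g := fun z => π * Real.sqrt z * Real.exp (2⁻¹) * Real.exp (-z))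
  · filter_upwards [eventually_ge_atTop (0:ℝ)] with z hz
    have hI : (1:ℝ) ≤ besselI 0 z := besselI0_ge_one hz
    have := struve_le_besselI0 hz
    apply div_nonneg (by linarith) (by linarith)
  · filter_upwards [eventually_ge_atTop (1:ℝ)] with z hz
    have hI : (1:ℝ) ≤ besselI 0 z := besselI0_ge_one (by linarith)
    calc (besselI 0 z - struveL0 z)/besselI 0 z ≤ 1/besselI 0 z := by
          apply div_le_div_of_nonneg_right ?_ (by linarith)
          linarith [besselI0_sub_struve_le_one (by linarith : (0:ℝ) ≤ z)]
      _ ≤ _ := one_div_besselI0_le hz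
  · exact tendsto_B

lemma tendsto_ratio_bessel :
    Tendsto (fun z => (besselI 0 z - besselI 1 z)/besselI 0 z) atTop (𝓝 0) := by
  have hBC := tendsto_B.add tendsto_C
  rw [add_zero] at hBC
  apply squeeze_zero' (g := fun z => π * Real.sqrt z * Real.exp (2⁻¹) * Real.exp (-z)
      + π^3 * Real.exp (2⁻¹) / Real.sqrt z) _ _ hBC
  · filter_upwards [eventually_ge_atTop (0:ℝ)] with z hz
    have hI : (1:ℝ) ≤ besselI 0 z := besselI0_ge_one hz
    have := besselI1_le_besselI0 hz
    apply div_nonneg (by linarith) (by linarith)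
  · filter_upwards [eventually_ge_atTop (1:ℝ)] with z hz
    have hz0 : (0:ℝ) ≤ z := by linarith
    have hI : (1:ℝ) ≤ besselI 0 z := besselI0_ge_one hz0
    have hub := besselI0_sub_besselI1_le hz
    have h1I := one_div_besselI0_le hz
    have hfac : (0:ℝ) ≤ 1 + π^2 * Real.exp z / z := by positivity
    have hzz : Real.sqrt z * Real.sqrt z = z := Real.mul_self_sqrt hz0
    have hsz : Real.sqrt z ≠ 0 := by positivity
    calc (besselI 0 z - besselI 1 z)/besselI 0 z
        ≤ (1 + π^2 * Real.exp z / z) * (1/besselI 0 z) := by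
          rw [div_eq_mul_one_div]
          apply mul_le_mul_of_nonneg_right hub (by positivity)
      _ ≤ (1 + π^2 * Real.exp z / z) *
          (π * Real.sqrt z * Real.exp (2⁻¹) * Real.exp (-z)) :=
          mul_le_mul_of_nonneg_left h1I hfac
      _ = π * Real.sqrt z * Real.exp (2⁻¹) * Real.exp (-z)
          + π^3 * Real.exp (2⁻¹) / Real.sqrt z := by
          rw [Real.exp_neg]
          have he : Real.exp z ≠ 0 := (Real.exp_pos z).ne'
          have hz' : z ≠ 0 := by linarith
          field_simp
          ring_nf
          rw [Real.sq_sqrt hz0]; ring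


theorem densities_asymptotically_equivalent (c lam x : ℝ) (hc : 0 < c) (hlam : 0 < lam) :
    Filter.Tendsto
      (fun t : ℝ =>
        (Real.exp (-(lam * t)) / (Real.pi * Real.sqrt (c ^ 2 * t ^ 2 - x ^ 2)) +
            lam * Real.exp (-(lam * t)) / (2 * c) *
              (besselI 0 (lam / c * Real.sqrt (c ^ 2 * t ^ 2 - x ^ 2)) +
                struveL0 (lam / c * Real.sqrt (c ^ 2 * t ^ 2 - x ^ 2)))) /
          (lam * Real.exp (-(lam * t)) / (2 * c) *
            (besselI 0 (lam / c * Real.sqrt (c ^ 2 * t ^ 2 - x ^ 2)) +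
              c * t / Real.sqrt (c ^ 2 * t ^ 2 - x ^ 2) *
                besselI 1 (lam / c * Real.sqrt (c ^ 2 * t ^ 2 - x ^ 2)))))
      Filter.atTop (nhds 1) := by
  have hπ : 0 < π := Real.pi_pos
  set s : ℝ → ℝ := fun t => Real.sqrt (c ^ 2 * t ^ 2 - x ^ 2) with hs_def
  set zf : ℝ → ℝ := fun t => lam / c * s t with hz_def
  -- basic tendsto facts
  have hq_tend : Tendsto (fun t : ℝ => c ^ 2 * t ^ 2 - x ^ 2) atTop atTop := by
    have h1 : Tendsto (fun t : ℝ => t ^ 2) atTop atTop := tendsto_pow_atTop two_ne_zero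
    have h2 : Tendsto (fun t : ℝ => c ^ 2 * t ^ 2) atTop atTop :=
      h1.const_mul_atTop (by positivity)
    simpa [sub_eq_add_neg] using tendsto_atTop_add_const_right atTop (-x ^ 2) h2
  have hs_tend : Tendsto s atTop atTop := sqrt_tendsto_atTop.comp hq_tend
  have hz_tend : Tendsto zf atTop atTop := hs_tend.const_mul_atTop (by positivity)
  have hct_tend : Tendsto (fun t : ℝ => c * t) atTop atTop :=
    tendsto_id.const_mul_atTop hc
  -- the bound function G
  set G : ℝ → ℝ := fun t => 2 * c / (lam * π * s t)
    + (besselI 0 (zf t) - struveL0 (zf t)) / besselI 0 (zf t)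
    + (besselI 0 (zf t) - besselI 1 (zf t)) / besselI 0 (zf t)
    + lam / c * (c * t - s t) with hG_def
  -- G tends to 0
  have hG : Tendsto G atTop (𝓝 0) := by
    have g1 : Tendsto (fun t => 2 * c / (lam * π * s t)) atTop (𝓝 0) :=
      Tendsto.div_atTop tendsto_const_nhds (hs_tend.const_mul_atTop (by positivity))
    have g2 : Tendsto (fun t => (besselI 0 (zf t) - struveL0 (zf t)) / besselI 0 (zf t))
        atTop (𝓝 0) := tendsto_ratio_struve.comp hz_tend
    have g3 : Tendsto (fun t => (besselI 0 (zf t) - besselI 1 (zf t)) / besselI 0 (zf t))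
        atTop (𝓝 0) := tendsto_ratio_bessel.comp hz_tend
    have g4' : Tendsto (fun t : ℝ => c * t - s t) atTop (𝓝 0) := by
      apply squeeze_zero' (g := fun t => x ^ 2 / (c * t))
      · filter_upwards [hq_tend.eventually_ge_atTop 1, eventually_ge_atTop (1:ℝ)] with t hq ht
        have hs0 : 0 ≤ s t := Real.sqrt_nonneg _
        have hsct : s t ≤ c * t := by
          rw [hs_def]
          calc Real.sqrt (c ^ 2 * t ^ 2 - x ^ 2) ≤ Real.sqrt ((c * t) ^ 2) := by
                apply Real.sqrt_le_sqrt; nlinarith [sq_nonneg x]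
            _ = c * t := Real.sqrt_sq (by positivity)
        linarith
      · filter_upwards [hq_tend.eventually_ge_atTop 1, eventually_ge_atTop (1:ℝ)] with t hq ht
        have hct0 : 0 < c * t := by positivity
        have hs0 : 0 ≤ s t := Real.sqrt_nonneg _
        have hσ2 : s t ^ 2 = c ^ 2 * t ^ 2 - x ^ 2 := Real.sq_sqrt (by linarith)
        have hsct : s t ≤ c * t := by
          rw [hs_def]
          calc Real.sqrt (c ^ 2 * t ^ 2 - x ^ 2) ≤ Real.sqrt ((c * t) ^ 2) := by
                apply Real.sqrt_le_sqrt; nlinarith [sq_nonneg x]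
            _ = c * t := Real.sqrt_sq (by positivity)
        rw [le_div_iff₀ hct0]
        nlinarith [mul_le_mul_of_nonneg_left hsct hs0]
      · exact Tendsto.div_atTop tendsto_const_nhds hct_tend
    have g4 : Tendsto (fun t : ℝ => lam / c * (c * t - s t)) atTop (𝓝 0) := by
      simpa using g4'.const_mul (lam / c)
    have := ((g1.add g2).add g3).add g4
    simpa using this
  -- eventual bound |E - 1| ≤ G
  have hbound : ∀ᶠ t in atTop,
      |(Real.exp (-(lam * t)) / (π * s t) +
          lam * Real.exp (-(lam * t)) / (2 * c) * (besselI 0 (zf t) + struveL0 (zf t))) /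
        (lam * Real.exp (-(lam * t)) / (2 * c) *
          (besselI 0 (zf t) + c * t / s t * besselI 1 (zf t))) - 1| ≤ G t := by
    filter_upwards [hq_tend.eventually_ge_atTop 1,
      hq_tend.eventually_ge_atTop ((c / lam) ^ 2), eventually_ge_atTop (1:ℝ)] with t hq1 hq2 ht
    have hq0 : (0:ℝ) ≤ c ^ 2 * t ^ 2 - x ^ 2 := by linarith
    have hs1 : 1 ≤ s t := by
      rw [hs_def, show (1:ℝ) = Real.sqrt 1 by simp]
      exact Real.sqrt_le_sqrt hq1
    have hs0 : 0 < s t := by linarith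
    have hz1 : 1 ≤ zf t := by
      rw [hz_def]
      have : c / lam ≤ s t := by
        rw [hs_def, show c / lam = Real.sqrt ((c / lam) ^ 2) from
          (Real.sqrt_sq (by positivity)).symm]
        exact Real.sqrt_le_sqrt hq2
      rw [show (1:ℝ) = lam / c * (c / lam) by field_simp]
      exact mul_le_mul_of_nonneg_left this (by positivity)
    have hz0 : (0:ℝ) ≤ zf t := by linarith
    have hsct : s t ≤ c * t := by
      rw [hs_def]
      calc Real.sqrt (c ^ 2 * t ^ 2 - x ^ 2) ≤ Real.sqrt ((c * t) ^ 2) := by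
            apply Real.sqrt_le_sqrt; nlinarith [sq_nonneg x]
        _ = c * t := Real.sqrt_sq (by positivity)
    set σ := s t with hσ_def
    set ζ := zf t with hζ_def
    have hzζ : ζ = lam / c * σ := rfl
    clear_value σ ζ
    set I0 := besselI 0 ζ with hI0_def
    set I1 := besselI 1 ζ with hI1_def
    set L0 := struveL0 ζ with hL0_def
    set A := lam * Real.exp (-(lam * t)) / (2 * c) with hA_def
    set T := Real.exp (-(lam * t)) / (π * σ) with hT_def
    set r := c * t / σ with hr_def
    have hA0 : 0 < A := by rw [hA_def]; positivity
    have hT0 : 0 < T := by rw [hT_def]; positivity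
    clear_value I0 I1 L0
    have hI0_1 : 1 ≤ I0 := hI0_def ▸ besselI0_ge_one hz0
    have hI1_0 : 0 ≤ I1 := hI1_def ▸ besselI1_nonneg hz0
    have hr1 : 1 ≤ r := by rw [hr_def, le_div_iff₀ hs0]; linarith
    set D := I0 + r * I1 with hD_def
    have hD_I0 : I0 ≤ D := by rw [hD_def]; nlinarith
    have hD1 : 1 ≤ D := le_trans hI0_1 hD_I0
    have hD0 : 0 < D := by linarith
    clear_value D
    have hAD : A * D ≠ 0 := (mul_pos hA0 hD0).ne'
    have hA0' : A ≠ 0 := hA0.ne'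
    have hD0' : D ≠ 0 := hD0.ne'
    have hE : (T + A * (I0 + L0)) / (A * D) - 1 = T / (A * D) + (L0 - r * I1) / D := by
      rw [hD_def]
      field_simp
      ring
    rw [hE]
    have ht1 : T / (A * D) ≤ 2 * c / (lam * π * σ) := by
      have h1 : T / (A * D) ≤ T / (A * 1) := by
        apply div_le_div_of_nonneg_left hT0.le (by rw [mul_one]; exact hA0)
        nlinarith
      have h2 : T / A = 2 * c / (lam * π * σ) := by
        rw [hT_def, hA_def]
        have he : Real.exp (-(lam * t)) ≠ 0 := (Real.exp_pos _).ne'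
        field_simp
      rw [mul_one] at h1
      linarith [h1, h2.le, h2.ge]
    have ht2 : |(L0 - r * I1) / D| ≤
        (I0 - L0) / I0 + (I0 - I1) / I0 + lam / c * (c * t - σ) := by
      have n1 : 0 ≤ I0 - L0 := by
        rw [hI0_def, hL0_def]; linarith [struve_le_besselI0 hz0]
      have n2 : 0 ≤ I0 - I1 := by
        rw [hI0_def, hI1_def]; linarith [besselI1_le_besselI0 hz0]
      have n3 : 0 ≤ (r - 1) * I1 := mul_nonneg (by linarith) hI1_0
      have habs : |L0 - r * I1| ≤ (I0 - L0) + (I0 - I1) + (r - 1) * I1 := by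
        rw [abs_le]; constructor <;> nlinarith
      have hstep : |(L0 - r * I1) / D| ≤ ((I0 - L0) + (I0 - I1) + (r - 1) * I1) / I0 := by
        rw [abs_div, abs_of_pos hD0]
        calc |L0 - r * I1| / D ≤ ((I0 - L0) + (I0 - I1) + (r - 1) * I1) / D := by
              apply div_le_div_of_nonneg_right habs hD0.le
          _ ≤ ((I0 - L0) + (I0 - I1) + (r - 1) * I1) / I0 := by
              apply div_le_div_of_nonneg_left (by linarith) (by linarith) hD_I0
      refine hstep.trans ?_
      rw [add_div, add_div]
      have hr3 : (r - 1) * I1 / I0 ≤ lam / c * (c * t - σ) := by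
        have hle : (r - 1) * I1 ≤ (r - 1) * (ζ * I0) :=
          mul_le_mul_of_nonneg_left (hI1_def ▸ hI0_def ▸ besselI1_le hz0) (by linarith)
        have heq : (r - 1) * ζ = lam / c * (c * t - σ) := by
          rw [hr_def, hzζ]
          field_simp
        calc (r - 1) * I1 / I0 ≤ (r - 1) * (ζ * I0) / I0 := by
              apply div_le_div_of_nonneg_right hle (by linarith)
          _ = (r - 1) * ζ * I0 / I0 := by ring_nf
          _ = (r - 1) * ζ := by field_simp
          _ = lam / c * (c * t - σ) := heq
      linarith
    calc |T / (A * D) + (L0 - r * I1) / D| ≤ |T / (A * D)| + |(L0 - r * I1) / D| := abs_add_le _ _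
      _ ≤ 2 * c / (lam * π * σ) + ((I0 - L0) / I0 + (I0 - I1) / I0 + lam / c * (c * t - σ)) := by
          rw [abs_of_pos (div_pos hT0 (mul_pos hA0 hD0))]
          linarith
      _ = G t := by
          rw [hG_def]
          simp only [← hσ_def, ← hζ_def, ← hI0_def, ← hI1_def, ← hL0_def]
          ring
  -- conclude
  have hup : Tendsto (fun t => 1 + G t) atTop (𝓝 1) := by
    simpa using (tendsto_const_nhds (x := (1:ℝ)) (f := atTop)).add hG
  have hlo : Tendsto (fun t => 1 - G t) atTop (𝓝 1) := by
    simpa using (tendsto_const_nhds (x := (1:ℝ)) (f := atTop)).sub hG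
  apply tendsto_of_tendsto_of_tendsto_of_le_of_le' hlo hup
  · filter_upwards [hbound] with t hb
    have := abs_le.mp hb
    linarith [this.1]
  · filter_upwards [hbound] with t hb
    have := abs_le.mp hb
    linarith [(abs_le.mp hb).2]
end
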